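/- arXiv:1905.02087 — 5 statements merged into one kernel-verified Lean document; each statement's English description precedes it below -/
import Mathlib

section
/- Let a, β, c, ε, γ be positive real numbers and let W(λ) = (βε/c)(1 + aγ) + β(a + εγ)λ + (cβ − εγ/c)λ² − λ³. Then there exist a real number λ₁ > 0 and complex numbers λ₂, λ₃ with Re λ₂ < 0 and Re λ₃ < 0 such that W(λ) = −(λ − λ₁)(λ − λ₂)(λ − λ₃) for all λ ∈ ℂ. In particular the cubic W has exactly one root with positive real part (which is real) and two roots with negative real parts. -/
/- STATEMENT 0: The characteristic cubic
   W(λ) = (βε/c)(1 + aγ) + β(a + εγ)λ + (cβ − εγ/c)λ² − λ³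
   factors as −(λ − λ₁)(λ − λ₂)(λ − λ₃) with λ₁ > 0 real and
   Re λ₂ < 0, Re λ₃ < 0. -/

private lemma quad_roots (s q : ℝ) (hq : 0 < q) (hs : s < 0) :
    ∃ (l₂ l₃ : ℂ), l₂.re < 0 ∧ l₃.re < 0 ∧ l₂ + l₃ = (s:ℂ) ∧ l₂ * l₃ = (q:ℂ) := by
  by_cases hdisc : s ^ 2 - 4 * q ≥ 0
  · set r : ℝ := Real.sqrt (s ^ 2 - 4 * q) with hrDef
    have hr2 : r ^ 2 = s ^ 2 - 4 * q := Real.sq_sqrt hdisc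
    have hr0 : 0 ≤ r := Real.sqrt_nonneg _
    have hrlt : r < -s := by nlinarith
    refine ⟨(((s + r) / 2 : ℝ) : ℂ), (((s - r) / 2 : ℝ) : ℂ), ?_, ?_, ?_, ?_⟩
    · simp only [Complex.ofReal_re]; linarith
    · simp only [Complex.ofReal_re]; linarith
    · push_cast; ring
    · have h : ((s + r) / 2) * ((s - r) / 2) = q := by nlinarith
      push_cast [← h]; ring
  · push_neg at hdisc
    set t : ℝ := Real.sqrt (4 * q - s ^ 2) / 2 with htDef
    have ht2 : (Real.sqrt (4 * q - s ^ 2)) ^ 2 = 4 * q - s ^ 2 :=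
      Real.sq_sqrt (by linarith)
    refine ⟨(s/2 : ℝ) + t * Complex.I, (s/2 : ℝ) - t * Complex.I, ?_, ?_, ?_, ?_⟩
    · simp [Complex.add_re, Complex.ofReal_re]; linarith
    · simp [Complex.sub_re, Complex.ofReal_re]; linarith
    · push_cast; ring
    · have hqq : (s/2) ^ 2 + t ^ 2 = q := by
        rw [htDef]; nlinarith
      have h : ((s/2 : ℝ) + t * Complex.I) * ((s/2 : ℝ) - t * Complex.I)
          = (((s/2)^2 + t^2 : ℝ) : ℂ) := by
        push_cast; ring_nf; simp [Complex.I_sq]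
      rw [h, hqq]

theorem characteristic_cubic_root_structure
    (a β c ε γ : ℝ) (ha : 0 < a) (hβ : 0 < β) (hc : 0 < c)
    (hε : 0 < ε) (hγ : 0 < γ) :
    ∃ (l₁ : ℝ) (l₂ l₃ : ℂ), 0 < l₁ ∧ l₂.re < 0 ∧ l₃.re < 0 ∧
      ∀ lam : ℂ,
        ((β * ε / c * (1 + a * γ) : ℝ) : ℂ)
            + ((β * (a + ε * γ) : ℝ) : ℂ) * lam
            + ((c * β - ε * γ / c : ℝ) : ℂ) * lam ^ 2 - lam ^ 3
          = -((lam - (l₁ : ℂ)) * (lam - l₂) * (lam - l₃)) := by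
  set d : ℝ := β * ε / c * (1 + a * γ) with hdDef
  set b : ℝ := β * (a + ε * γ) with hbDef
  set e : ℝ := c * β - ε * γ / c with heDef
  have hd : 0 < d := by
    have : 0 < 1 + a * γ := by positivity
    positivity
  have hb : 0 < b := by positivity
  clear_value d b e
  clear hdDef hbDef heDef ha hβ hc hε hγ
  -- IVT to find a positive real root of p(x) = x^3 - e x^2 - b x - d
  set f : ℝ → ℝ := fun x => x ^ 3 - e * x ^ 2 - b * x - d with hfDef
  have hcont : ContinuousOn f (Set.Icc 0 (|e| + b + d + 1)) := by
    fun_prop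
  have hM1 : (1:ℝ) ≤ |e| + b + d + 1 := by
    have := abs_nonneg e; linarith
  have hf0 : f 0 < 0 := by simp [hfDef]; linarith
  have hfM : 0 < f (|e| + b + d + 1) := by
    have h1 : e ≤ |e| := le_abs_self e
    have h2 : (0:ℝ) ≤ |e| := abs_nonneg e
    simp only [hfDef]
    nlinarith [sq_nonneg (|e| + b + d + 1), hM1]
  have h0mem : (0:ℝ) ∈ Set.Ioo (f 0) (f (|e| + b + d + 1)) := ⟨hf0, hfM⟩
  have hzero := intermediate_value_Ioo (by linarith : (0:ℝ) ≤ |e| + b + d + 1) hcont h0mem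
  obtain ⟨l₁, hl₁mem, hl₁root⟩ := hzero
  have hl₁ : 0 < l₁ := hl₁mem.1
  have hroot : l₁ ^ 3 - e * l₁ ^ 2 - b * l₁ - d = 0 := hl₁root
  clear hl₁root hl₁mem h0mem hfM hf0 hM1 hcont hfDef
  set q : ℝ := d / l₁ with hqDef
  set s : ℝ := -(b + q) / l₁ with hsDef
  have hq : 0 < q := by positivity
  have hs : s < 0 := by
    rw [hsDef]
    apply div_neg_of_neg_of_pos _ hl₁
    linarith
  have hl₁ne : l₁ ≠ 0 := ne_of_gt hl₁
  have hV3 : l₁ * q = d := by rw [hqDef]; field_simp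
  have hV2 : l₁ * s + q = -b := by
    rw [hsDef]; field_simp; ring
  have hV1 : l₁ + s = e := by
    rw [hsDef, hqDef]
    field_simp
    nlinarith [hroot]
  obtain ⟨l₂, l₃, h2re, h3re, hsum, hprod⟩ := quad_roots s q hq hs
  refine ⟨l₁, l₂, l₃, hl₁, h2re, h3re, ?_⟩
  intro lam
  have c1 : ((l₁:ℂ) + s) = (e:ℂ) := by exact_mod_cast congrArg (Complex.ofReal) hV1
  have c2 : ((l₁:ℂ) * s + q) = (-b:ℂ) := by exact_mod_cast congrArg (Complex.ofReal) hV2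
  have c3 : ((l₁:ℂ) * q) = (d:ℂ) := by exact_mod_cast congrArg (Complex.ofReal) hV3
  linear_combination (-(lam^2)) * c1 + lam * c2 - c3 + (lam * (l₁:ℂ) - lam^2) * hsum + (lam - (l₁:ℂ)) * hprod
end

section
/- Let 0 < a < 1/2, β > 0, and f(v) = v(v − a)(1 − v). Then the planar Hamiltonian system v' = u, u' = −β f(v) possesses a homoclinic solution to the origin: there exists a nonconstant differentiable solution (v, u): ℝ → ℝ², with v(ξ) > 0 for all ξ, satisfying v'(ξ) = u(ξ), u'(ξ) = −β f(v(ξ)), and (v(ξ), u(ξ)) → (0, 0) as ξ → +∞ and as ξ → −∞. -/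
open Filter

/-- Key algebraic identity for the homoclinic solution, in multiplied-out form. -/
lemma homoclinic_num_key (a β A B c s : ℝ) (ha : a ≠ 0)
    (h3A : 3 * a * A = 1 + a)
    (hB18 : 18 * a ^ 2 * B ^ 2 = 2 * a ^ 2 - 5 * a + 2)
    (hs : s ^ 2 = c ^ 2 - 1) :
    -(a * β * B * c) * (A + B * c) + 2 * a * β * B ^ 2 * s ^ 2
      = -β * ((1 - a * (A + B * c)) * ((A + B * c) - 1)) := by
  have h9 : (9 : ℝ) * a * (-(a * β * B * c) * (A + B * c) + 2 * a * β * B ^ 2 * s ^ 2)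
      = 9 * a * (-β * ((1 - a * (A + B * c)) * ((A + B * c) - 1))) := by
    linear_combination (-β * (9 * a * B * c) + β * (1 + a) - β * (3 * a * A - 1 - a)) * h3A
      + (-β) * hB18 + (18 * a ^ 2 * B ^ 2 * β) * hs
  exact mul_left_cancel₀ (by simpa using ha) h9

/- STATEMENT 7: For 0 < a < 1/2 and β > 0 the planar Hamiltonian system
   v' = u, u' = −β f(v) possesses a nonconstant homoclinic solution to the
   origin with v > 0 everywhere. -/
theorem existence_of_homoclinic_loop
    (a β : ℝ) (ha0 : 0 < a) (ha1 : a < 1 / 2) (hβ : 0 < β) :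
    ∃ v u : ℝ → ℝ,
      (∃ ξ₁ ξ₂ : ℝ, v ξ₁ ≠ v ξ₂ ∨ u ξ₁ ≠ u ξ₂) ∧
      (∀ ξ : ℝ, 0 < v ξ) ∧
      (∀ ξ : ℝ, HasDerivAt v (u ξ) ξ) ∧
      (∀ ξ : ℝ, HasDerivAt u (-β * (v ξ * (v ξ - a) * (1 - v ξ))) ξ) ∧
      Tendsto v atTop (nhds 0) ∧ Tendsto u atTop (nhds 0) ∧
      Tendsto v atBot (nhds 0) ∧ Tendsto u atBot (nhds 0) := by
  have ha : a ≠ 0 := ha0.ne'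
  set k : ℝ := Real.sqrt (a * β) with hkdef
  have hk2 : k ^ 2 = a * β := Real.sq_sqrt (by positivity)
  have hkpos : 0 < k := Real.sqrt_pos.mpr (by positivity)
  set A : ℝ := (1 + a) / (3 * a) with hAdef
  have hApos : 0 < A := by positivity
  have h3A : 3 * a * A = 1 + a := by rw [hAdef]; field_simp
  have hCpos : 0 < 2 * a ^ 2 - 5 * a + 2 := by nlinarith
  set B : ℝ := Real.sqrt ((2 * a ^ 2 - 5 * a + 2) / (18 * a ^ 2)) with hBdef
  have hB2 : B ^ 2 = (2 * a ^ 2 - 5 * a + 2) / (18 * a ^ 2) := Real.sq_sqrt (by positivity)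
  have hBpos : 0 < B := Real.sqrt_pos.mpr (by positivity)
  have hB18 : 18 * a ^ 2 * B ^ 2 = 2 * a ^ 2 - 5 * a + 2 := by
    rw [hB2]; field_simp
  set w : ℝ → ℝ := fun ξ => A + B * Real.cosh (k * ξ) with hwdef
  have hwpos : ∀ ξ, 0 < w ξ := fun ξ =>
    add_pos hApos (mul_pos hBpos (Real.cosh_pos _))
  have hw0 : ∀ ξ, w ξ ≠ 0 := fun ξ => (hwpos ξ).ne'
  have hwge : ∀ ξ, B * Real.cosh (k * ξ) ≤ w ξ := fun ξ => by
    simp only [hwdef]; linarith [hApos]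
  have hw' : ∀ ξ, HasDerivAt w (B * k * Real.sinh (k * ξ)) ξ := by
    intro ξ
    have h1 : HasDerivAt (fun t : ℝ => k * t) k ξ := by
      simpa using (hasDerivAt_id ξ).const_mul k
    have h2 : HasDerivAt (fun t : ℝ => Real.cosh (k * t)) (Real.sinh (k * ξ) * k) ξ :=
      (Real.hasDerivAt_cosh (k * ξ)).comp ξ h1
    have h3 := (h2.const_mul B).const_add A
    exact h3.congr_deriv (by ring)
  have hcosh_top : Filter.Tendsto Real.cosh atTop atTop := by
    apply tendsto_atTop_mono (fun x => ?_)
      (Real.tendsto_exp_atTop.atTop_div_const two_pos)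
    rw [Real.cosh_eq]
    have := Real.exp_pos (-x)
    linarith
  have hBc_top : Tendsto (fun ξ : ℝ => B * Real.cosh (k * ξ)) atTop atTop := by
    have h1 : Tendsto (fun ξ : ℝ => k * ξ) atTop atTop :=
      tendsto_id.const_mul_atTop hkpos
    exact (hcosh_top.comp h1).const_mul_atTop hBpos
  have hBc_bot : Tendsto (fun ξ : ℝ => B * Real.cosh (k * ξ)) atBot atTop := by
    have h1 : Tendsto (fun ξ : ℝ => k * ξ) atBot atBot :=
      tendsto_id.const_mul_atBot hkpos
    have hcosh_bot : Tendsto Real.cosh atBot atTop := by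
      have he : Real.cosh = fun x => Real.cosh (-x) :=
        funext fun x => (Real.cosh_neg x).symm
      rw [he]
      exact hcosh_top.comp tendsto_neg_atBot_atTop
    exact (hcosh_bot.comp h1).const_mul_atTop hBpos
  have hw_top : Tendsto w atTop atTop :=
    tendsto_atTop_add_const_left _ A hBc_top
  have hw_bot : Tendsto w atBot atTop :=
    tendsto_atTop_add_const_left _ A hBc_bot
  have hu_bound : ∀ ξ : ℝ, ‖-(B * k * Real.sinh (k * ξ)) / (w ξ) ^ 2‖
      ≤ k * (B * Real.cosh (k * ξ))⁻¹ := by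
    intro ξ
    have hcpos : 0 < Real.cosh (k * ξ) := Real.cosh_pos _
    have hsc : |Real.sinh (k * ξ)| ≤ Real.cosh (k * ξ) := by
      have h := Real.cosh_sq_sub_sinh_sq (k * ξ)
      rw [abs_le]; constructor <;> nlinarith
    have hWpos := hwpos ξ
    have hBcW : B * Real.cosh (k * ξ) ≤ w ξ := hwge ξ
    rw [Real.norm_eq_abs, abs_div, abs_neg, abs_of_pos (pow_pos hWpos 2), abs_mul,
      abs_of_pos (mul_pos hBpos hkpos), ← div_eq_mul_inv,
      div_le_div_iff₀ (by positivity) (by positivity)]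
    nlinarith [mul_le_mul hBcW hBcW (by positivity) hWpos.le,
      mul_le_mul_of_nonneg_left hsc
        (by positivity : (0:ℝ) ≤ B * k * (B * Real.cosh (k * ξ)))]
  have hu_zero : ∀ l : Filter ℝ,
      Tendsto (fun ξ : ℝ => B * Real.cosh (k * ξ)) l atTop →
      Tendsto (fun ξ : ℝ => -(B * k * Real.sinh (k * ξ)) / (w ξ) ^ 2) l (nhds 0) := by
    intro l hl
    apply squeeze_zero_norm hu_bound
    have := (hl.inv_tendsto_atTop).const_mul k
    simpa using this
  refine ⟨fun ξ => (w ξ)⁻¹, fun ξ => -(B * k * Real.sinh (k * ξ)) / (w ξ) ^ 2,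
    ?_, ?_, ?_, ?_, ?_, ?_, ?_, ?_⟩
  · -- nonconstant
    refine ⟨0, 1, Or.inr ?_⟩
    show -(B * k * Real.sinh (k * 0)) / (w 0) ^ 2 ≠ -(B * k * Real.sinh (k * 1)) / (w 1) ^ 2
    have h0 : -(B * k * Real.sinh (k * 0)) / (w 0) ^ 2 = 0 := by simp
    have h1 : -(B * k * Real.sinh (k * 1)) / (w 1) ^ 2 < 0 := by
      apply div_neg_of_neg_of_pos
      · have hs1 : 0 < Real.sinh (k * 1) := by
          rw [Real.sinh_pos_iff]; simpa using hkpos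
        nlinarith [mul_pos (mul_pos hBpos hkpos) hs1]
      · positivity
    rw [h0]
    exact (ne_of_lt h1).symm
  · -- positivity of v
    exact fun ξ => inv_pos.mpr (hwpos ξ)
  · -- v' = u
    intro ξ
    exact (hw' ξ).inv (hw0 ξ)
  · -- u' = -β f(v)
    intro ξ
    set c : ℝ := Real.cosh (k * ξ) with hcdef
    set s : ℝ := Real.sinh (k * ξ) with hsdef
    have hcs : s ^ 2 = c ^ 2 - 1 := by
      rw [hcdef, hsdef]; linarith [Real.cosh_sq_sub_sinh_sq (k * ξ)]
    have hc1 : 1 ≤ c := Real.one_le_cosh (k * ξ)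
    have hN : HasDerivAt (fun t : ℝ => -(B * k * Real.sinh (k * t)))
        (-(B * k * (Real.cosh (k * ξ) * k))) ξ := by
      have h1 : HasDerivAt (fun t : ℝ => k * t) k ξ := by
        simpa using (hasDerivAt_id ξ).const_mul k
      have h2 : HasDerivAt (fun t : ℝ => Real.sinh (k * t)) (Real.cosh (k * ξ) * k) ξ :=
        (Real.hasDerivAt_sinh (k * ξ)).comp ξ h1
      exact (h2.const_mul (B * k)).neg
    have hD : HasDerivAt (fun t : ℝ => (w t) ^ 2)
        (2 * (w ξ) ^ 1 * (B * k * Real.sinh (k * ξ))) ξ := (hw' ξ).pow 2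
    have hdiv := hN.div hD (pow_ne_zero 2 (hw0 ξ))
    have hWpos := hwpos ξ
    have hW : w ξ = A + B * c := by rw [hwdef]
    have hnum : -(a * β * B * c) * (A + B * c) + 2 * a * β * B ^ 2 * s ^ 2
        = -β * ((1 - a * (A + B * c)) * ((A + B * c) - 1)) :=
      homoclinic_num_key a β A B c s ha h3A hB18 hcs
    have hval : (-(B * k * (c * k)) * (w ξ) ^ 2 -
          -(B * k * s) * (2 * (w ξ) ^ 1 * (B * k * s))) / ((w ξ) ^ 2) ^ 2
        = -β * ((w ξ)⁻¹ * ((w ξ)⁻¹ - a) * (1 - (w ξ)⁻¹)) := by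
      have e1 : (-(B * k * (c * k)) * (w ξ) ^ 2 -
            -(B * k * s) * (2 * (w ξ) ^ 1 * (B * k * s))) / ((w ξ) ^ 2) ^ 2
          = (-(a * β * B * c) * (w ξ) + 2 * a * β * B ^ 2 * s ^ 2) / (w ξ) ^ 3 := by
        rw [div_eq_div_iff (by positivity) (by positivity)]
        linear_combination (-(B * c * (w ξ) ^ 5) + 2 * B ^ 2 * s ^ 2 * (w ξ) ^ 4) * hk2
      rw [e1]
      rw [div_eq_iff (by positivity)]
      have e2 : -(a * β * B * c) * (w ξ) + 2 * a * β * B ^ 2 * s ^ 2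
          = -β * ((1 - a * (w ξ)) * ((w ξ) - 1)) := by rw [hW]; exact hnum
      rw [e2]
      field_simp
    rw [← hval]
    exact hdiv
  · -- v → 0 at +∞
    exact hw_top.inv_tendsto_atTop
  · -- u → 0 at +∞
    exact hu_zero atTop hBc_top
  · -- v → 0 at -∞
    exact hw_bot.inv_tendsto_atTop
  · -- u → 0 at -∞
    exact hu_zero atBot hBc_bot
end

section
/- Let 0 < a < 1/2, τ > 0, and f(v) = v(v − a)(1 − v). There exists c₀ > 0 such that for every c with 0 < c < c₀ and τc² < 1, setting β = 1/(1 − τc²), the following holds: every maximal solution (v, u) of the planar system v' = u, u' = β(cu − f(v)) satisfying (v(ξ), u(ξ)) → (0, 0) as ξ → −∞ and u(ξ) > 0 for all sufficiently negative ξ has a first ξ* at which u(ξ*) = 0, and the corresponding intersection point with the horizontal axis satisfies a < v(ξ*) < 1 (and u > 0 on (−∞, ξ*)). -/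
open Filter

/-- The planar traveling-wave system (ε = 0, w = 0):
v' = u, u' = β(cu − f(v)), f(v) = v(v−a)(1−v), on the interval (−∞, ω). -/
def IsPlanarSol (a β c : ℝ) (v u : ℝ → ℝ) (ω : EReal) : Prop :=
  ∀ ξ : ℝ, (ξ : EReal) < ω →
    HasDerivAt v (u ξ) ξ ∧
    HasDerivAt u (β * (c * u ξ - v ξ * (v ξ - a) * (1 - v ξ))) ξ

/-- Maximality: any solution extending (v, u) beyond ω does not exist. -/
def IsPlanarMaximal (a β c : ℝ) (v u : ℝ → ℝ) (ω : EReal) : Prop :=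
  ∀ (v' u' : ℝ → ℝ) (ω' : EReal), IsPlanarSol a β c v' u' ω' →
    (∀ ξ : ℝ, (ξ : EReal) < ω → v' ξ = v ξ ∧ u' ξ = u ξ) → ω' ≤ ω

set_option linter.dupNamespace false
set_option linter.unusedVariables false

namespace Sep9

open Set
open scoped NNReal

lemma monoOn_Icc {g g' : ℝ → ℝ} {A B : ℝ}
    (hd : ∀ x ∈ Icc A B, HasDerivAt g (g' x) x)
    (h0 : ∀ x ∈ Ioo A B, 0 ≤ g' x) : MonotoneOn g (Icc A B) := by
  apply monotoneOn_of_deriv_nonneg (convex_Icc A B)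
  · exact fun x hx => (hd x hx).continuousAt.continuousWithinAt
  · intro x hx
    rw [interior_Icc] at hx
    exact (hd x (Ioo_subset_Icc_self hx)).differentiableAt.differentiableWithinAt
  · intro x hx
    rw [interior_Icc] at hx
    rw [(hd x (Ioo_subset_Icc_self hx)).deriv]
    exact h0 x hx

lemma antiOn_Icc {g g' : ℝ → ℝ} {A B : ℝ}
    (hd : ∀ x ∈ Icc A B, HasDerivAt g (g' x) x)
    (h0 : ∀ x ∈ Ioo A B, g' x ≤ 0) : AntitoneOn g (Icc A B) := by
  apply antitoneOn_of_deriv_nonpos (convex_Icc A B)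
  · exact fun x hx => (hd x hx).continuousAt.continuousWithinAt
  · intro x hx
    rw [interior_Icc] at hx
    exact (hd x (Ioo_subset_Icc_self hx)).differentiableAt.differentiableWithinAt
  · intro x hx
    rw [interior_Icc] at hx
    rw [(hd x (Ioo_subset_Icc_self hx)).deriv]
    exact h0 x hx

lemma strictMonoOn_Icc {g g' : ℝ → ℝ} {A B : ℝ}
    (hd : ∀ x ∈ Icc A B, HasDerivAt g (g' x) x)
    (h0 : ∀ x ∈ Ioo A B, 0 < g' x) : StrictMonoOn g (Icc A B) := by
  apply strictMonoOn_of_deriv_pos (convex_Icc A B)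
  · exact fun x hx => (hd x hx).continuousAt.continuousWithinAt
  · intro x hx
    rw [interior_Icc] at hx
    rw [(hd x (Ioo_subset_Icc_self hx)).deriv]
    exact h0 x hx

/-- antiderivative of f(x)=x(x-a)(1-x) -/
noncomputable def Fcub (a x : ℝ) : ℝ := -x^4/4 + (1+a)*x^3/3 - a*x^2/2

lemma hasDerivAt_Fcub (a x : ℝ) : HasDerivAt (Fcub a) (x*(x-a)*(1-x)) x := by
  have h4 : HasDerivAt (fun y : ℝ => y^4) (4*x^3) x := by simpa using hasDerivAt_pow 4 x
  have h3 : HasDerivAt (fun y : ℝ => y^3) (3*x^2) x := by simpa using hasDerivAt_pow 3 x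
  have h2 : HasDerivAt (fun y : ℝ => y^2) (2*x) x := by simpa using hasDerivAt_pow 2 x
  have := ((h4.neg.div_const 4).add ((h3.const_mul (1+a)).div_const 3)).sub
    ((h2.const_mul a).div_const 2)
  have e : x*(x-a)*(1-x) = -(4*x^3)/4 + (1+a)*(3*x^2)/3 - a*(2*x)/2 := by ring
  rw [e]; exact this

lemma Fcub_nonpos {a x : ℝ} (ha0 : 0 < a) (ha1 : a < 1/2) (hx0 : 0 ≤ x) (hxa : x ≤ a) :
    Fcub a x ≤ 0 := by
  have : -3*x^2 + 4*(1+a)*x - 6*a ≤ 0 := by nlinarith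
  have h : Fcub a x = x^2 * (-3*x^2 + 4*(1+a)*x - 6*a) / 12 := by simp [Fcub]; ring
  rw [h]
  have := sq_nonneg x
  nlinarith

lemma Fcub_one (a : ℝ) : Fcub a 1 = (1-2*a)/12 := by simp [Fcub]; ring

lemma neg_Fcub_le_half {a x : ℝ} (ha0 : 0 < a) (ha1 : a < 1/2) (hx0 : 0 ≤ x) (hx1 : x ≤ 1) :
    -Fcub a x ≤ 1/2 := by
  simp only [Fcub]
  nlinarith [sq_nonneg x, pow_le_one₀ hx0 hx1 (n := 4), pow_le_one₀ hx0 hx1 (n := 2),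
    pow_nonneg hx0 3]

lemma gt_a_of_Fcub_pos {a x : ℝ} (ha0 : 0 < a) (ha1 : a < 1/2) (hx0 : 0 ≤ x)
    (hF : 0 < Fcub a x) : a < x := by
  by_contra h
  push_neg at h
  exact absurd (Fcub_nonpos ha0 ha1 hx0 h) (by linarith)

structure Setup (a c β : ℝ) (v u : ℝ → ℝ) (ω : EReal) : Prop where
  ha0 : 0 < a
  ha1 : a < 1/2
  hc0 : 0 < c
  hc1 : c ≤ (1-2*a)/100
  hβ1 : 1 ≤ β
  hβ2 : β ≤ 2
  hω : 0 < ω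
  sol : IsPlanarSol a β c v u ω
  hv0 : Tendsto v atBot (nhds 0)
  hu0 : Tendsto u atBot (nhds 0)

noncomputable def En (a β : ℝ) (v u : ℝ → ℝ) (ξ : ℝ) : ℝ := (u ξ)^2/2 + β * Fcub a (v ξ)

variable {a c β : ℝ} {v u : ℝ → ℝ} {ω : EReal}

lemma Setup.mem_dom (S : Setup a c β v u ω) {b ξ : ℝ} (hb : (b : EReal) < ω) (h : ξ ≤ b) :
    (ξ : EReal) < ω := lt_of_le_of_lt (EReal.coe_le_coe_iff.mpr h) hb

lemma Setup.hasDerivAt_En (S : Setup a c β v u ω) {ξ : ℝ} (hξ : (ξ : EReal) < ω) :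
    HasDerivAt (En a β v u) (β*c*(u ξ)^2) ξ := by
  obtain ⟨hv, hu⟩ := S.sol ξ hξ
  have h1 : HasDerivAt (fun t => (u t)^2/2)
      ((2 * u ξ ^ 1 * (β * (c * u ξ - v ξ * (v ξ - a) * (1 - v ξ))))/2) ξ :=
    (hu.pow 2).div_const 2
  have h2 : HasDerivAt (fun t => β * Fcub a (v t))
      (β * (v ξ*(v ξ-a)*(1-v ξ) * u ξ)) ξ := by
    exact ((hasDerivAt_Fcub a (v ξ)).comp ξ hv).const_mul β
  have := h1.add h2
  have e : β*c*(u ξ)^2 = (2 * u ξ ^ 1 * (β * (c * u ξ - v ξ * (v ξ - a) * (1 - v ξ))))/2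
      + (β * (v ξ*(v ξ-a)*(1-v ξ) * u ξ)) := by ring
  rw [e]; exact this

lemma Setup.tendsto_En (S : Setup a c β v u ω) :
    Tendsto (En a β v u) atBot (nhds 0) := by
  have hF : Tendsto (fun ξ => Fcub a (v ξ)) atBot (nhds (Fcub a 0)) := by
    have : Continuous (Fcub a) := by
      unfold Fcub; continuity
    exact (this.tendsto 0).comp S.hv0
  have hF0 : Fcub a 0 = 0 := by simp [Fcub]
  rw [hF0] at hF
  have := ((S.hu0.pow 2).div_const 2).add (hF.const_mul β)
  show Tendsto (fun ξ => (u ξ)^2/2 + β * Fcub a (v ξ)) atBot (nhds 0)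
  simpa using this

/-- E is nonnegative on the domain. -/
lemma Setup.En_nonneg (S : Setup a c β v u ω) {ξ : ℝ} (hξ : (ξ : EReal) < ω) :
    0 ≤ En a β v u ξ := by
  have hc := S.hc0.le
  have hβ : (0:ℝ) ≤ β := le_trans zero_le_one S.hβ1
  have hmono : ∀ A ≤ ξ, En a β v u A ≤ En a β v u ξ := by
    intro A hA
    have := monoOn_Icc (g := En a β v u) (g' := fun t => β*c*(u t)^2) (A := A) (B := ξ)
      (fun x hx => S.hasDerivAt_En (S.mem_dom hξ hx.2))
      (fun x hx => by positivity)
    exact this (left_mem_Icc.mpr hA) (right_mem_Icc.mpr hA) hA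
  exact le_of_tendsto S.tendsto_En (eventually_atBot.mpr ⟨ξ, hmono⟩)

/-- v is positive where u was positive before. -/
lemma Setup.v_pos (S : Setup a c β v u ω) {b : ℝ} (hb : (b : EReal) < ω)
    (hu : ∀ ξ < b, 0 < u ξ) : 0 < v b := by
  have hmono : ∀ A ∈ Icc (b-1) b, ∀ B ∈ Icc (b-1) b, A < B → v A < v B := by
    intro A hA B hB hAB
    exact strictMonoOn_Icc (g' := u)
      (fun x hx => (S.sol x (S.mem_dom hb hx.2)).1)
      (fun x hx => hu x hx.2) hA hB hAB
  have h1 : v (b-1) < v b := hmono (b-1) (by simp) b (by simp) (by linarith)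
  have h2 : 0 ≤ v (b-1) := by
    have hm : ∀ A ≤ b-1, v A ≤ v (b-1) := by
      intro A hA
      have := monoOn_Icc (g := v) (g' := u)
        (fun x hx => (S.sol x (S.mem_dom hb (le_trans hx.2 (by linarith)))).1)
        (fun x hx => le_of_lt (hu x (by linarith [hx.2])))
        (left_mem_Icc.mpr hA) (right_mem_Icc.mpr hA) hA
      exact this
    exact le_of_tendsto S.hv0 (eventually_atBot.mpr ⟨b-1, hm⟩)
  linarith

/-- E is strictly positive where u was positive before. -/
lemma Setup.En_pos (S : Setup a c β v u ω) {b : ℝ} (hb : (b : EReal) < ω)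
    (hu : ∀ ξ < b, 0 < u ξ) : 0 < En a β v u b := by
  have h1 : En a β v u (b-1) < En a β v u b := by
    refine strictMonoOn_Icc (g' := fun t => β*c*(u t)^2)
      (fun x hx => S.hasDerivAt_En (S.mem_dom hb hx.2))
      (fun x hx => ?_) (left_mem_Icc.mpr (by linarith)) (right_mem_Icc.mpr (by linarith))
      (by linarith)
    have := hu x hx.2
    have := S.hc0
    have := S.hβ1
    positivity
  have h2 : 0 ≤ En a β v u (b-1) := S.En_nonneg (S.mem_dom hb (by linarith))
  linarith



/-- Key energy estimate: while 0 ≤ u and 0 ≤ v ≤ 1, the energy stays below 3c+2c². -/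
lemma Setup.En_le_of_v_le_one (S : Setup a c β v u ω) {b : ℝ} (hb : (b : EReal) < ω)
    (hu : ∀ ξ < b, 0 < u ξ) (hub : 0 ≤ u b) (hv1 : ∀ ξ ≤ b, v ξ ≤ 1) :
    En a β v u b ≤ 3*c + 2*c^2 := by
  have hβ0 : (0:ℝ) < β := lt_of_lt_of_le zero_lt_one S.hβ1
  have hc0 := S.hc0
  set E := En a β v u with hE
  have hXpos : ∀ ξ ≤ b, 0 < 2 * E ξ + β := by
    intro ξ hξ
    have := S.En_nonneg (S.mem_dom hb hξ)
    rw [← hE] at this; linarith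
  have hune : ∀ ξ ≤ b, 0 ≤ u ξ := by
    intro ξ hξ
    rcases lt_or_eq_of_le hξ with h | h
    · exact (hu ξ h).le
    · rw [h]; exact hub
  have hvpos : ∀ ξ ≤ b, 0 < v ξ := by
    intro ξ hξ
    exact S.v_pos (S.mem_dom hb hξ) (fun η hη => hu η (lt_of_lt_of_le hη hξ))
  have husq : ∀ ξ ≤ b, (u ξ)^2 ≤ 2 * E ξ + β := by
    intro ξ hξ
    have h1 : -Fcub a (v ξ) ≤ 1/2 :=
      neg_Fcub_le_half S.ha0 S.ha1 (hvpos ξ hξ).le (hv1 ξ hξ)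
    have h2 : E ξ = (u ξ)^2/2 + β * Fcub a (v ξ) := rfl
    nlinarith
  set HH := fun t => Real.sqrt (2 * E t + β) with hHH
  have hHpos : ∀ ξ ≤ b, 0 < HH ξ := fun ξ hξ => Real.sqrt_pos.mpr (hXpos ξ hξ)
  have huH : ∀ ξ ≤ b, u ξ ≤ HH ξ := by
    intro ξ hξ
    exact (Real.le_sqrt (hune ξ hξ) (hXpos ξ hξ).le).mpr (husq ξ hξ)
  have hHsq : ∀ ξ ≤ b, (HH ξ)^2 = 2 * E ξ + β := fun ξ hξ =>
    Real.sq_sqrt (hXpos ξ hξ).le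
  have hderiv : ∀ ξ ≤ b, HasDerivAt (fun t => HH t - β*c*v t)
      (2*(β*c*(u ξ)^2) / (2 * HH ξ) - β*c*(u ξ)) ξ := by
    intro ξ hξ
    have h1 : HasDerivAt (fun t => 2 * E t + β) (2*(β*c*(u ξ)^2)) ξ :=
      ((S.hasDerivAt_En (S.mem_dom hb hξ)).const_mul 2).add_const β
    have h2 := h1.sqrt (ne_of_gt (hXpos ξ hξ))
    have h3 : HasDerivAt (fun t => β*c*v t) (β*c*(u ξ)) ξ :=
      ((S.sol ξ (S.mem_dom hb hξ)).1).const_mul (β*c)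
    exact h2.sub h3
  have hmono : ∀ A ≤ b, HH b - β*c*v b ≤ HH A - β*c*v A := by
    intro A hA
    refine antiOn_Icc (g' := fun t => 2*(β*c*(u t)^2) / (2 * HH t) - β*c*(u t))
      (fun x hx => hderiv x hx.2) (fun x hx => ?_) (left_mem_Icc.mpr hA)
      (right_mem_Icc.mpr hA) hA
    have hxb : x ≤ b := hx.2.le
    have h1 := hHpos x hxb
    have h2 := huH x hxb
    have h3 := hune x hxb
    rw [sub_nonpos, div_le_iff₀ (by linarith)]
    nlinarith [mul_le_mul_of_nonneg_left h2 (mul_nonneg (mul_nonneg hβ0.le hc0.le) h3)]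
  have hlim : Tendsto (fun t => HH t - β*c*v t) atBot (nhds (Real.sqrt β)) := by
    have h1 : Tendsto (fun t => 2 * E t + β) atBot (nhds β) := by
      have := (S.tendsto_En.const_mul 2).add_const β
      rw [← hE] at this
      simpa using this
    have h2 : Tendsto HH atBot (nhds (Real.sqrt β)) :=
      (Real.continuous_sqrt.tendsto β).comp h1
    have h3 : Tendsto (fun t => β*c*v t) atBot (nhds 0) := by
      simpa using S.hv0.const_mul (β*c)
    simpa using h2.sub h3
  have hGb : HH b - β*c*v b ≤ Real.sqrt β :=
    ge_of_tendsto hlim (eventually_atBot.mpr ⟨b, hmono⟩)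
  -- conclude
  have hsβ : Real.sqrt β ≤ 3/2 := by
    rw [show (3/2:ℝ) = Real.sqrt ((3/2)^2) from (Real.sqrt_sq (by norm_num)).symm]
    exact Real.sqrt_le_sqrt (by nlinarith [S.hβ2])
  have hsβ0 : 0 ≤ Real.sqrt β := Real.sqrt_nonneg β
  have hsβsq : (Real.sqrt β)^2 = β := Real.sq_sqrt hβ0.le
  have hHb : HH b ≤ Real.sqrt β + β*c := by
    have := hv1 b le_rfl
    nlinarith [hGb, hvpos b le_rfl,
      mul_le_mul_of_nonneg_left this (mul_nonneg hβ0.le hc0.le)]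
  have h2 : 2 * E b + β ≤ (Real.sqrt β + β*c)^2 := by
    rw [← hHsq b le_rfl]
    have := (hHpos b le_rfl).le
    nlinarith
  have hc1 : c ≤ 1 := by nlinarith [S.hc1, S.ha0]
  have e1 : (Real.sqrt β + β*c)^2 = β + 2*(Real.sqrt β)*(β*c) + (β*c)^2 := by
    rw [add_sq, hsβsq]
  have e2 : β*c ≤ 2*c := mul_le_mul_of_nonneg_right S.hβ2 hc0.le
  have e3 : (β*c)^2 ≤ (2*c)^2 := pow_le_pow_left₀ (mul_nonneg hβ0.le hc0.le) e2 2
  have e4 : (Real.sqrt β)*(β*c) ≤ (3/2)*(2*c) :=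
    mul_le_mul hsβ e2 (mul_nonneg hβ0.le hc0.le) (by norm_num)
  nlinarith [S.hβ2, S.hβ1]

/-- v never reaches 1 while u remains nonnegative. -/
lemma Setup.v_lt_one (S : Setup a c β v u ω) {b : ℝ} (hb : (b : EReal) < ω)
    (hu : ∀ ξ < b, 0 < u ξ) (hub : 0 ≤ u b) : ∀ ξ ≤ b, v ξ < 1 := by
  have hune : ∀ ξ ≤ b, 0 ≤ u ξ := by
    intro ξ hξ
    rcases lt_or_eq_of_le hξ with h | h
    · exact (hu ξ h).le
    · rw [h]; exact hub
  have vmono : ∀ x y : ℝ, x ≤ y → y ≤ b → v x ≤ v y := by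
    intro x y hxy hyb
    exact monoOn_Icc (g' := u)
      (fun z hz => (S.sol z (S.mem_dom hb (hz.2.trans hyb))).1)
      (fun z hz => hune z (hz.2.le.trans hyb))
      (left_mem_Icc.mpr hxy) (right_mem_Icc.mpr hxy) hxy
  have vcont : ∀ ξ ≤ b, ContinuousAt v ξ :=
    fun ξ hξ => (S.sol ξ (S.mem_dom hb hξ)).1.continuousAt
  by_contra hcon
  push_neg at hcon
  obtain ⟨ξ₀, hξ₀b, hξ₀⟩ := hcon
  set T : Set ℝ := {ξ | ξ ≤ b ∧ 1 ≤ v ξ} with hT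
  have hTne : T.Nonempty := ⟨ξ₀, hξ₀b, hξ₀⟩
  obtain ⟨η₀, hη₀⟩ := eventually_atBot.mp (S.hv0.eventually (eventually_lt_nhds (by norm_num : (0:ℝ) < 1)))
  have hTbdd : BddBelow T := by
    refine ⟨η₀, fun s hs => ?_⟩
    by_contra h
    push_neg at h
    exact absurd (hη₀ s h.le) (not_lt.mpr hs.2)
  set ξ₁ := sInf T with hξ₁
  have hξ₁b : ξ₁ ≤ b := csInf_le_of_le hTbdd hTne.choose_spec (by
    exact hTne.choose_spec.1) |>.trans le_rfl
  have hv₁ : v ξ₁ = 1 := by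
    have hge : 1 ≤ v ξ₁ := by
      by_contra h
      push_neg at h
      obtain ⟨δ, hδ, hball⟩ := Metric.continuousAt_iff.mp (vcont ξ₁ hξ₁b) (1 - v ξ₁) (by linarith)
      obtain ⟨s, hsT, hs⟩ := exists_lt_of_csInf_lt hTne (lt_add_of_pos_right ξ₁ hδ)
      have h1 : ξ₁ ≤ s := csInf_le hTbdd hsT
      have h2 : dist s ξ₁ < δ := by
        rw [Real.dist_eq, abs_of_nonneg (by linarith)]; linarith
      have hb2 := hball h2
      rw [Real.dist_eq] at hb2
      have hb3 := abs_lt.mp hb2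
      have hb4 := hsT.2
      linarith [hb3.2]
    rcases eq_or_lt_of_le hge with h | h
    · exact h.symm
    · exfalso
      obtain ⟨δ, hδ, hball⟩ := Metric.continuousAt_iff.mp (vcont ξ₁ hξ₁b) (v ξ₁ - 1) (by linarith)
      have h2 : dist (ξ₁ - δ/2) ξ₁ < δ := by
        rw [Real.dist_eq]
        rw [abs_of_nonpos (by linarith)]
        linarith
      have h3 := hball h2
      rw [Real.dist_eq] at h3
      have h4 := abs_lt.mp h3
      have h5 : (1:ℝ) ≤ v (ξ₁ - δ/2) := by linarith [h4.1]
      have h6 : ξ₁ - δ/2 ∈ T := ⟨by linarith, h5⟩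
      have := csInf_le hTbdd h6
      linarith
  have hEle : En a β v u ξ₁ ≤ 3*c + 2*c^2 := by
    refine S.En_le_of_v_le_one (S.mem_dom hb hξ₁b)
      (fun ξ hξ => hu ξ (lt_of_lt_of_le hξ hξ₁b)) (hune ξ₁ hξ₁b) ?_
    intro ξ hξ
    calc v ξ ≤ v ξ₁ := vmono ξ ξ₁ hξ hξ₁b
    _ = 1 := hv₁
  have hEval : En a β v u ξ₁ = (u ξ₁)^2/2 + β * ((1-2*a)/12) := by
    unfold En
    rw [hv₁, Fcub_one]
  rw [hEval] at hEle
  nlinarith [sq_nonneg (u ξ₁), S.hc1, S.ha1, S.ha0, S.hβ1, S.hc0]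

/-- bounds along positive-u stretch -/
lemma Setup.main_bounds (S : Setup a c β v u ω) {b : ℝ} (hb : (b : EReal) < ω)
    (hu : ∀ ξ < b, 0 < u ξ) (hub : 0 ≤ u b) :
    0 < v b ∧ v b < 1 ∧ En a β v u b ≤ 3*c + 2*c^2 ∧ u b ≤ 4 := by
  have h1 : 0 < v b := S.v_pos hb hu
  have h2 := S.v_lt_one hb hu hub
  have h3 : En a β v u b ≤ 3*c + 2*c^2 :=
    S.En_le_of_v_le_one hb hu hub (fun ξ hξ => (h2 ξ hξ).le)
  refine ⟨h1, h2 b le_rfl, h3, ?_⟩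
  have h4 : -Fcub a (v b) ≤ 1/2 := neg_Fcub_le_half S.ha0 S.ha1 h1.le (h2 b le_rfl).le
  have h5 : En a β v u b = (u b)^2/2 + β * Fcub a (v b) := rfl
  have hc1 : c ≤ 1 := by nlinarith [S.hc1, S.ha0]
  nlinarith [S.hβ2, S.hβ1, S.hc0, hub]

/-- Case (i): u cannot stay positive forever. -/
lemma Setup.not_global_pos (S : Setup a c β v u ω) (hωtop : ω = ⊤) (hu : ∀ ξ, 0 < u ξ) :
    False := by
  have hβ0 : (0:ℝ) < β := lt_of_lt_of_le zero_lt_one S.hβ1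
  have hdom : ∀ ξ : ℝ, (ξ : EReal) < ω := by
    intro ξ; rw [hωtop]; exact EReal.coe_lt_top ξ
  have hbounds : ∀ b : ℝ, 0 < v b ∧ v b < 1 ∧ En a β v u b ≤ 3*c + 2*c^2 ∧ u b ≤ 4 :=
    fun b => S.main_bounds (hdom b) (fun ξ _ => hu ξ) (hu b).le
  have hvmono : Monotone v := by
    intro x y hxy
    exact monoOn_Icc (g' := u) (fun z hz => (S.sol z (hdom z)).1)
      (fun z _ => (hu z).le) (left_mem_Icc.mpr hxy) (right_mem_Icc.mpr hxy) hxy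
  have hEmono : Monotone (En a β v u) := by
    intro x y hxy
    refine monoOn_Icc (g' := fun t => β*c*(u t)^2) (fun z hz => S.hasDerivAt_En (hdom z))
      (fun z _ => ?_) (left_mem_Icc.mpr hxy) (right_mem_Icc.mpr hxy) hxy
    have := S.hc0
    positivity
  have hvbdd : BddAbove (Set.range v) := ⟨1, by rintro x ⟨ξ, rfl⟩; exact ((hbounds ξ).2.1).le⟩
  have hEbdd : BddAbove (Set.range (En a β v u)) :=
    ⟨3*c + 2*c^2, by rintro x ⟨ξ, rfl⟩; exact (hbounds ξ).2.2.1⟩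
  set vbar := ⨆ ξ, v ξ with hvbar
  set Ebar := ⨆ ξ, En a β v u ξ with hEbar
  have hvtop : Tendsto v atTop (nhds vbar) := tendsto_atTop_ciSup hvmono hvbdd
  have hEtop : Tendsto (En a β v u) atTop (nhds Ebar) := tendsto_atTop_ciSup hEmono hEbdd
  -- mean value theorem points for v
  have hmvt : ∀ n : ℕ, ∃ ζ ∈ Ioo (n:ℝ) ((n:ℝ)+1), u ζ = (v ((n:ℝ)+1) - v (n:ℝ))/(((n:ℝ)+1) - (n:ℝ)) := by
    intro n
    exact exists_hasDerivAt_eq_slope v u (by linarith)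
      (fun x _ => (S.sol x (hdom x)).1.continuousAt.continuousWithinAt)
      (fun x _ => (S.sol x (hdom x)).1)
  choose ζ hζmem hζval using hmvt
  have hζtop : Tendsto ζ atTop atTop :=
    tendsto_atTop_mono (fun n => (hζmem n).1.le) tendsto_natCast_atTop_atTop
  have hvζ : Tendsto (fun n => v (ζ n)) atTop (nhds vbar) := hvtop.comp hζtop
  have hnat1 : Tendsto (fun n : ℕ => (n:ℝ)+1) atTop atTop :=
    tendsto_atTop_add_const_right _ 1 tendsto_natCast_atTop_atTop
  have huζ : Tendsto (fun n => u (ζ n)) atTop (nhds 0) := by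
    have h1 : Tendsto (fun n : ℕ => (v ((n:ℝ)+1) - v (n:ℝ))/(((n:ℝ)+1) - (n:ℝ))) atTop (nhds 0) := by
      have := (hvtop.comp hnat1).sub (hvtop.comp tendsto_natCast_atTop_atTop)
      simp only [Function.comp] at this
      have h2 : (fun n : ℕ => (v ((n:ℝ)+1) - v (n:ℝ))/(((n:ℝ)+1) - (n:ℝ)))
          = fun n : ℕ => v ((n:ℝ)+1) - v (n:ℝ) := by
        funext n; rw [add_sub_cancel_left, div_one]
      rw [h2]
      simpa using this
    exact h1.congr (fun n => (hζval n).symm)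
  have hEζ : Tendsto (fun n => En a β v u (ζ n)) atTop (nhds Ebar) := hEtop.comp hζtop
  have hFcont : Continuous (Fcub a) := by unfold Fcub; continuity
  have hEζ' : Tendsto (fun n => En a β v u (ζ n)) atTop (nhds (β * Fcub a vbar)) := by
    have h1 : Tendsto (fun n => Fcub a (v (ζ n))) atTop (nhds (Fcub a vbar)) :=
      (hFcont.tendsto vbar).comp hvζ
    have := ((huζ.pow 2).div_const 2).add (h1.const_mul β)
    simpa [En] using this
  have hEeq : Ebar = β * Fcub a vbar := tendsto_nhds_unique hEζ hEζ'
  -- u tends to 0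
  have husq : Tendsto (fun ξ => (u ξ)^2) atTop (nhds 0) := by
    have h1 : ∀ ξ, (u ξ)^2 = 2*(En a β v u ξ) - 2*β*Fcub a (v ξ) := by
      intro ξ
      have : En a β v u ξ = (u ξ)^2/2 + β * Fcub a (v ξ) := rfl
      linarith
    have h2 : Tendsto (fun ξ => 2*(En a β v u ξ) - 2*β*Fcub a (v ξ)) atTop
        (nhds (2*Ebar - 2*β*Fcub a vbar)) :=
      (hEtop.const_mul 2).sub (((hFcont.tendsto vbar).comp hvtop).const_mul (2*β))
    have h3 : 2*Ebar - 2*β*Fcub a vbar = 0 := by rw [hEeq]; ring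
    rw [h3] at h2
    exact h2.congr (fun ξ => (h1 ξ).symm)
  have hu0' : Tendsto u atTop (nhds 0) := by
    have h1 : Tendsto (fun ξ => Real.sqrt ((u ξ)^2)) atTop (nhds (Real.sqrt 0)) :=
      (Real.continuous_sqrt.tendsto 0).comp husq
    rw [Real.sqrt_zero] at h1
    exact h1.congr (fun ξ => Real.sqrt_sq (hu ξ).le)
  -- mean value theorem for u
  have hmvt2 : ∀ n : ℕ, ∃ ζ' ∈ Ioo (n:ℝ) ((n:ℝ)+1),
      β * (c * u ζ' - v ζ' * (v ζ' - a) * (1 - v ζ')) = (u ((n:ℝ)+1) - u (n:ℝ))/(((n:ℝ)+1) - (n:ℝ)) := by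
    intro n
    exact exists_hasDerivAt_eq_slope u _ (by linarith)
      (fun x _ => (S.sol x (hdom x)).2.continuousAt.continuousWithinAt)
      (fun x _ => (S.sol x (hdom x)).2)
  choose ζ' hζ'mem hζ'val using hmvt2
  have hζ'top : Tendsto ζ' atTop atTop :=
    tendsto_atTop_mono (fun n => (hζ'mem n).1.le) tendsto_natCast_atTop_atTop
  have hvζ' : Tendsto (fun n => v (ζ' n)) atTop (nhds vbar) := hvtop.comp hζ'top
  have huζ' : Tendsto (fun n => u (ζ' n)) atTop (nhds 0) := hu0'.comp hζ'top
  have hlhs : Tendsto (fun n => β * (c * u (ζ' n) - v (ζ' n) * (v (ζ' n) - a) * (1 - v (ζ' n))))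
      atTop (nhds (β * (c * 0 - vbar * (vbar - a) * (1 - vbar)))) := by
    exact (((huζ'.const_mul c).sub ((hvζ'.mul (hvζ'.sub_const a)).mul
      (tendsto_const_nhds.sub hvζ'))).const_mul β)
  have hrhs : Tendsto (fun n : ℕ => (u ((n:ℝ)+1) - u (n:ℝ))/(((n:ℝ)+1) - (n:ℝ))) atTop (nhds 0) := by
    have := (hu0'.comp hnat1).sub (hu0'.comp tendsto_natCast_atTop_atTop)
    simp only [Function.comp] at this
    have h2 : (fun n : ℕ => (u ((n:ℝ)+1) - u (n:ℝ))/(((n:ℝ)+1) - (n:ℝ)))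
        = fun n : ℕ => u ((n:ℝ)+1) - u (n:ℝ) := by
      funext n; rw [add_sub_cancel_left, div_one]
    rw [h2]
    simpa using this
  have hf0 : β * (c * 0 - vbar * (vbar - a) * (1 - vbar)) = 0 :=
    tendsto_nhds_unique (hlhs.congr (fun n => hζ'val n)) hrhs
  have hfv : vbar * (vbar - a) * (1 - vbar) = 0 := by
    have : c * 0 - vbar * (vbar - a) * (1 - vbar) = 0 := by
      rcases mul_eq_zero.mp hf0 with h | h
      · exact absurd h (ne_of_gt hβ0)
      · exact h
    linarith [this]
  -- properties of vbar
  have hvbar0 : 0 < vbar := lt_of_lt_of_le (hbounds 0).1 (le_ciSup hvbdd 0)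
  have hvbar1 : vbar ≤ 1 := ciSup_le (fun ξ => ((hbounds ξ).2.1).le)
  have hEbarpos : 0 < Ebar :=
    lt_of_lt_of_le (S.En_pos (hdom 0) (fun ξ _ => hu ξ)) (le_ciSup hEbdd 0)
  have hFpos : 0 < Fcub a vbar := by
    by_contra h
    push_neg at h
    nlinarith [hEeq, hEbarpos]
  have hvbareq : vbar = 1 := by
    rcases mul_eq_zero.mp hfv with h | h
    · rcases mul_eq_zero.mp h with h1 | h1
      · exact absurd h1 (ne_of_gt hvbar0)
      · exfalso
        have : vbar = a := by linarith
        rw [this] at hFpos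
        exact absurd (Fcub_nonpos S.ha0 S.ha1 S.ha0.le le_rfl) (not_le.mpr hFpos)
    · linarith
  have hEbarle : Ebar ≤ 3*c + 2*c^2 := ciSup_le (fun ξ => (hbounds ξ).2.2.1)
  rw [hvbareq, Fcub_one] at hEeq
  nlinarith [S.hc1, S.ha1, S.ha0, S.hβ1, S.hc0]

lemma hasDerivAt_fst {f : ℝ → ℝ × ℝ} {p : ℝ × ℝ} {x : ℝ} (h : HasDerivAt f p x) :
    HasDerivAt (fun t => (f t).1) p.1 x := by
  have := ((ContinuousLinearMap.fst ℝ ℝ ℝ).hasFDerivAt (x := f x)).comp x h.hasFDerivAt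
  simpa using h.hasFDerivAt.fst.hasDerivAt

lemma hasDerivAt_snd {f : ℝ → ℝ × ℝ} {p : ℝ × ℝ} {x : ℝ} (h : HasDerivAt f p x) :
    HasDerivAt (fun t => (f t).2) p.2 x := by
  have := ((ContinuousLinearMap.snd ℝ ℝ ℝ).hasFDerivAt (x := f x)).comp x h.hasFDerivAt
  simpa using h.hasFDerivAt.snd.hasDerivAt

/-- arithmetic core of the local uniqueness (Gronwall) estimate -/
lemma key_ineq' {β c x y R : ℝ} (hβ1 : 1 ≤ β) (hβ2 : β ≤ 2) (hc0 : 0 < c) (hR2 : R^2 ≤ 900) :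
    0 ≤ 2*x*y + 2*β*c*y^2 - β*(2*(y*x*R)) + 4000*x^2 + 4000*y^2 := by
  have hβ0 : (0:ℝ) ≤ β := by linarith
  have hA1 : 2*(y*x*R) ≤ y^2*R^2 + x^2 := by nlinarith [sq_nonneg (y*R - x)]
  have hA3 : y^2*R^2 + x^2 ≤ 900*y^2 + x^2 := by nlinarith [sq_nonneg y]
  have hA4 : β*(y^2*R^2 + x^2) ≤ 2*(900*y^2 + x^2) := by
    refine mul_le_mul hβ2 hA3 ?_ (by norm_num)
    positivity
  have hA5 : β*(2*(y*x*R)) ≤ 2*(900*y^2 + x^2) :=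
    le_trans (mul_le_mul_of_nonneg_left hA1 hβ0) hA4
  nlinarith [sq_nonneg (x+y), mul_nonneg (mul_nonneg hβ0 hc0.le) (sq_nonneg y)]

lemma key_ineq {a c β v u p q : ℝ} (ha0 : 0 < a) (ha1 : a < 1/2) (hβ1 : 1 ≤ β) (hβ2 : β ≤ 2)
    (hc0 : 0 < c) (hv0 : 0 ≤ v) (hv1 : v ≤ 1) (hp1 : -1 ≤ p) (hp2 : p ≤ 2) :
    0 ≤ 2*(v - p)*(u - q) + 2*(u - q)*(β*(c*u - v*(v-a)*(1-v)) - β*(c*q - p*(p-a)*(1-p)))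
      + 4000*((v - p)^2 + (u - q)^2) := by
  have m1 : v*p ≤ v*2 := mul_le_mul_of_nonneg_left hp2 hv0
  have m2 : v*(-1) ≤ v*p := mul_le_mul_of_nonneg_left hp1 hv0
  have m3 : (1+a)*(v+p) ≤ (1+a)*3 := mul_le_mul_of_nonneg_left (by linarith) (by linarith)
  have m4 : (1+a)*(-1) ≤ (1+a)*(v+p) := mul_le_mul_of_nonneg_left (by linarith) (by linarith)
  have hpsq : p^2 ≤ 4 := by nlinarith [mul_nonneg (by linarith : (0:ℝ) ≤ 2-p) (by linarith : (0:ℝ) ≤ p+1)]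
  have hRu : -(v^2 + v*p + p^2) + (1+a)*(v+p) - a ≤ 10 := by nlinarith [sq_nonneg p, sq_nonneg v]
  have hRl : -10 ≤ -(v^2 + v*p + p^2) + (1+a)*(v+p) - a := by nlinarith [sq_nonneg v]
  have hR2 : (-(v^2 + v*p + p^2) + (1+a)*(v+p) - a)^2 ≤ 900 := by nlinarith [hRu, hRl]
  have H := key_ineq' (x := v - p) (y := u - q)
    (R := -(v^2 + v*p + p^2) + (1+a)*(v+p) - a) hβ1 hβ2 hc0 hR2
  have heq : 2*(v - p)*(u - q) + 2*(u - q)*(β*(c*u - v*(v-a)*(1-v)) - β*(c*q - p*(p-a)*(1-p)))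
      + 4000*((v - p)^2 + (u - q)^2)
      = 2*(v-p)*(u-q) + 2*β*c*(u-q)^2
        - β*(2*((u-q)*(v-p)*(-(v^2 + v*p + p^2) + (1+a)*(v+p) - a)))
        + 4000*(v-p)^2 + 4000*(u-q)^2 := by ring
  rw [heq]
  have heq2 : 2*(v-p)*(u-q) = 2*(v-p)*(u-q) := rfl
  linarith [H]

/-- a two-sided derivative bound gives a Lipschitz estimate -/
lemma lipschitzOnWith_of_deriv_bound {g g' : ℝ → ℝ} {B K : ℝ} (hK : 0 ≤ K)
    (hd : ∀ x < B, HasDerivAt g (g' x) x) (hb : ∀ x < B, |g' x| ≤ K) :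
    ∀ x < B, ∀ y, x ≤ y → y < B → |g y - g x| ≤ K * (y - x) := by
  intro x hx y hxy hy
  have h1 : g y - g x ≤ K * (y - x) := by
    have := monoOn_Icc (g := fun t => K*t - g t) (g' := fun t => K - g' t)
      (fun z hz => ((hasDerivAt_id z).const_mul K |>.congr_deriv (mul_one K)).sub (hd z (lt_of_le_of_lt hz.2 hy)))
      (fun z hz => by
        have := hb z (lt_trans hz.2 hy)
        have h2 := abs_le.mp this
        show (0:ℝ) ≤ K - g' z
        linarith [h2.2])
      (left_mem_Icc.mpr hxy) (right_mem_Icc.mpr hxy) hxy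
    simp only at this
    linarith
  have h2 : -(K * (y - x)) ≤ g y - g x := by
    have := monoOn_Icc (g := fun t => K*t + g t) (g' := fun t => K + g' t)
      (fun z hz => ((hasDerivAt_id z).const_mul K |>.congr_deriv (mul_one K)).add (hd z (lt_of_le_of_lt hz.2 hy)))
      (fun z hz => by
        have := hb z (lt_trans hz.2 hy)
        have h2 := abs_le.mp this
        show (0:ℝ) ≤ K + g' z
        linarith [h2.1])
      (left_mem_Icc.mpr hxy) (right_mem_Icc.mpr hxy) hxy
    simp only at this
    linarith
  rw [abs_le]
  constructor <;> linarith

/-- Case (ii): the solution cannot have u > 0 up to a finite maximal time. -/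
lemma Setup.no_finite_endpoint (S : Setup a c β v u ω) {B : ℝ} (hωB : ω = (B : EReal))
    (hu : ∀ ξ < B, 0 < u ξ)
    (hmax : ∀ (v' u' : ℝ → ℝ) (ω' : EReal), IsPlanarSol a β c v' u' ω' →
      (∀ ξ : ℝ, (ξ : EReal) < ω → v' ξ = v ξ ∧ u' ξ = u ξ) → ω' ≤ ω) : False := by
  have hc1 : c ≤ 1 := by nlinarith [S.hc1, S.ha0]
  have hβ0 : (0:ℝ) < β := lt_of_lt_of_le zero_lt_one S.hβ1
  have hdom : ∀ {ξ : ℝ}, ξ < B → (ξ : EReal) < ω := by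
    intro ξ h; rw [hωB]; exact_mod_cast h
  have hbnd : ∀ ξ < B, 0 < v ξ ∧ v ξ < 1 ∧ u ξ ≤ 4 := by
    intro ξ hξ
    have := S.main_bounds (hdom hξ) (fun η hη => hu η (hη.trans hξ)) (hu ξ hξ).le
    exact ⟨this.1, this.2.1, this.2.2.2⟩
  -- Lipschitz bounds
  have hLv : ∀ x < B, ∀ y, x ≤ y → y < B → |v y - v x| ≤ 4*(y-x) := by
    refine lipschitzOnWith_of_deriv_bound (by norm_num) (fun x hx => (S.sol x (hdom hx)).1) ?_
    intro x hx
    rw [abs_le]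
    exact ⟨by linarith [(hu x hx)], (hbnd x hx).2.2⟩
  have hfbound : ∀ x < B, |v x*(v x-a)*(1-v x)| ≤ 1 := by
    intro x hx
    obtain ⟨h1, h2, _⟩ := hbnd x hx
    rw [abs_le]
    constructor <;> nlinarith [S.ha0, S.ha1, mul_nonneg h1.le (by linarith : (0:ℝ) ≤ 1 - v x)]
  have hLu : ∀ x < B, ∀ y, x ≤ y → y < B → |u y - u x| ≤ 10*(y-x) := by
    refine lipschitzOnWith_of_deriv_bound (by norm_num) (fun x hx => (S.sol x (hdom hx)).2) ?_
    intro x hx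
    obtain ⟨h1, h2, h4⟩ := hbnd x hx
    have h3 := abs_le.mp (hfbound x hx)
    have hcu : c * u x ≤ 4 := by nlinarith [(hu x hx), S.hc0]
    have hcu0 : 0 ≤ c * u x := mul_nonneg S.hc0.le (hu x hx).le
    have hXu : c * u x - v x*(v x-a)*(1-v x) ≤ 5 := by linarith [h3.1]
    have hXl : (-1:ℝ) ≤ c * u x - v x*(v x-a)*(1-v x) := by linarith [h3.2]
    have hbu := mul_le_mul_of_nonneg_left hXu hβ0.le
    have hbl := mul_le_mul_of_nonneg_left hXl hβ0.le
    rw [abs_le]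
    constructor
    · nlinarith [S.hβ1, S.hβ2]
    · nlinarith [S.hβ1, S.hβ2]
  -- limits at B
  have hvlip : LipschitzOnWith (4 : ℝ≥0) v (Iio B) := by
    rw [lipschitzOnWith_iff_dist_le_mul]
    intro x hx y hy
    rw [Real.dist_eq, Real.dist_eq]
    have hco : ((4:ℝ≥0):ℝ) = 4 := by norm_num
    rw [hco]
    rcases le_total x y with hxy | hxy
    · rw [abs_sub_comm (v x) (v y), abs_sub_comm x y,
        abs_of_nonneg (by linarith : (0:ℝ) ≤ y - x)]
      exact hLv x hx y hxy hy
    · rw [abs_of_nonneg (by linarith : (0:ℝ) ≤ x - y)]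
      exact hLv y hy x hxy hx
  have hulip : LipschitzOnWith (10 : ℝ≥0) u (Iio B) := by
    rw [lipschitzOnWith_iff_dist_le_mul]
    intro x hx y hy
    rw [Real.dist_eq, Real.dist_eq]
    have hco : ((10:ℝ≥0):ℝ) = 10 := by norm_num
    rw [hco]
    rcases le_total x y with hxy | hxy
    · rw [abs_sub_comm (u x) (u y), abs_sub_comm x y,
        abs_of_nonneg (by linarith : (0:ℝ) ≤ y - x)]
      exact hLu x hx y hxy hy
    · rw [abs_of_nonneg (by linarith : (0:ℝ) ≤ x - y)]
      exact hLu y hy x hxy hx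
  obtain ⟨vg, hvg_lip, hvg_eq⟩ := hvlip.extend_real
  obtain ⟨ug, hug_lip, hug_eq⟩ := hulip.extend_real
  have hBmem : ∀ {x : ℝ}, x < B → x ∈ Iio B := fun h => h
  have hvlim : Tendsto v (nhdsWithin B (Iio B)) (nhds (vg B)) := by
    have h1 : Tendsto vg (nhdsWithin B (Iio B)) (nhds (vg B)) :=
      (hvg_lip.continuous.tendsto B).mono_left nhdsWithin_le_nhds
    refine h1.congr' ?_
    filter_upwards [eventually_mem_nhdsWithin] with x hx
    exact (hvg_eq hx).symm
  have hulim : Tendsto u (nhdsWithin B (Iio B)) (nhds (ug B)) := by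
    have h1 : Tendsto ug (nhdsWithin B (Iio B)) (nhds (ug B)) :=
      (hug_lip.continuous.tendsto B).mono_left nhdsWithin_le_nhds
    refine h1.congr' ?_
    filter_upwards [eventually_mem_nhdsWithin] with x hx
    exact (hug_eq hx).symm
  have hV0 : 0 ≤ vg B := by
    refine ge_of_tendsto hvlim ?_
    filter_upwards [eventually_mem_nhdsWithin] with x hx
    exact (hbnd x hx).1.le
  have hV1 : vg B ≤ 1 := by
    refine le_of_tendsto hvlim ?_
    filter_upwards [eventually_mem_nhdsWithin] with x hx
    exact (hbnd x hx).2.1.le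
  have hU0 : 0 ≤ ug B := by
    refine ge_of_tendsto hulim ?_
    filter_upwards [eventually_mem_nhdsWithin] with x hx
    exact (hu x hx).le
  -- local solution through (vg B, ug B) at time B
  have hGc : ContDiff ℝ 1 (fun p : ℝ × ℝ => (p.2, β*(c*p.2 - p.1*(p.1-a)*(1-p.1)))) := by
    apply ContDiff.prodMk
    · exact contDiff_snd
    · exact contDiff_const.mul ((contDiff_const.mul contDiff_snd).sub
        ((contDiff_fst.mul (contDiff_fst.sub contDiff_const)).mul
          (contDiff_const.sub contDiff_fst)))
  obtain ⟨h, hh0, ε, hε, hhd⟩ :=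
    (hGc.contDiffAt (x := (vg B, ug B))).exists_forall_mem_closedBall_exists_eq_forall_mem_Ioo_hasDerivAt₀ B
  have hcontB : ContinuousAt h B :=
    (hhd B ⟨by linarith, by linarith⟩).continuousAt
  obtain ⟨δ₁, hδ₁, hball⟩ := Metric.continuousAt_iff.mp hcontB 1 one_pos
  have hh1b : ∀ t, dist t B < δ₁ → -1 ≤ (h t).1 ∧ (h t).1 ≤ 2 := by
    intro t ht
    have h2 : dist ((h t).1) ((h B).1) ≤ dist (h t) (h B) := by
      rw [Prod.dist_eq]; exact le_max_left _ _
    have h3 := lt_of_le_of_lt h2 (hball ht)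
    have he : (h B).1 = vg B := by rw [hh0]
    rw [he, Real.dist_eq] at h3
    have h4 := abs_lt.mp h3
    constructor
    · linarith [h4.1]
    · linarith [h4.2]
  set ε₂ := min ε δ₁ with hε₂def
  have hε₂ : 0 < ε₂ := lt_min hε hδ₁
  -- agreement of (v,u) with h on (B-ε₂, B)
  have hagree : ∀ s, B - ε₂ < s → s < B → v s = (h s).1 ∧ u s = (h s).2 := by
    set d : ℝ → ℝ := fun t => (v t - (h t).1)^2 + (u t - (h t).2)^2 with hd_def
    set d' : ℝ → ℝ := fun t => 2*(v t - (h t).1)*(u t - (h t).2)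
      + 2*(u t - (h t).2)*(β*(c*u t - v t*(v t-a)*(1-v t))
        - β*(c*(h t).2 - (h t).1*((h t).1-a)*(1-(h t).1))) with hd'_def
    have hdd : ∀ t, B - ε₂ < t → t < B → HasDerivAt d (d' t) t := by
      intro t ht1 ht2
      have hv' := (S.sol t (hdom ht2)).1
      have hu' := (S.sol t (hdom ht2)).2
      have hmem : t ∈ Ioo (B - ε) (B + ε) :=
        ⟨by have := min_le_left ε δ₁; linarith, by linarith⟩
      have hh1 : HasDerivAt (fun s => (h s).1) ((h t).2) t := by
        simpa using hasDerivAt_fst (hhd t hmem)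
      have hh2 : HasDerivAt (fun s => (h s).2)
          (β*(c*(h t).2 - (h t).1*((h t).1-a)*(1-(h t).1))) t := by
        simpa using hasDerivAt_snd (hhd t hmem)
      have hcomb := (((hv'.sub hh1).pow 2).add ((hu'.sub hh2).pow 2))
      have e : d' t = 2*(v t - (h t).1)^(2-1) * (u t - (h t).2)
          + 2*(u t - (h t).2)^(2-1) * ((β * (c * u t - v t * (v t - a) * (1 - v t)))
            - β*(c*(h t).2 - (h t).1*((h t).1-a)*(1-(h t).1))) := by
        simp only [hd'_def]
        ring
      rw [e]
      exact hcomb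
    have hkey : ∀ t, B - ε₂ < t → t < B → 0 ≤ d' t + 4000 * d t := by
      intro t ht1 ht2
      have hdist : dist t B < δ₁ := by
        rw [Real.dist_eq, abs_of_nonpos (by linarith)]
        have := min_le_right ε δ₁
        linarith
      obtain ⟨hp1, hp2⟩ := hh1b t hdist
      obtain ⟨hv0, hv1, _⟩ := hbnd t ht2
      have := key_ineq (a := a) (c := c) (β := β) (v := v t) (u := u t)
        (p := (h t).1) (q := (h t).2) S.ha0 S.ha1 S.hβ1 S.hβ2 S.hc0 hv0.le hv1.le hp1 hp2
      simp only [hd'_def, hd_def]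
      linarith
    set φ : ℝ → ℝ := fun t => d t * Real.exp (4000*t) with hφ_def
    have hφd : ∀ t, B - ε₂ < t → t < B →
        HasDerivAt φ ((d' t + 4000 * d t) * Real.exp (4000*t)) t := by
      intro t ht1 ht2
      have hexp : HasDerivAt (fun s => Real.exp (4000*s)) (Real.exp (4000*t)*4000) t := by
        have h1 : HasDerivAt (fun s : ℝ => 4000*s) 4000 t := by
          simpa using (hasDerivAt_id t).const_mul (4000:ℝ)
        exact h1.exp
      have := (hdd t ht1 ht2).mul hexp
      have e : (d' t + 4000 * d t) * Real.exp (4000*t)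
          = d' t * Real.exp (4000*t) + d t * (Real.exp (4000*t)*4000) := by ring
      rw [e]
      exact this
    have hφmono : ∀ s t, B - ε₂ < s → s ≤ t → t < B → φ s ≤ φ t := by
      intro s t hs hst htB
      refine monoOn_Icc (g' := fun t => (d' t + 4000 * d t) * Real.exp (4000*t))
        (fun z hz => hφd z (lt_of_lt_of_le hs hz.1) (lt_of_le_of_lt hz.2 htB))
        (fun z hz => mul_nonneg (hkey z (lt_trans hs hz.1) (lt_trans hz.2 htB))
          (Real.exp_pos _).le)
        (left_mem_Icc.mpr hst) (right_mem_Icc.mpr hst) hst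
    have hdlim : Tendsto d (nhdsWithin B (Iio B)) (nhds 0) := by
      have ht1 : Tendsto (fun t => (h t).1) (nhdsWithin B (Iio B)) (nhds (vg B)) := by
        have hca : ContinuousAt (fun t => (h t).1) B := continuousAt_fst.comp hcontB
        have h2 := hca.tendsto.mono_left (nhdsWithin_le_nhds (s := Iio B))
        rw [show (h B).1 = vg B from by rw [hh0]] at h2
        exact h2
      have ht2 : Tendsto (fun t => (h t).2) (nhdsWithin B (Iio B)) (nhds (ug B)) := by
        have hca : ContinuousAt (fun t => (h t).2) B := continuousAt_snd.comp hcontB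
        have h2 := hca.tendsto.mono_left (nhdsWithin_le_nhds (s := Iio B))
        rw [show (h B).2 = ug B from by rw [hh0]] at h2
        exact h2
      have := (((hvlim.sub ht1).pow 2).add ((hulim.sub ht2).pow 2))
      simpa using this
    have hφlim : Tendsto φ (nhdsWithin B (Iio B)) (nhds 0) := by
      have hexp : Tendsto (fun t => Real.exp (4000*t)) (nhdsWithin B (Iio B))
          (nhds (Real.exp (4000*B))) :=
        ((Real.continuous_exp.comp (continuous_const.mul continuous_id)).tendsto B).mono_left
          nhdsWithin_le_nhds
      have := hdlim.mul hexp
      simpa using this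
    intro s hs1 hs2
    have hφs : φ s ≤ 0 := by
      refine ge_of_tendsto hφlim ?_
      have hIoo : Ioo s B ∈ nhdsWithin B (Iio B) := Ioo_mem_nhdsLT_of_mem ⟨hs2, le_rfl⟩
      filter_upwards [hIoo] with t ht
      exact hφmono s t hs1 ht.1.le ht.2
    have hds : d s = 0 := by
      have h1 : 0 ≤ d s := by
        simp only [hd_def]
        positivity
      have h2 : 0 < Real.exp (4000*s) := Real.exp_pos _
      by_contra hne
      have : 0 < d s := lt_of_le_of_ne h1 (Ne.symm hne)
      have : 0 < φ s := mul_pos this h2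
      linarith
    constructor
    · have : (v s - (h s).1)^2 = 0 := by
        simp only [hd_def] at hds
        nlinarith [sq_nonneg (v s - (h s).1), sq_nonneg (u s - (h s).2)]
      have := pow_eq_zero_iff (n := 2) (by norm_num) |>.mp this
      linarith [this]
    · have : (u s - (h s).2)^2 = 0 := by
        simp only [hd_def] at hds
        nlinarith [sq_nonneg (v s - (h s).1), sq_nonneg (u s - (h s).2)]
      have := pow_eq_zero_iff (n := 2) (by norm_num) |>.mp this
      linarith [this]
  -- glue and contradict maximality
  set V : ℝ → ℝ := fun t => if t < B then v t else (h t).1 with hV_def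
  set U : ℝ → ℝ := fun t => if t < B then u t else (h t).2 with hU_def
  have hsol' : IsPlanarSol a β c V U ((B + ε₂/4 : ℝ) : EReal) := by
    intro ξ hξ
    rw [EReal.coe_lt_coe_iff] at hξ
    rcases lt_or_ge ξ B with hlt | hle
    · have hVv : V =ᶠ[nhds ξ] v := by
        filter_upwards [isOpen_Iio.mem_nhds (hlt : ξ ∈ Iio B)] with t ht
        exact if_pos ht
      have hUu : U =ᶠ[nhds ξ] u := by
        filter_upwards [isOpen_Iio.mem_nhds (hlt : ξ ∈ Iio B)] with t ht
        exact if_pos ht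
      have hVξ : V ξ = v ξ := if_pos hlt
      have hUξ : U ξ = u ξ := if_pos hlt
      constructor
      · rw [hUξ]
        exact (S.sol ξ (hdom hlt)).1.congr_of_eventuallyEq hVv
      · rw [hUξ, hVξ]
        exact (S.sol ξ (hdom hlt)).2.congr_of_eventuallyEq hUu
    · have hmemξ : ξ ∈ Ioo (B - ε) (B + ε) := by
        constructor
        · have := min_le_left ε δ₁; linarith [hε₂]
        · have := min_le_left ε δ₁; linarith
      have hIoomem : Ioo (B - ε₂) (B + ε₂) ∈ nhds ξ := by
        apply isOpen_Ioo.mem_nhds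
        constructor
        · linarith [hε₂]
        · linarith [hε₂]
      have hVh : V =ᶠ[nhds ξ] (fun t => (h t).1) := by
        filter_upwards [hIoomem] with t ht
        by_cases htB : t < B
        · rw [hV_def]
          simp only [if_pos htB]
          exact (hagree t ht.1 htB).1
        · rw [hV_def]
          simp only [if_neg htB]
      have hUh : U =ᶠ[nhds ξ] (fun t => (h t).2) := by
        filter_upwards [hIoomem] with t ht
        by_cases htB : t < B
        · rw [hU_def]
          simp only [if_pos htB]
          exact (hagree t ht.1 htB).2
        · rw [hU_def]
          simp only [if_neg htB]
      have hVξ : V ξ = (h ξ).1 := if_neg (not_lt.mpr hle)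
      have hUξ : U ξ = (h ξ).2 := if_neg (not_lt.mpr hle)
      have hh1 : HasDerivAt (fun s => (h s).1) ((h ξ).2) ξ := by
        simpa using hasDerivAt_fst (hhd ξ hmemξ)
      have hh2 : HasDerivAt (fun s => (h s).2)
          (β*(c*(h ξ).2 - (h ξ).1*((h ξ).1-a)*(1-(h ξ).1))) ξ := by
        simpa using hasDerivAt_snd (hhd ξ hmemξ)
      constructor
      · rw [hUξ]
        exact hh1.congr_of_eventuallyEq hVh
      · rw [hUξ, hVξ]
        exact hh2.congr_of_eventuallyEq hUh
  have hagree' : ∀ ξ : ℝ, (ξ : EReal) < ω → V ξ = v ξ ∧ U ξ = u ξ := by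
    intro ξ hξ
    rw [hωB, EReal.coe_lt_coe_iff] at hξ
    exact ⟨if_pos hξ, if_pos hξ⟩
  have := hmax V U _ hsol' hagree'
  rw [hωB, EReal.coe_le_coe_iff] at this
  linarith [hε₂]

/-- The good case: ξs = sup of the positivity set, strictly inside the domain. -/
lemma Setup.good_case (S : Setup a c β v u ω) {ξs b' : ℝ} (hb' : (b' : EReal) < ω)
    (hξs : ξs < b') (hlt : ∀ η < ξs, 0 < u η)
    (hub : ∀ t : ℝ, (t : EReal) < ω → (∀ η ≤ t, 0 < u η) → t ≤ ξs) :
    u ξs = 0 ∧ a < v ξs ∧ v ξs < 1 := by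
  have hβ0 : (0:ℝ) < β := lt_of_lt_of_le zero_lt_one S.hβ1
  have hdomξs : (ξs : EReal) < ω := S.mem_dom hb' hξs.le
  have ucont : ContinuousAt u ξs := (S.sol ξs hdomξs).2.continuousAt
  have hge : 0 ≤ u ξs := by
    refine ge_of_tendsto (ucont.tendsto.mono_left (nhdsWithin_le_nhds (s := Iio ξs))) ?_
    filter_upwards [eventually_mem_nhdsWithin] with η hη
    exact (hlt η hη).le
  have hle : u ξs ≤ 0 := by
    by_contra hpos
    push_neg at hpos
    obtain ⟨δ, hδ, hb2⟩ := Metric.continuousAt_iff.mp ucont (u ξs) hpos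
    set t := ξs + min (δ/2) ((b' - ξs)/2) with ht_def
    have hmin0 : 0 < min (δ/2) ((b' - ξs)/2) := lt_min (by linarith) (by linarith)
    have htξs : ξs < t := by rw [ht_def]; linarith
    have htb' : t < b' := by
      rw [ht_def]
      have := min_le_right (δ/2) ((b' - ξs)/2)
      linarith
    have htω : (t : EReal) < ω := S.mem_dom hb' htb'.le
    have hall : ∀ η ≤ t, 0 < u η := by
      intro η hη
      rcases lt_or_ge η ξs with h | h
      · exact hlt η h
      · have hdist : dist η ξs < δ := by
          rw [Real.dist_eq, abs_of_nonneg (by linarith)]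
          have h2 := min_le_left (δ/2) ((b' - ξs)/2)
          rw [ht_def] at hη
          linarith
        have := abs_lt.mp ((Real.dist_eq (u η) (u ξs)) ▸ hb2 hdist)
        linarith [this.1]
    exact absurd (hub t htω hall) (not_le.mpr htξs)
  have hu0eq : u ξs = 0 := le_antisymm hle hge
  have hEpos : 0 < En a β v u ξs := S.En_pos hdomξs hlt
  have hvpos : 0 < v ξs := S.v_pos hdomξs hlt
  have hvlt1 : v ξs < 1 := S.v_lt_one hdomξs hlt hge ξs le_rfl
  have hEeq : En a β v u ξs = β * Fcub a (v ξs) := by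
    have : En a β v u ξs = (u ξs)^2/2 + β * Fcub a (v ξs) := rfl
    rw [this, hu0eq]
    ring
  have hFpos : 0 < Fcub a (v ξs) := by
    rw [hEeq] at hEpos
    by_contra h
    push_neg at h
    nlinarith
  exact ⟨hu0eq, gt_a_of_Fcub_pos S.ha0 S.ha1 hvpos.le hFpos, hvlt1⟩

end Sep9

/- STATEMENT 9: For 0 < a < 1/2 there is c₀ > 0 such that for 0 < c < c₀,
   τc² < 1, β = 1/(1−τc²), the unstable separatrix of the origin pointing
   into the first quadrant (any maximal solution tending to (0,0) as
   ξ → −∞ with u > 0 for all sufficiently negative ξ) has a first zero ξ*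
   of u, at which a < v(ξ*) < 1, and u > 0 on (−∞, ξ*). -/
theorem separatrix_first_axis_crossing
    (a τ : ℝ) (ha0 : 0 < a) (ha1 : a < 1 / 2) (hτ : 0 < τ) :
    ∃ c₀ > (0 : ℝ), ∀ c : ℝ, 0 < c → c < c₀ → τ * c ^ 2 < 1 →
      ∀ β : ℝ, β = 1 / (1 - τ * c ^ 2) →
      ∀ (v u : ℝ → ℝ) (ω : EReal), 0 < ω →
        IsPlanarSol a β c v u ω →
        IsPlanarMaximal a β c v u ω →
        Tendsto v atBot (nhds 0) → Tendsto u atBot (nhds 0) →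
        (∃ M : ℝ, ∀ ξ : ℝ, ξ < M → 0 < u ξ) →
        ∃ ξs : ℝ, (ξs : EReal) < ω ∧ u ξs = 0 ∧
          a < v ξs ∧ v ξs < 1 ∧ ∀ ξ : ℝ, ξ < ξs → 0 < u ξ := by
  refine ⟨min ((1-2*a)/100) (1/(2*τ+2)), lt_min (by linarith) (by positivity), ?_⟩
  intro c hc0 hcc₀ hτc1 β hβ v u ω hω hsol hmax hv0 hu0 hM
  obtain ⟨M, hM⟩ := hM
  have hc1 : c ≤ (1-2*a)/100 := (lt_of_lt_of_le hcc₀ (min_le_left _ _)).le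
  have hc2' : c < 1/(2*τ+2) := lt_of_lt_of_le hcc₀ (min_le_right _ _)
  have h2τ : (0:ℝ) < 2*τ+2 := by linarith
  have h1 : c*(2*τ+2) < 1 := by rw [lt_div_iff₀ h2τ] at hc2'; linarith
  have k1 : τ*(c*(2*τ+2)) < τ*1 := mul_lt_mul_of_pos_left h1 hτ
  have k2 : (τ*c)*(c*(2*τ+2)) < (τ*c)*1 := mul_lt_mul_of_pos_left h1 (mul_pos hτ hc0)
  have k3 : ((τ*c)*(c*(2*τ+2)))*(2*τ+2) < ((τ*c)*1)*(2*τ+2) := mul_lt_mul_of_pos_right k2 h2τ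
  have hτc2 : τ*c^2 < 1/2 := by nlinarith [k3, k1, hτ, sq_nonneg τ]
  have hden : 0 < 1 - τ*c^2 := by linarith
  have hβ1 : 1 ≤ β := by
    rw [hβ, le_div_iff₀ hden]
    nlinarith [mul_pos hτ (pow_pos hc0 2)]
  have hβ2 : β ≤ 2 := by
    rw [hβ, div_le_iff₀ hden]
    linarith
  have S : Sep9.Setup a c β v u ω := ⟨ha0, ha1, hc0, hc1, hβ1, hβ2, hω, hsol, hv0, hu0⟩
  set T : Set ℝ := {ξ | (ξ:EReal) < ω ∧ ∀ η ≤ ξ, 0 < u η} with hT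
  have hTne : T.Nonempty := by
    refine ⟨min M 0 - 1, ?_, ?_⟩
    · have h1 : ((min M 0 - 1 : ℝ) : EReal) < ((0:ℝ):EReal) := by
        rw [EReal.coe_lt_coe_iff]
        have := min_le_right M 0
        linarith
      rw [EReal.coe_zero] at h1
      exact lt_trans h1 hω
    · intro η hη
      apply hM
      have := min_le_left M 0
      linarith
  by_cases hbdd : BddAbove T
  · set ξs := sSup T with hξs_def
    have hlt : ∀ η < ξs, 0 < u η := by
      intro η hη
      obtain ⟨t, htT, hηt⟩ := exists_lt_of_lt_csSup hTne hη
      exact htT.2 η hηt.le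
    have hub : ∀ t : ℝ, (t:EReal) < ω → (∀ η ≤ t, 0 < u η) → t ≤ ξs :=
      fun t h1 h2 => le_csSup hbdd ⟨h1, h2⟩
    by_cases hωtop : ω = ⊤
    · have hb' : ((ξs + 1 : ℝ) : EReal) < ω := by rw [hωtop]; exact EReal.coe_lt_top _
      obtain ⟨h1, h2, h3⟩ := S.good_case hb' (by linarith) hlt hub
      exact ⟨ξs, S.mem_dom hb' (by linarith), h1, h2, h3, fun ξ hξ => hlt ξ hξ⟩
    · have hωbot : ω ≠ ⊥ := by
        intro h
        rw [h] at hω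
        exact absurd hω (by simp)
      obtain ⟨B, hB⟩ : ∃ B : ℝ, ω = (B : EReal) := by
        induction ω using EReal.rec with
        | bot => exact absurd rfl hωbot
        | coe x => exact ⟨x, rfl⟩
        | top => exact absurd rfl hωtop
      have hξsB : ξs ≤ B := by
        refine csSup_le hTne (fun t ht => ?_)
        have := ht.1
        rw [hB, EReal.coe_lt_coe_iff] at this
        exact this.le
      rcases eq_or_lt_of_le hξsB with heq | hlt2
      · exact absurd (S.no_finite_endpoint hB
          (fun ξ hξ => hlt ξ (by rw [heq]; exact hξ)) hmax) (fun h => h)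
      · have hb' : (((ξs + B)/2 : ℝ) : EReal) < ω := by
          rw [hB]
          exact EReal.coe_lt_coe_iff.mpr (by linarith)
        obtain ⟨h1, h2, h3⟩ := S.good_case hb' (by linarith) hlt hub
        exact ⟨ξs, S.mem_dom hb' (by linarith : ξs ≤ (ξs + B)/2), h1, h2, h3,
          fun ξ hξ => hlt ξ hξ⟩
  · have hall : ∀ r : ℝ, ∃ t ∈ T, r < t := by
      intro r
      rcases not_bddAbove_iff.mp hbdd r with ⟨t, htT, hrt⟩
      exact ⟨t, htT, hrt⟩
    have hupos : ∀ ξ, 0 < u ξ := by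
      intro ξ
      obtain ⟨t, htT, hlt⟩ := hall ξ
      exact htT.2 ξ hlt.le
    have hωtop : ω = ⊤ := by
      rw [EReal.eq_top_iff_forall_lt]
      intro r
      obtain ⟨t, htT, hrt⟩ := hall r
      exact lt_trans (EReal.coe_lt_coe_iff.mpr hrt) htT.1
    exact absurd (S.not_global_pos hωtop hupos) (fun h => h)
end

section
/- Let 0 < a < 1/2, τ > 0, and f(v) = v(v − a)(1 − v). There exists c₀ > 0 such that for every c with 0 < c < c₀ and τc² < 1, setting β = 1/(1 − τc²): every maximal solution (v, u) of the planar system v' = u, u' = β(cu − f(v)) on an interval with right endpoint ω ∈ (0, +∞] that satisfies (v(ξ), u(ξ)) → (0, 0) as ξ → −∞ and u(ξ) > 0 for all sufficiently negative ξ, satisfies v(ξ) → −∞ and u(ξ) → −∞ as ξ → ω. -/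
open Filter

/-- The filter of approach to the right endpoint ω ∈ (0, +∞] from the left,
as a filter on ℝ (equal to atTop when ω = ⊤, and to 𝓝[<] ω₀ when ω = ω₀ ∈ ℝ). -/
noncomputable def approachFromLeft (ω : EReal) : Filter ℝ :=
  Filter.comap (fun ξ : ℝ => (ξ : EReal)) (nhdsWithin ω (Set.Iio ω))


section Helpers
open Set Topology

/-- The cubic nonlinearity. -/
noncomputable def fp (a x : ℝ) : ℝ := x * (x - a) * (1 - x)

/-- An antiderivative of `fp`. -/
noncomputable def Fp (a x : ℝ) : ℝ := -x^4/4 + (1+a)*x^3/3 - a*x^2/2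

variable {a : ℝ}

lemma hasDerivAt_Fp (x : ℝ) : HasDerivAt (Fp a) (fp a x) x := by
  have h : HasDerivAt (Fp a) (-(4*x^3)/4 + (1+a)*(3*x^2)/3 - a*(2*x^1)/2) x := by
    unfold Fp
    exact (((hasDerivAt_pow 4 x).neg.div_const 4).add
      (((hasDerivAt_pow 3 x).const_mul (1+a)).div_const 3)).sub
      (((hasDerivAt_pow 2 x).const_mul a).div_const 2)
  convert h using 1
  unfold fp; ring

lemma continuous_Fp : Continuous (Fp a) := by unfold Fp; fun_prop

lemma continuous_fp : Continuous (fp a) := by unfold fp; fun_prop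

lemma Fp_zero : Fp a 0 = 0 := by simp [Fp]

lemma Fp_one : Fp a 1 = (1 - 2*a)/12 := by unfold Fp; ring

lemma Fp_nonpos (ha0 : 0 < a) (ha1 : a < 1/2) {x : ℝ} (hx : x ≤ a) : Fp a x ≤ 0 := by
  rcases le_or_gt x 0 with h | h
  · have h3 : x^3 ≤ 0 := by nlinarith [sq_nonneg x]
    unfold Fp; nlinarith [sq_nonneg x, sq_nonneg (x^2)]
  · have h3 : x^3 ≤ a * x^2 := by nlinarith [sq_nonneg x]
    unfold Fp; nlinarith [sq_nonneg (x^2), sq_nonneg x, mul_pos h h]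

lemma Fp_a_neg (ha0 : 0 < a) (ha1 : a < 1/2) : Fp a a < 0 := by
  unfold Fp; nlinarith [pow_pos ha0 3, pow_pos ha0 2, pow_pos ha0 4]

lemma Fp_lb (ha0 : 0 < a) (ha1 : a < 1/2) {x : ℝ} (h0 : 0 ≤ x) (h1 : x ≤ 1) :
    -(1/2) ≤ Fp a x := by
  unfold Fp; nlinarith [pow_nonneg h0 2, pow_nonneg h0 3, pow_nonneg h0 4, pow_le_one₀ h0 h1 (n := 2), pow_le_one₀ h0 h1 (n := 4), pow_le_one₀ h0 h1 (n := 3)]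

lemma fp_pos (ha0 : 0 < a) {x : ℝ} (h1 : a < x) (h2 : x < 1) : 0 < fp a x := by
  have : 0 < x := ha0.trans h1
  unfold fp
  have := sub_pos.mpr h1
  have := sub_pos.mpr h2
  positivity

lemma fp_nonneg (ha0 : 0 < a) {x : ℝ} (h1 : a ≤ x) (h2 : x ≤ 1) : 0 ≤ fp a x := by
  have h0 : 0 ≤ x := ha0.le.trans h1
  unfold fp
  have := sub_nonneg.mpr h1
  have := sub_nonneg.mpr h2
  positivity

lemma fp_ge_two (ha0 : 0 < a) (ha1 : a < 1/2) {x : ℝ} (hx : x ≤ -1) : 2 ≤ fp a x := by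
  unfold fp; nlinarith [sq_nonneg x, sq_nonneg (x+1)]

lemma fp_le_one (ha0 : 0 < a) {x : ℝ} (h0 : 0 ≤ x) (h1 : x ≤ 1) : fp a x ≤ 1 := by
  have k1 : x*(x-a)*(1-x) ≤ x*x*(1-x) := by nlinarith [mul_nonneg h0 (sub_nonneg.mpr h1)]
  have k2 : x*x*(1-x) ≤ 1 := by nlinarith [sq_nonneg x, sq_nonneg (1-x)]
  unfold fp; linarith

lemma abs_fp_le (ha0 : 0 < a) {x R : ℝ} (h : |x| ≤ R) : |fp a x| ≤ R * (R + a) * (1 + R) := by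
  have h0 : 0 ≤ R := (abs_nonneg x).trans h
  have h1 : |x| * |x - a| * |1 - x| ≤ R * (R + a) * (1 + R) := by
    have e1 : |x - a| ≤ R + a := by
      rw [abs_sub_comm]; calc |a - x| ≤ |a| + |x| := abs_sub _ _
      _ ≤ R + a := by rw [abs_of_pos ha0]; linarith
    have e2 : |1 - x| ≤ 1 + R := by
      calc |1 - x| ≤ |(1:ℝ)| + |x| := abs_sub _ _
      _ ≤ 1 + R := by norm_num; linarith
    have := abs_nonneg x
    have := abs_nonneg (x - a)
    gcongr
  calc |fp a x| = |x| * |x - a| * |1 - x| := by rw [fp, abs_mul, abs_mul]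
  _ ≤ _ := h1

end Helpers
section CalcHelpers
open Set Topology

variable {g g' : ℝ → ℝ} {s t : ℝ}

lemma le_of_deriv_nonneg_Icc (hst : s ≤ t)
    (hd : ∀ x ∈ Set.Icc s t, HasDerivAt g (g' x) x)
    (h0 : ∀ x ∈ Set.Ioo s t, 0 ≤ g' x) : g s ≤ g t := by
  have hcont : ContinuousOn g (Set.Icc s t) :=
    fun x hx => (hd x hx).continuousAt.continuousWithinAt
  have hdiff : DifferentiableOn ℝ g (interior (Set.Icc s t)) := by
    rw [interior_Icc]
    exact fun x hx => ((hd x (Ioo_subset_Icc_self hx)).differentiableAt).differentiableWithinAt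
  have hmono := monotoneOn_of_deriv_nonneg (convex_Icc s t) hcont hdiff (fun x hx => by
    rw [interior_Icc] at hx
    rw [(hd x (Ioo_subset_Icc_self hx)).deriv]
    exact h0 x hx)
  exact hmono (left_mem_Icc.2 hst) (right_mem_Icc.2 hst) hst

lemma le_of_deriv_nonpos_Icc (hst : s ≤ t)
    (hd : ∀ x ∈ Set.Icc s t, HasDerivAt g (g' x) x)
    (h0 : ∀ x ∈ Set.Ioo s t, g' x ≤ 0) : g t ≤ g s := by
  have := le_of_deriv_nonneg_Icc (g := fun x => -g x) (g' := fun x => -(g' x)) hst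
    (fun x hx => (hd x hx).neg) (fun x hx => neg_nonneg.2 (h0 x hx))
  simpa using this

lemma lt_of_deriv_pos_Icc (hst : s < t)
    (hd : ∀ x ∈ Set.Icc s t, HasDerivAt g (g' x) x)
    (h0 : ∀ x ∈ Set.Ioo s t, 0 < g' x) : g s < g t := by
  have hcont : ContinuousOn g (Set.Icc s t) :=
    fun x hx => (hd x hx).continuousAt.continuousWithinAt
  have hmono := strictMonoOn_of_deriv_pos (convex_Icc s t) hcont (fun x hx => by
    rw [interior_Icc] at hx
    rw [(hd x (Ioo_subset_Icc_self hx)).deriv]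
    exact h0 x hx)
  exact hmono (left_mem_Icc.2 hst.le) (right_mem_Icc.2 hst.le) hst

lemma lt_of_deriv_neg_Icc (hst : s < t)
    (hd : ∀ x ∈ Set.Icc s t, HasDerivAt g (g' x) x)
    (h0 : ∀ x ∈ Set.Ioo s t, g' x < 0) : g t < g s := by
  have := lt_of_deriv_pos_Icc (g := fun x => -g x) (g' := fun x => -(g' x)) hst
    (fun x hx => (hd x hx).neg) (fun x hx => neg_pos.2 (h0 x hx))
  simpa using this

/-- Difference bound for `Fp` on `[0,1]`: `Fp a y - Fp a x ≤ y - x`. -/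
lemma Fp_diff_le {a : ℝ} (ha0 : 0 < a) {x y : ℝ} (h0 : 0 ≤ x) (hxy : x ≤ y) (h1 : y ≤ 1) :
    Fp a y - Fp a x ≤ y - x := by
  have := le_of_deriv_nonpos_Icc (g := fun z => Fp a z - z) (g' := fun z => fp a z - 1) hxy
    (fun z hz => (hasDerivAt_Fp z).sub (hasDerivAt_id z))
    (fun z hz => by
      have := fp_le_one ha0 (h0.trans hz.1.le) (hz.2.le.trans h1)
      linarith)
  linarith

/-- `Fp` is monotone on `[a, 1]`. -/
lemma Fp_mono {a : ℝ} (ha0 : 0 < a) {x y : ℝ} (hax : a ≤ x) (hxy : x ≤ y) (h1 : y ≤ 1) :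
    Fp a x ≤ Fp a y :=
  le_of_deriv_nonneg_Icc hxy (fun z _ => hasDerivAt_Fp z)
    (fun z hz => fp_nonneg ha0 (hax.trans hz.1.le) (hz.2.le.trans h1))

end CalcHelpers
section FilterHelpers
open Set Topology Filter

/-- Criterion for tending to `-∞` along `approachFromLeft ω`. -/
lemma tendsto_approachFromLeft_atBot {ω : EReal} {g : ℝ → ℝ}
    (h : ∀ B : ℝ, ∃ ξ₀ : ℝ, (ξ₀ : EReal) < ω ∧ ∀ ξ : ℝ, ξ₀ < ξ → (ξ : EReal) < ω → g ξ ≤ B) :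
    Tendsto g (approachFromLeft ω) atBot := by
  rw [tendsto_atBot]
  intro B
  obtain ⟨ξ₀, hξ₀, hB⟩ := h B
  have hIoo : Set.Ioo (ξ₀ : EReal) ω ∈ nhdsWithin ω (Set.Iio ω) :=
    Ioo_mem_nhdsLT hξ₀
  refine Filter.mem_of_superset (Filter.preimage_mem_comap hIoo) ?_
  intro ξ hξ
  exact hB ξ (by exact_mod_cast show (ξ₀ : EReal) < (ξ : EReal) from hξ.1) hξ.2

/-- A function with a Lipschitz bound on `(-∞, t₀)` has a limit from the left at `t₀`. -/
lemma exists_tendsto_of_lipschitz {g : ℝ → ℝ} {t₀ K : ℝ} (hK : 0 ≤ K)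
    (hl : ∀ x y : ℝ, x < t₀ → y < t₀ → |g x - g y| ≤ K * |x - y|) :
    ∃ L, Tendsto g (nhdsWithin t₀ (Set.Iio t₀)) (nhds L) := by
  have hne : (Filter.map g (nhdsWithin t₀ (Set.Iio t₀))).NeBot := Filter.NeBot.map inferInstance g
  have hc : Cauchy (Filter.map g (nhdsWithin t₀ (Set.Iio t₀))) := by
    refine Metric.cauchy_iff.2 ⟨hne, fun ε hε => ?_⟩
    set δ : ℝ := ε / (2 * (K + 1)) with hδdef
    have hδ : 0 < δ := by positivity
    refine ⟨g '' Set.Ioo (t₀ - δ) t₀, ?_, ?_⟩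
    · exact Filter.mem_map.2 (Filter.mem_of_superset
        (Ioo_mem_nhdsLT (by linarith)) (Set.subset_preimage_image g _))
    · rintro _ ⟨x, hx, rfl⟩ _ ⟨y, hy, rfl⟩
      have h1 : |g x - g y| ≤ K * |x - y| := hl x y hx.2 hy.2
      have h2 : |x - y| ≤ δ := by
        rw [abs_sub_le_iff]; constructor <;> [linarith [hx.1, hx.2, hy.1, hy.2];
          linarith [hx.1, hx.2, hy.1, hy.2]]
      have h3 : K * |x - y| ≤ K * δ := by
        apply mul_le_mul_of_nonneg_left h2 hK
      have h4 : K * δ < ε := by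
        have h5 : (K + 1) * δ = ε / 2 := by rw [hδdef]; field_simp
        nlinarith
      calc dist (g x) (g y) = |g x - g y| := Real.dist_eq _ _
        _ < ε := by linarith
  obtain ⟨L, hL⟩ := CompleteSpace.complete hc
  exact ⟨L, hL⟩

/-- If `g` has derivative `g'` on `(σ, t₀)` and both `g` and `g'` have limits from the left
at `t₀`, then the extension of `g` by its limit has the limit derivative from the left. -/
lemma hasDerivWithinAt_left_endpoint {g g' : ℝ → ℝ} {σ t₀ L D : ℝ} (hσ : σ < t₀)
    (hd : ∀ x ∈ Set.Ioo σ t₀, HasDerivAt g (g' x) x)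
    (hgL : Tendsto g (nhdsWithin t₀ (Set.Iio t₀)) (nhds L))
    (hdD : Tendsto g' (nhdsWithin t₀ (Set.Iio t₀)) (nhds D)) :
    HasDerivWithinAt (fun ξ => if ξ < t₀ then g ξ else L) D (Set.Iic t₀) t₀ := by
  set h : ℝ → ℝ := fun ξ => if ξ < t₀ then g ξ else L with hh
  have hht₀ : h t₀ = L := by simp [hh]
  have hIioIic : Set.Iic t₀ \ {t₀} = Set.Iio t₀ := by
    ext x; simp [lt_iff_le_and_ne]
  rw [hasDerivWithinAt_iff_tendsto_slope, hIioIic]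
  -- main estimate
  have key : ∀ ε : ℝ, 0 < ε → ∀ᶠ ξ in nhdsWithin t₀ (Set.Iio t₀), |slope h t₀ ξ - D| ≤ ε := by
    intro ε hε
    have hev : ∀ᶠ ζ in nhdsWithin t₀ (Set.Iio t₀), |g' ζ - D| ≤ ε := by
      have := hdD (Metric.closedBall_mem_nhds D hε)
      filter_upwards [this] with ζ hζ
      simpa [Real.dist_eq, Metric.mem_closedBall] using hζ
    rw [Filter.eventually_iff_exists_mem] at hev
    obtain ⟨s, hs, hsε⟩ := hev
    rw [mem_nhdsLT_iff_exists_Ioo_subset] at hs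
    obtain ⟨σ', hσ', hsub⟩ := hs
    -- work on the interval (max σ σ', t₀)
    set σ₂ : ℝ := max σ σ' with hσ₂def
    have hσ₂ : σ₂ < t₀ := by
      rcases hσ' with hσ'
      simp only [hσ₂def, max_lt_iff]
      exact ⟨hσ, hσ'⟩
    have hders : ∀ ζ ∈ Set.Ioo σ₂ t₀, |g' ζ - D| ≤ ε := by
      intro ζ hζ
      exact hsε ζ (hsub ⟨lt_of_le_of_lt (le_max_right σ σ') hζ.1, hζ.2⟩)
    have hest : ∀ ξ ∈ Set.Ioo σ₂ t₀, |g ξ - L - D * (ξ - t₀)| ≤ ε * (t₀ - ξ) := by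
      intro ξ hξ
      -- upper and lower bounds on φ ζ - φ ξ for φ = g - D • id
      have hup : ∀ ζ ∈ Set.Ioo ξ t₀, g ζ - D * ζ - (g ξ - D * ξ) ≤ ε * (ζ - ξ) := by
        intro ζ hζ
        have := le_of_deriv_nonpos_Icc (g := fun z => g z - D * z - ε * z)
          (g' := fun z => g' z - D - ε) hζ.1.le
          (fun z hz => by
            have hz' : z ∈ Set.Ioo σ t₀ := ⟨lt_of_le_of_lt (le_max_left σ σ')
              (lt_of_lt_of_le hξ.1 hz.1), lt_of_le_of_lt hz.2 hζ.2⟩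
            exact (((hd z hz').sub ((hasDerivAt_id z).const_mul D)).sub
              ((hasDerivAt_id z).const_mul ε)).congr_deriv (by ring))
          (fun z hz => by
            have hz2 : z ∈ Set.Ioo σ₂ t₀ := ⟨hξ.1.trans hz.1, hz.2.trans hζ.2⟩
            have := hders z hz2
            cases abs_le.1 this with
            | intro h1 h2 => linarith)
        linarith
      have hlo : ∀ ζ ∈ Set.Ioo ξ t₀, -(ε * (ζ - ξ)) ≤ g ζ - D * ζ - (g ξ - D * ξ) := by
        intro ζ hζ
        have := le_of_deriv_nonneg_Icc (g := fun z => g z - D * z + ε * z)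
          (g' := fun z => g' z - D + ε) hζ.1.le
          (fun z hz => by
            have hz' : z ∈ Set.Ioo σ t₀ := ⟨lt_of_le_of_lt (le_max_left σ σ')
              (lt_of_lt_of_le hξ.1 hz.1), lt_of_le_of_lt hz.2 hζ.2⟩
            exact (((hd z hz').sub ((hasDerivAt_id z).const_mul D)).add
              ((hasDerivAt_id z).const_mul ε)).congr_deriv (by ring))
          (fun z hz => by
            have hz2 : z ∈ Set.Ioo σ₂ t₀ := ⟨hξ.1.trans hz.1, hz.2.trans hζ.2⟩
            have := hders z hz2
            cases abs_le.1 this with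
            | intro h1 h2 => linarith)
        linarith
      -- pass to the limit ζ → t₀⁻
      have hlim : Tendsto (fun ζ => g ζ - D * ζ - (g ξ - D * ξ))
          (nhdsWithin t₀ (Set.Iio t₀)) (nhds (L - D * t₀ - (g ξ - D * ξ))) := by
        have hid : Tendsto (fun ζ : ℝ => D * ζ) (nhdsWithin t₀ (Set.Iio t₀)) (nhds (D * t₀)) :=
          ((continuous_const.mul continuous_id).tendsto t₀).mono_left nhdsWithin_le_nhds
        exact (hgL.sub hid).sub tendsto_const_nhds
      have hrhs : Tendsto (fun ζ : ℝ => ε * (ζ - ξ)) (nhdsWithin t₀ (Set.Iio t₀))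
          (nhds (ε * (t₀ - ξ))) :=
        ((continuous_const.mul (continuous_id.sub continuous_const)).tendsto t₀).mono_left
          nhdsWithin_le_nhds
      have hev1 : (fun ζ => g ζ - D * ζ - (g ξ - D * ξ)) ≤ᶠ[nhdsWithin t₀ (Set.Iio t₀)]
          (fun ζ => ε * (ζ - ξ)) := by
        filter_upwards [Ioo_mem_nhdsLT hξ.2] with ζ hζ
        exact hup ζ hζ
      have hupl : L - D * t₀ - (g ξ - D * ξ) ≤ ε * (t₀ - ξ) :=
        le_of_tendsto_of_tendsto hlim hrhs hev1
      have hev2 : (fun ζ => -(ε * (ζ - ξ))) ≤ᶠ[nhdsWithin t₀ (Set.Iio t₀)]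
          (fun ζ => g ζ - D * ζ - (g ξ - D * ξ)) := by
        filter_upwards [Ioo_mem_nhdsLT hξ.2] with ζ hζ
        exact hlo ζ hζ
      have hlol : -(ε * (t₀ - ξ)) ≤ L - D * t₀ - (g ξ - D * ξ) :=
        le_of_tendsto_of_tendsto hrhs.neg hlim hev2
      rw [abs_le]
      constructor <;> [nlinarith [hlol]; nlinarith [hupl]]
    filter_upwards [Ioo_mem_nhdsLT hσ₂] with ξ hξ
    have hξlt : ξ < t₀ := hξ.2
    have hd' : (0:ℝ) < t₀ - ξ := by linarith
    have heq : slope h t₀ ξ - D = (g ξ - L - D * (ξ - t₀)) / (ξ - t₀) := by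
      rw [slope_def_field]
      have h1 : h ξ = g ξ := by simp only [hh]; rw [if_pos hξlt]
      rw [h1, hht₀, eq_div_iff (by intro hcon; rw [sub_eq_zero] at hcon; exact hξlt.ne hcon), sub_mul, div_mul_cancel₀ _ (by intro hcon; rw [sub_eq_zero] at hcon; exact hξlt.ne hcon)]
    rw [heq, abs_div, abs_of_neg (by linarith : ξ - t₀ < 0), neg_sub, div_le_iff₀ hd']
    exact hest ξ hξ
  rw [Metric.tendsto_nhds]
  intro ε hε
  filter_upwards [key (ε/2) (by linarith)] with ξ hξ
  rw [Real.dist_eq]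
  linarith
open Filter in
/-- The total energy. -/
noncomputable def En (a β : ℝ) (v u : ℝ → ℝ) : ℝ → ℝ :=
  fun ξ => (u ξ)^2/2 + β * Fp a (v ξ)

/-- Bundle of standing hypotheses. -/
structure Good (a c β : ℝ) (v u : ℝ → ℝ) (ω : EReal) : Prop where
  ha0 : 0 < a
  ha1 : a < 1/2
  hc0 : 0 < c
  hc1 : c ≤ 1/8
  hc2 : c ≤ (1-2*a)/100
  hc3 : 4*c < a * (-Fp a a) * ((1-2*a)/12) / 2
  hβ1 : 1 ≤ β
  hβ2 : β ≤ 2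
  hω : 0 < ω
  sol : IsPlanarSol a β c v u ω
  hmax : IsPlanarMaximal a β c v u ω
  hv0 : Filter.Tendsto v Filter.atBot (nhds 0)
  hu0 : Filter.Tendsto u Filter.atBot (nhds 0)
  hupos : ∃ M : ℝ, ∀ ξ : ℝ, ξ < M → 0 < u ξ

namespace Good

open Set Topology Filter

variable {a c β : ℝ} {v u : ℝ → ℝ} {ω : EReal} (H : Good a c β v u ω)

include H

lemma hβ0 : 0 < β := lt_of_lt_of_le zero_lt_one H.hβ1

lemma dv {ξ : ℝ} (hξ : (ξ : EReal) < ω) : HasDerivAt v (u ξ) ξ := (H.sol ξ hξ).1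

lemma du {ξ : ℝ} (hξ : (ξ : EReal) < ω) :
    HasDerivAt u (β * (c * u ξ - fp a (v ξ))) ξ := by
  simpa [fp] using (H.sol ξ hξ).2

omit H in
lemma lt_om {η ξ : ℝ} (hη : η ≤ ξ) (hξ : (ξ : EReal) < ω) : (η : EReal) < ω :=
  lt_of_le_of_lt (EReal.coe_le_coe_iff.2 hη) hξ

lemma dE {ξ : ℝ} (hξ : (ξ : EReal) < ω) :
    HasDerivAt (En a β v u) (β*c*(u ξ)^2) ξ := by
  have hu2 : HasDerivAt (fun ξ => u ξ^2) ((2:ℕ) * u ξ ^ 1 * (β*(c*u ξ - fp a (v ξ)))) ξ :=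
    (H.du hξ).pow 2
  have hF : HasDerivAt (fun ξ => Fp a (v ξ)) (fp a (v ξ) * u ξ) ξ :=
    (hasDerivAt_Fp (v ξ)).comp ξ (H.dv hξ)
  have := (hu2.div_const 2).add (hF.const_mul β)
  refine this.congr_deriv ?_
  push_cast
  ring

lemma E_mono {s t : ℝ} (hst : s ≤ t) (ht : (t : EReal) < ω) :
    En a β v u s ≤ En a β v u t := by
  have hβc : 0 ≤ β * c := (mul_pos H.hβ0 H.hc0).le
  exact le_of_deriv_nonneg_Icc hst (fun x hx => H.dE (lt_om hx.2 ht))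
    (fun x _ => by have : (0:ℝ) ≤ (u x)^2 := sq_nonneg _; nlinarith)

lemma E_tendsto : Tendsto (En a β v u) atBot (nhds 0) := by
  have h1 : Tendsto (fun ξ => (u ξ)^2/2 + β * Fp a (v ξ)) atBot
      (nhds ((0:ℝ)^2/2 + β * Fp a 0)) :=
    ((H.hu0.pow 2).div_const 2).add (((continuous_Fp.tendsto 0).comp H.hv0).const_mul β)
  rw [show En a β v u = fun ξ => (u ξ)^2/2 + β * Fp a (v ξ) from rfl]
  simpa [Fp_zero] using h1

lemma E_nonneg {ξ : ℝ} (hξ : (ξ : EReal) < ω) : 0 ≤ En a β v u ξ :=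
  le_of_tendsto H.E_tendsto (eventually_atBot.2 ⟨ξ, fun η hη => H.E_mono hη hξ⟩)

lemma E_pos {ξ : ℝ} (hξ : (ξ : EReal) < ω) : 0 < En a β v u ξ := by
  obtain ⟨M, hM⟩ := H.hupos
  set m := min ξ M with hm
  have hmξ : m ≤ ξ := min_le_left _ _
  have hmω : (m : EReal) < ω := lt_om hmξ hξ
  have h1 : En a β v u (m-1) < En a β v u m := by
    apply lt_of_deriv_pos_Icc (by linarith) (fun x hx => H.dE (lt_om hx.2 hmω))
    intro x hx
    have hxM : x < M := lt_of_lt_of_le hx.2 (min_le_right _ _)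
    have hu : 0 < u x := hM x hxM
    have := mul_pos H.hβ0 H.hc0
    positivity
  have h0 : 0 ≤ En a β v u (m-1) := H.E_nonneg (lt_om (by linarith) hmω)
  have h2 : En a β v u m ≤ En a β v u ξ := H.E_mono hmξ hξ
  linarith

lemma v_lower {ξ : ℝ} (hξ : (ξ : EReal) < ω) (hist : ∀ η ≤ ξ, 0 ≤ u η) : 0 ≤ v ξ := by
  apply le_of_tendsto H.hv0
  refine eventually_atBot.2 ⟨ξ, fun η hη => ?_⟩
  exact le_of_deriv_nonneg_Icc hη (fun x hx => H.dv (lt_om hx.2 hξ))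
    (fun x hx => hist x hx.2.le)

/-- The fundamental a priori bound in the phase where `u ≥ 0`. -/
lemma key_bound {ξt : ℝ} (hξt : (ξt : EReal) < ω) (hist : ∀ η ≤ ξt, 0 ≤ u η) :
    v ξt < 1 ∧ u ξt < 4 ∧ En a β v u ξt ≤ 4*β*c := by
  classical
  set W : ℝ → ℝ := fun ξ => En a β v u ξ - 4*β*c*(v ξ) with hWdef
  have hWd : ∀ ξ : ℝ, (ξ : EReal) < ω →
      HasDerivAt W (β*c*(u ξ)^2 - 4*β*c*(u ξ)) ξ :=
    fun ξ hξ => ((H.dE hξ).sub ((H.dv hξ).const_mul (4*β*c))).congr_deriv (by ring)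
  have hWlim : Tendsto W atBot (nhds 0) := by
    have := H.E_tendsto.sub (H.hv0.const_mul (4*β*c))
    simpa using this
  have hβc : 0 < β * c := mul_pos H.hβ0 H.hc0
  have Wle : ∀ ξb : ℝ, (ξb : EReal) < ω → (∀ η ≤ ξb, 0 ≤ u η) → (∀ η < ξb, u η < 4) →
      En a β v u ξb ≤ 4*β*c*(v ξb) := by
    intro ξb hξb hb1 hb2
    have hmono : ∀ s, s ≤ ξb → W ξb ≤ W s := by
      intro s hs
      apply le_of_deriv_nonpos_Icc hs (fun x hx => hWd x (lt_om hx.2 hξb))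
      intro x hx
      have h1 : 0 ≤ u x := hb1 x hx.2.le
      have h2 : u x < 4 := hb2 x hx.2
      have h3 : 0 ≤ u x * (4 - u x) := mul_nonneg h1 (by linarith)
      nlinarith [mul_nonneg hβc.le h3]
    have hW0 : W ξb ≤ 0 :=
      ge_of_tendsto hWlim (eventually_atBot.2 ⟨ξb, fun s hs => hmono s hs⟩)
    simp only [hWdef] at hW0
    linarith
  by_cases hbad : ∀ η ≤ ξt, v η < 1 ∧ u η < 4
  · have hW0 := Wle ξt hξt hist (fun η hη => (hbad η hη.le).2)
    refine ⟨(hbad ξt le_rfl).1, (hbad ξt le_rfl).2, ?_⟩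
    have hv1 : v ξt ≤ 1 := (hbad ξt le_rfl).1.le
    nlinarith
  · exfalso
    push_neg at hbad
    obtain ⟨η₀, hη₀t, hη₀⟩ := hbad
    have hη₀' : 1 ≤ v η₀ ∨ 4 ≤ u η₀ := by
      rcases lt_or_ge (v η₀) 1 with h | h
      · exact Or.inr (hη₀ h)
      · exact Or.inl h
    set bad := {η : ℝ | η ≤ ξt ∧ (1 ≤ v η ∨ 4 ≤ u η)} with hbaddef
    have hbadne : bad.Nonempty := ⟨η₀, hη₀t, hη₀'⟩
    have hN : ∃ N : ℝ, ∀ ξ, ξ ≤ N → |v ξ| < 1 ∧ |u ξ| < 4 := by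
      have h1 : ∀ᶠ ξ in atBot, |v ξ| < 1 := by
        have := (Metric.tendsto_nhds.1 H.hv0) 1 one_pos
        simpa [Real.dist_eq] using this
      have h2 : ∀ᶠ ξ in atBot, |u ξ| < 4 := by
        have := (Metric.tendsto_nhds.1 H.hu0) 4 (by norm_num)
        simpa [Real.dist_eq] using this
      exact eventually_atBot.1 (h1.and h2)
    obtain ⟨N, hN⟩ := hN
    have hbdd : BddBelow bad := ⟨N, fun η hη => by
      by_contra hcon
      push_neg at hcon
      obtain ⟨hv', hu'⟩ := hN η hcon.le
      rw [abs_lt] at hv' hu'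
      rcases hη.2 with h | h
      · linarith [hv'.2]
      · linarith [hu'.2]⟩
    set ξb := sInf bad with hξbdef
    have hξbt : ξb ≤ ξt := le_trans (csInf_le hbdd ⟨hη₀t, hη₀'⟩) hη₀t
    have hξbω : (ξb : EReal) < ω := lt_om hξbt hξt
    have hgood : ∀ η, η < ξb → v η < 1 ∧ u η < 4 := by
      intro η hη
      by_contra hcon
      have hmem : η ∈ bad := by
        refine ⟨hη.le.trans hξbt, ?_⟩
        push_neg at hcon
        rcases lt_or_ge (v η) 1 with h | h
        · exact Or.inr (hcon h)
        · exact Or.inl h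
      exact absurd (csInf_le hbdd hmem) (not_le.2 hη)
    have hvcont : ContinuousAt v ξb := (H.dv hξbω).continuousAt
    have hucont : ContinuousAt u ξb := (H.du hξbω).continuousAt
    have hvle : v ξb ≤ 1 := by
      apply le_of_tendsto (hvcont.tendsto.mono_left nhdsWithin_le_nhds :
        Tendsto v (nhdsWithin ξb (Set.Iio ξb)) (nhds (v ξb)))
      filter_upwards [self_mem_nhdsWithin] with η hη
      exact (hgood η hη).1.le
    have hule : u ξb ≤ 4 := by
      apply le_of_tendsto (hucont.tendsto.mono_left nhdsWithin_le_nhds :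
        Tendsto u (nhdsWithin ξb (Set.Iio ξb)) (nhds (u ξb)))
      filter_upwards [self_mem_nhdsWithin] with η hη
      exact (hgood η hη).2.le
    have hhist' : ∀ η ≤ ξb, 0 ≤ u η := fun η hη => hist η (hη.trans hξbt)
    have hWb := Wle ξb hξbω hhist' (fun η hη => (hgood η hη).2)
    have hv0b : 0 ≤ v ξb := H.v_lower hξbω hhist'
    have hEb : En a β v u ξb ≤ 4*β*c := by nlinarith
    have hmem : 1 ≤ v ξb ∨ 4 ≤ u ξb := by
      by_contra hcon
      push_neg at hcon
      obtain ⟨h1, h2⟩ := hcon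
      have e1 : v ⁻¹' (Set.Iio 1) ∈ nhds ξb := hvcont (Iio_mem_nhds h1)
      have e2 : u ⁻¹' (Set.Iio 4) ∈ nhds ξb := hucont (Iio_mem_nhds h2)
      obtain ⟨δ, hδ, hball⟩ := Metric.mem_nhds_iff.1 (Filter.inter_mem e1 e2)
      obtain ⟨η', hη'mem, hη'lt⟩ := Real.lt_sInf_add_pos hbadne hδ
      have hη'ge : ξb ≤ η' := csInf_le hbdd hη'mem
      have : η' ∈ Metric.ball ξb δ := by
        rw [Metric.mem_ball, Real.dist_eq, abs_lt]
        constructor <;> [linarith; linarith]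
      have := hball this
      rcases hη'mem.2 with h | h
      · exact absurd this.1 (by simp; linarith)
      · exact absurd this.2 (by simp; linarith)
    have hEub : 0 ≤ (u ξb)^2/2 := by positivity
    have hEnb : En a β v u ξb = (u ξb)^2/2 + β * Fp a (v ξb) := rfl
    rcases hmem with h | h
    · have hveq : v ξb = 1 := le_antisymm hvle h
      have hge : β * ((1-2*a)/12) ≤ En a β v u ξb := by
        rw [hEnb, hveq, Fp_one]; linarith
      have hpos : 0 < 1 - 2*a := by linarith [H.ha1]
      have k1 : (1-2*a)/12 ≤ β*((1-2*a)/12) := by nlinarith [H.hβ1]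
      have k2 : 4*β*c ≤ 8*c := by nlinarith [H.hβ2, H.hc0]
      have k3 : 8*c ≤ 8*((1-2*a)/100) := by linarith [H.hc2]
      nlinarith
    · have hueq : u ξb = 4 := le_antisymm hule h
      have hFlb : -(1/2) ≤ Fp a (v ξb) := Fp_lb H.ha0 H.ha1 hv0b hvle
      have hEeq : En a β v u ξb = 8 + β * Fp a (v ξb) := by rw [hEnb, hueq]; norm_num
      have k1 : β * (-(1/2)) ≤ β * Fp a (v ξb) :=
        mul_le_mul_of_nonneg_left hFlb H.hβ0.le
      have k2 : 4*β*c ≤ 8*c := by nlinarith [H.hβ2, H.hc0]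
      nlinarith [H.hβ2, H.hc1]

end Good
section LipHelper
open Set

/-- Lipschitz bound from a derivative bound on `(-∞, t₀)`. -/
lemma abs_sub_le_of_deriv_bound {g g' : ℝ → ℝ} {t₀ K : ℝ}
    (hd : ∀ ξ : ℝ, ξ < t₀ → HasDerivAt g (g' ξ) ξ)
    (hb : ∀ ξ : ℝ, ξ < t₀ → |g' ξ| ≤ K) :
    ∀ x y : ℝ, x < t₀ → y < t₀ → |g x - g y| ≤ K * |x - y| := by
  have main : ∀ x y : ℝ, x ≤ y → y < t₀ → |g y - g x| ≤ K * (y - x) := by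
    intro x y hxy hy
    have h1 : g y - g x ≤ K * (y - x) := by
      have := le_of_deriv_nonneg_Icc (g := fun z => K*z - g z) (g' := fun z => K - g' z) hxy
        (fun z hz => (((hasDerivAt_id z).const_mul K).sub
          (hd z (lt_of_le_of_lt hz.2 hy))).congr_deriv (by ring))
        (fun z hz => by
          have h := abs_le.1 (hb z (hz.2.trans hy))
          linarith [h.2])
      linarith
    have h2 : -(K * (y - x)) ≤ g y - g x := by
      have := le_of_deriv_nonneg_Icc (g := fun z => K*z + g z) (g' := fun z => K + g' z) hxy
        (fun z hz => (((hasDerivAt_id z).const_mul K).add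
          (hd z (lt_of_le_of_lt hz.2 hy))).congr_deriv (by ring))
        (fun z hz => by
          have h := abs_le.1 (hb z (hz.2.trans hy))
          linarith [h.1])
      linarith
    rw [abs_le]
    exact ⟨by linarith, h1⟩
  intro x y hx hy
  rcases le_total x y with h | h
  · have := main x y h hy
    rw [abs_sub_comm] at this
    calc |g x - g y| ≤ K * (y - x) := this
      _ = K * |x - y| := by rw [abs_sub_comm, abs_of_nonneg (by linarith : (0:ℝ) ≤ y - x)]
  · have := main y x h hx
    calc |g x - g y| ≤ K * (x - y) := this
      _ = K * |x - y| := by rw [abs_of_nonneg (by linarith : (0:ℝ) ≤ x - y)]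

end LipHelper
namespace Good

open Set Topology Filter

variable {a c β : ℝ} {v u : ℝ → ℝ} {ω : EReal} (H : Good a c β v u ω)

include H

/-- A maximal solution bounded near a finite right endpoint yields a contradiction. -/
lemma ext_contra (hT : ω ≠ ⊤) {R : ℝ} (hR : 0 < R)
    (hb : ∀ ξ : ℝ, (ξ : EReal) < ω → |v ξ| ≤ R ∧ |u ξ| ≤ R) : False := by
  classical
  have hBne : ω ≠ ⊥ := (lt_of_le_of_lt bot_le H.hω).ne'
  set ω₀ : ℝ := ω.toReal with hω₀def
  have hω0 : ((ω₀ : ℝ) : EReal) = ω := EReal.coe_toReal hT hBne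
  have hlt : ∀ ξ : ℝ, ξ < ω₀ → (ξ : EReal) < ω := by
    intro ξ hξ
    rw [← hω0]
    exact_mod_cast hξ
  -- derivative bounds
  set CfR : ℝ := R * (R + a) * (1 + R) with hCfR
  set K2 : ℝ := β * (c * R + CfR) with hK2
  have hCfR0 : 0 ≤ CfR := by
    have := H.ha0
    rw [hCfR]; positivity
  have hdub : ∀ ξ : ℝ, ξ < ω₀ → |β * (c * u ξ - fp a (v ξ))| ≤ K2 := by
    intro ξ hξ
    obtain ⟨hv1, hu1⟩ := hb ξ (hlt ξ hξ)
    have hfb : |fp a (v ξ)| ≤ CfR := abs_fp_le H.ha0 hv1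
    have h1 : |c * u ξ - fp a (v ξ)| ≤ c * R + CfR := by
      calc |c * u ξ - fp a (v ξ)| ≤ |c * u ξ| + |fp a (v ξ)| := abs_sub _ _
        _ ≤ c * R + CfR := by
            rw [abs_mul, abs_of_pos H.hc0]
            have := mul_le_mul_of_nonneg_left hu1 H.hc0.le
            linarith
    rw [hK2, abs_mul, abs_of_pos H.hβ0]
    exact mul_le_mul_of_nonneg_left h1 H.hβ0.le
  have hvlip : ∀ x y : ℝ, x < ω₀ → y < ω₀ → |v x - v y| ≤ R * |x - y| :=
    abs_sub_le_of_deriv_bound (fun ξ hξ => H.dv (hlt ξ hξ))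
      (fun ξ hξ => (hb ξ (hlt ξ hξ)).2)
  have hulip : ∀ x y : ℝ, x < ω₀ → y < ω₀ → |u x - u y| ≤ K2 * |x - y| :=
    abs_sub_le_of_deriv_bound (fun ξ hξ => H.du (hlt ξ hξ))
      (fun ξ hξ => hdub ξ hξ)
  -- limits at ω₀ from the left
  obtain ⟨vb, hvb⟩ := exists_tendsto_of_lipschitz hR.le hvlip
  obtain ⟨ub, hub⟩ := exists_tendsto_of_lipschitz
    (by rw [hK2]; have := H.hβ0; have := H.hc0; positivity) hulip
  -- the vector field
  set Φ : ℝ × ℝ → ℝ × ℝ := fun p => (p.2, β * (c * p.2 - fp a p.1)) with hΦdef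
  have hΦsmooth : ContDiff ℝ 1 Φ := by
    apply ContDiff.prodMk
    · exact contDiff_snd
    · apply ContDiff.mul contDiff_const
      apply ContDiff.sub (contDiff_const.mul contDiff_snd)
      have : ContDiff ℝ 1 (fun p : ℝ × ℝ => p.1 * (p.1 - a) * (1 - p.1)) := by
        apply ContDiff.mul
        apply ContDiff.mul contDiff_fst (contDiff_fst.sub contDiff_const)
        exact contDiff_const.sub contDiff_fst
      simpa [fp] using this
  set x₀ : ℝ × ℝ := (vb, ub) with hx₀def
  -- local solution through (ω₀, x₀)
  obtain ⟨g, hg0, ε, hε, hgd⟩ :=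
    ContDiffAt.exists_forall_mem_closedBall_exists_eq_forall_mem_Ioo_hasDerivAt₀ (x₀ := x₀) hΦsmooth.contDiffAt ω₀
  -- Lipschitz constant near x₀
  obtain ⟨K, st, hst, hlipK⟩ := (hΦsmooth.contDiffAt).exists_lipschitzOnWith
  obtain ⟨r, hr, hball⟩ := Metric.mem_nhds_iff.1 hst
  -- choose σ
  have htend : Tendsto (fun ξ => (v ξ, u ξ)) (nhdsWithin ω₀ (Set.Iio ω₀)) (nhds x₀) :=
    hvb.prodMk_nhds hub
  have h1 : ∀ᶠ ξ in nhdsWithin ω₀ (Set.Iio ω₀), (v ξ, u ξ) ∈ Metric.ball x₀ r :=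
    htend (Metric.ball_mem_nhds x₀ hr)
  rw [Filter.eventually_iff_exists_mem] at h1
  obtain ⟨s1, hs1, hs1b⟩ := h1
  rw [mem_nhdsLT_iff_exists_Ioo_subset] at hs1
  obtain ⟨σ₁, hσ₁, hσ₁sub⟩ := hs1
  have hgcont : ContinuousAt g ω₀ :=
    (hgd ω₀ ⟨by linarith, by linarith⟩).continuousAt
  have h2 : ∀ᶠ t in nhds ω₀, g t ∈ Metric.ball x₀ r := by
    apply hgcont
    rw [hg0]
    exact Metric.ball_mem_nhds x₀ hr
  obtain ⟨δ, hδ, hδball⟩ := Metric.eventually_nhds_iff_ball.1 h2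
  set σ : ℝ := max (max σ₁ (ω₀ - ε/2)) (ω₀ - δ/2) with hσdef
  have hσω : σ < ω₀ := by
    rw [hσdef, max_lt_iff, max_lt_iff]
    exact ⟨⟨hσ₁, by linarith⟩, by linarith⟩
  have hσε : ω₀ - ε < σ := by
    rw [hσdef]
    have : ω₀ - ε/2 ≤ max σ₁ (ω₀ - ε/2) := le_max_right _ _
    have h' : max σ₁ (ω₀ - ε/2) ≤ σ := by rw [hσdef]; exact le_max_left _ _
    linarith
  have hσδ : ω₀ - δ < σ := by
    have : ω₀ - δ/2 ≤ σ := by rw [hσdef]; exact le_max_right _ _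
    linarith
  have hσ₁le : σ₁ ≤ σ := by
    have : σ₁ ≤ max σ₁ (ω₀ - ε/2) := le_max_left _ _
    have h' : max σ₁ (ω₀ - ε/2) ≤ σ := by rw [hσdef]; exact le_max_left _ _
    linarith
  -- the glued left solution
  set h : ℝ → ℝ × ℝ := fun ξ =>
    (if ξ < ω₀ then v ξ else vb, if ξ < ω₀ then u ξ else ub) with hhdef
  have hhval : ∀ ξ, ξ < ω₀ → h ξ = (v ξ, u ξ) := by
    intro ξ hξ
    simp only [hhdef, if_pos hξ]
  have hhω₀ : h ω₀ = x₀ := by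
    simp only [hhdef, lt_irrefl, if_false, hx₀def]
  -- derivative of h inside
  have hhd_in : ∀ t : ℝ, t < ω₀ → HasDerivAt h (Φ (h t)) t := by
    intro t ht
    have heq : h =ᶠ[nhds t] fun ξ => (v ξ, u ξ) := by
      filter_upwards [Iio_mem_nhds ht] with ξ hξ
      exact hhval ξ hξ
    have hder : HasDerivAt (fun ξ => (v ξ, u ξ))
        (u t, β * (c * u t - fp a (v t))) t :=
      (H.dv (hlt t ht)).prodMk (H.du (hlt t ht))
    have := hder.congr_of_eventuallyEq heq
    have hval : Φ (h t) = (u t, β * (c * u t - fp a (v t))) := by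
      rw [hhval t ht, hΦdef]
    rw [hval]
    exact this
  -- derivative of h at the endpoint
  have hhd_end : HasDerivWithinAt h (Φ x₀) (Set.Iic ω₀) ω₀ := by
    have hc1 : HasDerivWithinAt (fun ξ => if ξ < ω₀ then v ξ else vb) ub (Set.Iic ω₀) ω₀ :=
      hasDerivWithinAt_left_endpoint hσω (fun x hx => H.dv (hlt x hx.2)) hvb hub
    have hdtend : Tendsto (fun ξ => β * (c * u ξ - fp a (v ξ)))
        (nhdsWithin ω₀ (Set.Iio ω₀)) (nhds (β * (c * ub - fp a vb))) :=
      ((hub.const_mul c).sub ((continuous_fp.tendsto vb).comp hvb)).const_mul β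
    have hc2 : HasDerivWithinAt (fun ξ => if ξ < ω₀ then u ξ else ub)
        (β * (c * ub - fp a vb)) (Set.Iic ω₀) ω₀ :=
      hasDerivWithinAt_left_endpoint hσω (fun x hx => H.du (hlt x hx.2)) hub hdtend
    have := hc1.prodMk hc2
    have hval : Φ x₀ = (ub, β * (c * ub - fp a vb)) := by rw [hΦdef, hx₀def]
    rw [hval]
    exact this
  -- uniqueness of solutions on [σ, ω₀]
  have hKlip : ∀ t : ℝ, LipschitzOnWith K Φ (Metric.ball x₀ r) :=
    fun _ => hlipK.mono hball
  have hhcont : ContinuousOn h (Set.Icc σ ω₀) := by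
    intro t ht
    rcases lt_or_eq_of_le ht.2 with h' | h'
    · exact (hhd_in t h').continuousAt.continuousWithinAt
    · subst h'
      exact (hhd_end.continuousWithinAt).mono Set.Icc_subset_Iic_self
  have hhd' : ∀ t ∈ Set.Ioc σ ω₀, HasDerivWithinAt h (Φ (h t)) (Set.Iic t) t := by
    intro t ht
    rcases lt_or_eq_of_le ht.2 with h' | h'
    · exact (hhd_in t h').hasDerivWithinAt
    · subst h'
      rw [hhω₀]
      exact hhd_end
  have hhs : ∀ t ∈ Set.Ioc σ ω₀, h t ∈ Metric.ball x₀ r := by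
    intro t ht
    rcases lt_or_eq_of_le ht.2 with h' | h'
    · rw [hhval t h']
      exact hs1b _ (hσ₁sub ⟨lt_of_le_of_lt hσ₁le ht.1, h'⟩)
    · subst h'
      rw [hhω₀]
      exact Metric.mem_ball_self hr
  have hgmem : ∀ t ∈ Set.Icc σ ω₀, t ∈ Set.Ioo (ω₀ - ε) (ω₀ + ε) := by
    intro t ht
    exact ⟨lt_of_lt_of_le hσε ht.1, by linarith [ht.2]⟩
  have hgc : ContinuousOn g (Set.Icc σ ω₀) :=
    fun t ht => ((hgd t (hgmem t ht)).continuousAt).continuousWithinAt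
  have hgd' : ∀ t ∈ Set.Ioc σ ω₀, HasDerivWithinAt g (Φ (g t)) (Set.Iic t) t :=
    fun t ht => (hgd t (hgmem t ⟨ht.1.le, ht.2⟩)).hasDerivWithinAt
  have hgs : ∀ t ∈ Set.Ioc σ ω₀, g t ∈ Metric.ball x₀ r := by
    intro t ht
    apply hδball
    rw [Metric.mem_ball, Real.dist_eq, abs_lt]
    constructor <;> [linarith [ht.2, hσδ, ht.1]; linarith [ht.2, hσδ, ht.1]]
  have heqend : h ω₀ = g ω₀ := by rw [hhω₀, hg0]
  have huniq : Set.EqOn h g (Set.Icc σ ω₀) :=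
    ODE_solution_unique_of_mem_Icc_left (fun t _ => hKlip t) hhcont hhd' hhs hgc hgd' hgs heqend
  -- define the extension
  set vext : ℝ → ℝ := fun ξ => if ξ < ω₀ then v ξ else (g ξ).1 with hvext
  set uext : ℝ → ℝ := fun ξ => if ξ < ω₀ then u ξ else (g ξ).2 with huext
  have hvgeq : ∀ ζ, σ < ζ → ζ < ω₀ + ε → vext ζ = (g ζ).1 ∧ uext ζ = (g ζ).2 := by
    intro ζ hζ1 hζ2
    by_cases hζ : ζ < ω₀
    · have := huniq ⟨hζ1.le, hζ.le⟩
      have hhe : h ζ = (v ζ, u ζ) := hhval ζ hζ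
      rw [hhe] at this
      constructor
      · simp only [hvext, if_pos hζ, ← this]
      · simp only [huext, if_pos hζ, ← this]
    · constructor
      · simp only [hvext, if_neg hζ]
      · simp only [huext, if_neg hζ]
  -- the extension is a solution beyond ω₀
  have hsol' : IsPlanarSol a β c vext uext ((ω₀ + ε : ℝ) : EReal) := by
    intro ξ hξ
    have hξR : ξ < ω₀ + ε := by exact_mod_cast hξ
    by_cases hcase : ξ < ω₀
    · have heqv : vext =ᶠ[nhds ξ] v := by
        filter_upwards [Iio_mem_nhds hcase] with ζ hζ
        simp only [hvext]
        exact if_pos hζ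
      have hequ : uext =ᶠ[nhds ξ] u := by
        filter_upwards [Iio_mem_nhds hcase] with ζ hζ
        simp only [huext]
        exact if_pos hζ
      have hvv : vext ξ = v ξ := by simp only [hvext, if_pos hcase]
      have huu : uext ξ = u ξ := by simp only [huext, if_pos hcase]
      constructor
      · rw [huu]
        exact (H.dv (hlt ξ hcase)).congr_of_eventuallyEq heqv
      · rw [huu, hvv]
        exact ((H.sol ξ (hlt ξ hcase)).2).congr_of_eventuallyEq hequ
    · push_neg at hcase
      have hmem : ξ ∈ Set.Ioo (ω₀ - ε) (ω₀ + ε) := ⟨by linarith, hξR⟩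
      have hgder := hgd ξ hmem
      have heqv : vext =ᶠ[nhds ξ] fun ζ => (g ζ).1 := by
        filter_upwards [Ioo_mem_nhds (lt_of_lt_of_le hσω hcase) hξR] with ζ hζ
        exact (hvgeq ζ hζ.1 hζ.2).1
      have hequ : uext =ᶠ[nhds ξ] fun ζ => (g ζ).2 := by
        filter_upwards [Ioo_mem_nhds (lt_of_lt_of_le hσω hcase) hξR] with ζ hζ
        exact (hvgeq ζ hζ.1 hζ.2).2
      have hvv : vext ξ = (g ξ).1 := by simp only [hvext, if_neg (not_lt.2 hcase)]
      have huu : uext ξ = (g ξ).2 := by simp only [huext, if_neg (not_lt.2 hcase)]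
      have hg1 : HasDerivAt (fun ζ => (g ζ).1) (Φ (g ξ)).1 ξ :=
        ((ContinuousLinearMap.fst ℝ ℝ ℝ).hasFDerivAt.comp_hasDerivAt ξ hgder)
      have hg2 : HasDerivAt (fun ζ => (g ζ).2) (Φ (g ξ)).2 ξ :=
        ((ContinuousLinearMap.snd ℝ ℝ ℝ).hasFDerivAt.comp_hasDerivAt ξ hgder)
      constructor
      · rw [huu]
        have : (Φ (g ξ)).1 = (g ξ).2 := by rw [hΦdef]
        rw [← this]
        exact hg1.congr_of_eventuallyEq heqv
      · rw [huu, hvv]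
        have : (Φ (g ξ)).2 = β * (c * (g ξ).2 - (g ξ).1 * ((g ξ).1 - a) * (1 - (g ξ).1)) := by
          simp only [hΦdef, fp]
        rw [← this]
        exact hg2.congr_of_eventuallyEq hequ
  -- agreement with (v, u) below ω
  have hagree : ∀ ξ : ℝ, (ξ : EReal) < ω → vext ξ = v ξ ∧ uext ξ = u ξ := by
    intro ξ hξ
    have hξω₀ : ξ < ω₀ := by
      rw [← hω0] at hξ
      exact_mod_cast hξ
    exact ⟨by simp only [hvext, if_pos hξω₀], by simp only [huext, if_pos hξω₀]⟩
  have := H.hmax vext uext _ hsol' hagree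
  rw [← hω0] at this
  have : ω₀ + ε ≤ ω₀ := by exact_mod_cast this
  linarith

end Good
namespace Good

open Set Topology Filter

variable {a c β : ℝ} {v u : ℝ → ℝ} {ω : EReal} (H : Good a c β v u ω)

include H

/-- If `ω = ⊤` then `u` cannot stay positive forever. -/
lemma no_global_pos (hT : ω = ⊤) (hpos : ∀ ξ : ℝ, 0 < u ξ) : False := by
  have hall : ∀ ξ : ℝ, (ξ : EReal) < ω := by
    intro ξ; rw [hT]; exact EReal.coe_lt_top ξ
  have hkb : ∀ ξ : ℝ, v ξ < 1 ∧ u ξ < 4 ∧ En a β v u ξ ≤ 4*β*c :=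
    fun ξ => H.key_bound (hall ξ) (fun η _ => (hpos η).le)
  have grow : ∀ d s t : ℝ, s ≤ t → (∀ x, s ≤ x → x ≤ t → d ≤ u x) →
      v s + d*(t-s) ≤ v t := by
    intro d s t hst hd
    have := le_of_deriv_nonneg_Icc (g := fun z => v z - d*z) (g' := fun z => u z - d) hst
      (fun x hx => ((H.dv (hall x)).sub ((hasDerivAt_id x).const_mul d)).congr_deriv (by ring))
      (fun x hx => by linarith [hd x hx.1.le hx.2.le])
    linarith
  by_cases hF : ∃ ξF, 0 < Fp a (v ξF)
  · obtain ⟨ξF, hξF⟩ := hF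
    set η₀ : ℝ := -(Fp a a) with hη₀def
    have hη₀pos : 0 < η₀ := by rw [hη₀def]; linarith [Fp_a_neg H.ha0 H.ha1]
    have hvmono : ∀ s t : ℝ, s ≤ t → v s ≤ v t := fun s t hst =>
      le_of_deriv_nonneg_Icc hst (fun x _ => H.dv (hall x)) (fun x _ => (hpos x).le)
    have hvF1 : v ξF < 1 := (hkb ξF).1
    have hpa : a + η₀ ≤ v ξF := by
      by_contra hcon
      push_neg at hcon
      rcases le_or_gt (v ξF) a with h | h
      · linarith [Fp_nonpos H.ha0 H.ha1 h]
      · have := Fp_diff_le H.ha0 (x := a) (y := v ξF) H.ha0.le h.le hvF1.le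
        rw [hη₀def] at hcon
        linarith
    set F1 : ℝ := (1-2*a)/12 with hF1def
    have hF1pos : 0 < F1 := by rw [hF1def]; linarith [H.ha1]
    set μ₀ : ℝ := a * η₀ * (F1/2) with hμ₀def
    have hμ₀eq : μ₀ = a * (-Fp a a) * ((1-2*a)/12) / 2 := by
      rw [hμ₀def, hη₀def, hF1def]; ring
    have hμ₀pos : 0 < μ₀ := by
      rw [hμ₀def]
      have := H.ha0
      positivity
    have hfv : ∀ ξ, ξF ≤ ξ → μ₀ ≤ fp a (v ξ) := by
      intro ξ hξ
      have h1 : a + η₀ ≤ v ξ := le_trans hpa (hvmono ξF ξ hξ)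
      have h2 : v ξ < 1 := (hkb ξ).1
      have hE := (hkb ξ).2.2
      have hEnξ : En a β v u ξ = (u ξ)^2/2 + β * Fp a (v ξ) := rfl
      have hFv : β * Fp a (v ξ) ≤ En a β v u ξ := by
        have : (0:ℝ) ≤ (u ξ)^2/2 := by positivity
        linarith
      have hFvc : Fp a (v ξ) ≤ 4*c := by nlinarith [H.hβ1, H.hβ0, H.hc0]
      have h0v : 0 ≤ v ξ := H.v_lower (hall ξ) (fun η _ => (hpos η).le)
      have hdiff := Fp_diff_le H.ha0 (x := v ξ) (y := 1) h0v h2.le le_rfl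
      rw [Fp_one] at hdiff
      have hc4 : 4*c ≤ F1/2 := by rw [hF1def]; linarith [H.hc2, H.ha1]
      have h3 : F1/2 ≤ 1 - v ξ := by
        rw [hF1def] at *; linarith
      have k1 : a ≤ v ξ := by linarith
      have k2 : η₀ ≤ v ξ - a := by linarith
      have hA : a * η₀ ≤ v ξ * (v ξ - a) :=
        mul_le_mul k1 k2 hη₀pos.le (by linarith [H.ha0])
      have hB : a * η₀ * (F1/2) ≤ v ξ * (v ξ - a) * (1 - v ξ) :=
        mul_le_mul hA h3 (by positivity) (mul_nonneg (by linarith [H.ha0]) (by linarith))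
      rw [hμ₀def, fp]
      exact hB
    set ρ : ℝ := μ₀ - 4*c with hρdef
    have hρpos : 0 < ρ := by
      rw [hρdef]
      have := H.hc3
      rw [← hμ₀eq] at this
      linarith
    have hdub : ∀ ξ, ξF ≤ ξ → u ξ ≤ u ξF - ρ*(ξ - ξF) := by
      intro ξ hξ
      have := le_of_deriv_nonpos_Icc (g := fun z => u z + ρ*z)
        (g' := fun z => β*(c*u z - fp a (v z)) + ρ) hξ
        (fun x _ => ((H.du (hall x)).add ((hasDerivAt_id x).const_mul ρ)).congr_deriv (by ring))
        (fun x hx => by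
          have h1 := hfv x hx.1.le
          have h2 : u x < 4 := (hkb x).2.1
          have h3 : 0 < u x := hpos x
          have h4 : c * u x - fp a (v x) ≤ 4*c - μ₀ := by nlinarith [H.hc0]
          have h5 : β*(c*u x - fp a (v x)) ≤ β*(4*c - μ₀) :=
            mul_le_mul_of_nonneg_left h4 H.hβ0.le
          have h6 : β*(4*c - μ₀) ≤ 1*(4*c - μ₀) :=
            mul_le_mul_of_nonpos_right H.hβ1 (by linarith)
          linarith)
      linarith
    have hξpos : ξF ≤ ξF + (u ξF + 1)/ρ := by
      have h0 : 0 ≤ (u ξF + 1)/ρ := div_nonneg (by linarith [hpos ξF]) hρpos.le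
      linarith
    have hfin := hdub _ hξpos
    have hval : ρ * ((ξF + (u ξF + 1)/ρ) - ξF) = u ξF + 1 := by
      rw [add_sub_cancel_left, mul_comm, div_mul_cancel₀ _ hρpos.ne']
    have hcontra := hpos (ξF + (u ξF + 1)/ρ)
    linarith [hfin]
  · push_neg at hF
    set d : ℝ := Real.sqrt (2 * En a β v u 0) with hddef
    have hE0 : 0 < En a β v u 0 := H.E_pos (hall 0)
    have hdpos : 0 < d := Real.sqrt_pos.2 (by linarith)
    have hdle : ∀ ξ, 0 ≤ ξ → d ≤ u ξ := by
      intro ξ hξ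
      have hEξ : En a β v u 0 ≤ En a β v u ξ := H.E_mono hξ (hall ξ)
      have hFξ : Fp a (v ξ) ≤ 0 := hF ξ
      have hEnξ : En a β v u ξ = (u ξ)^2/2 + β * Fp a (v ξ) := rfl
      have hu2 : 2 * En a β v u 0 ≤ (u ξ)^2 := by nlinarith [H.hβ0]
      calc d = Real.sqrt (2*En a β v u 0) := rfl
        _ ≤ Real.sqrt ((u ξ)^2) := Real.sqrt_le_sqrt hu2
        _ = |u ξ| := Real.sqrt_sq_eq_abs _
        _ = u ξ := abs_of_pos (hpos ξ)
    set t : ℝ := (1 - v 0)/d + 1 with htdef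
    have hv01 : v 0 < 1 := (hkb 0).1
    have ht0 : 0 ≤ t := by
      rw [htdef]
      have h0 : 0 ≤ (1 - v 0)/d := div_nonneg (by linarith) hdpos.le
      linarith
    have hgrow := grow d 0 t ht0 (fun x hx _ => hdle x hx)
    have heq : v 0 + d * t = 1 + d := by
      rw [htdef]
      field_simp
      ring
    have hvt : v t < 1 := (hkb t).1
    linarith [hgrow]

/-- The first zero of `u`. -/
lemma exists_ustar : ∃ ξs : ℝ, (ξs : EReal) < ω ∧ u ξs = 0 ∧ (∀ ξ, ξ < ξs → 0 < u ξ) ∧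
    a < v ξs ∧ v ξs < 1 ∧ En a β v u ξs = β * Fp a (v ξs) ∧ En a β v u ξs ≤ 4*β*c := by
  have hex : ∃ ξ1 : ℝ, (ξ1 : EReal) < ω ∧ u ξ1 ≤ 0 := by
    by_contra hcon
    push_neg at hcon
    by_cases hT : ω = ⊤
    · exact H.no_global_pos hT (fun ξ => hcon ξ (by rw [hT]; exact EReal.coe_lt_top ξ))
    · apply H.ext_contra hT (R := 4) (by norm_num)
      intro ξ hξ
      have hist : ∀ η, η ≤ ξ → 0 ≤ u η := fun η hη => (hcon η (lt_om hη hξ)).le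
      obtain ⟨h1, h2, _⟩ := H.key_bound hξ hist
      have h0v := H.v_lower hξ hist
      have h0u : 0 < u ξ := hcon ξ hξ
      constructor
      · rw [abs_le]; constructor <;> linarith
      · rw [abs_le]; constructor <;> linarith
  obtain ⟨ξ1, hξ1ω, hξ1⟩ := hex
  obtain ⟨M, hM⟩ := H.hupos
  set S : Set ℝ := {ξ | (ξ : EReal) < ω ∧ u ξ ≤ 0} with hSdef
  have hSne : S.Nonempty := ⟨ξ1, hξ1ω, hξ1⟩
  have hSbdd : BddBelow S := ⟨M, fun ξ hξ => by
    by_contra hc; push_neg at hc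
    exact absurd hξ.2 (not_le.2 (hM ξ hc))⟩
  set ξs := sInf S with hξsdef
  have hξsω : (ξs : EReal) < ω := lt_om (csInf_le hSbdd ⟨hξ1ω, hξ1⟩) hξ1ω
  have hbefore : ∀ ξ, ξ < ξs → 0 < u ξ := by
    intro ξ hξ
    rcases lt_or_ge ξ M with h | h
    · exact hM ξ h
    · by_contra hc; push_neg at hc
      exact absurd (csInf_le hSbdd ⟨lt_om hξ.le hξsω, hc⟩) (not_le.2 hξ)
  have hucont : ContinuousAt u ξs := (H.du hξsω).continuousAt
  have hge : 0 ≤ u ξs := by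
    apply ge_of_tendsto (hucont.tendsto.mono_left nhdsWithin_le_nhds :
      Tendsto u (nhdsWithin ξs (Set.Iio ξs)) (nhds (u ξs)))
    filter_upwards [self_mem_nhdsWithin] with η hη
    exact (hbefore η hη).le
  have hle : u ξs ≤ 0 := by
    by_contra hc
    push_neg at hc
    have e1 : u ⁻¹' (Set.Ioi 0) ∈ nhds ξs := hucont (Ioi_mem_nhds hc)
    obtain ⟨δ, hδ, hball⟩ := Metric.mem_nhds_iff.1 e1
    obtain ⟨η', hη'S, hη'lt⟩ := Real.lt_sInf_add_pos hSne hδ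
    have hη'ge : ξs ≤ η' := csInf_le hSbdd hη'S
    have hmem : η' ∈ Metric.ball ξs δ := by
      rw [Metric.mem_ball, Real.dist_eq, abs_lt]
      constructor <;> linarith
    exact absurd hη'S.2 (not_le.2 (hball hmem))
  have hu0s : u ξs = 0 := le_antisymm hle hge
  have hist : ∀ η, η ≤ ξs → 0 ≤ u η := fun η hη => by
    rcases lt_or_eq_of_le hη with h | h
    · exact (hbefore η h).le
    · rw [h, hu0s]
  obtain ⟨hv1, hu4, hE4⟩ := H.key_bound hξsω hist
  have hEeq : En a β v u ξs = β * Fp a (v ξs) := by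
    have h' : En a β v u ξs = (u ξs)^2/2 + β * Fp a (v ξs) := rfl
    rw [h', hu0s]
    norm_num
  have hEpos := H.E_pos hξsω
  have hFpos : 0 < Fp a (v ξs) := by nlinarith [H.hβ0]
  have hva : a < v ξs := by
    by_contra hc
    push_neg at hc
    linarith [Fp_nonpos H.ha0 H.ha1 hc]
  exact ⟨ξs, hξsω, hu0s, hbefore, hva, hv1, hEeq, hE4⟩

end Good
namespace Good

open Set Topology Filter

variable {a c β : ℝ} {v u : ℝ → ℝ} {ω : EReal} (H : Good a c β v u ω)

include H

/-- After the first zero of `u`, `u` stays negative. -/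
lemma u_neg {ξs : ℝ} (hξsω : (ξs : EReal) < ω) (hu0s : u ξs = 0)
    (hbefore : ∀ ξ, ξ < ξs → 0 < u ξ) (hva : a < v ξs) (hv1 : v ξs < 1) :
    ∀ ξ, ξs < ξ → (ξ : EReal) < ω → u ξ < 0 := by
  have hψcont : ∀ η : ℝ, (η : EReal) < ω →
      ContinuousAt (fun η => β*(c*u η - fp a (v η))) η := fun η hη =>
    continuousAt_const.mul ((continuousAt_const.mul (H.du hη).continuousAt).sub
      ((continuous_fp.continuousAt).comp (H.dv hη).continuousAt))
  have hψ0 : β*(c*u ξs - fp a (v ξs)) < 0 := by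
    rw [hu0s]
    have := fp_pos H.ha0 hva hv1
    have := H.hβ0
    nlinarith
  have hev : ∀ᶠ η in nhds ξs, β*(c*u η - fp a (v η)) < 0 :=
    (hψcont ξs hξsω) (Iio_mem_nhds hψ0)
  obtain ⟨ε1, hε1, hball⟩ := Metric.eventually_nhds_iff_ball.1 hev
  intro ξ hξs hξω
  by_contra hcon
  push_neg at hcon
  -- local negativity on (ξs, ξs + ε2]
  set ε2 : ℝ := (min ε1 (ξ - ξs))/2 with hε2def
  have hε2pos : 0 < ε2 := by
    rw [hε2def]
    have h1 : 0 < min ε1 (ξ - ξs) := lt_min hε1 (by linarith)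
    linarith
  have hε2a : ε2 < ε1 := by
    rw [hε2def]
    have := min_le_left ε1 (ξ - ξs)
    linarith
  have hε2b : ξs + ε2 < ξ := by
    rw [hε2def]
    have := min_le_right ε1 (ξ - ξs)
    linarith
  have hloc : ∀ η, ξs < η → η ≤ ξs + ε2 → u η < 0 := by
    intro η hη1 hη2
    have hder : ∀ x ∈ Set.Icc ξs η, HasDerivAt u (β*(c*u x - fp a (v x))) x :=
      fun x hx => H.du (lt_om (by linarith [hx.2, hε2b]) hξω)
    have := lt_of_deriv_neg_Icc hη1 hder (fun x hx => by
      apply hball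
      rw [Metric.mem_ball, Real.dist_eq, abs_lt]
      constructor <;> [linarith [hx.1]; linarith [hx.2]])
    rw [hu0s] at this
    exact this
  -- first return to zero
  set S2 : Set ℝ := {η | ξs < η ∧ (η : EReal) < ω ∧ 0 ≤ u η} with hS2def
  have hS2ne : S2.Nonempty := ⟨ξ, hξs, hξω, hcon⟩
  have hS2bdd : BddBelow S2 := ⟨ξs, fun η hη => hη.1.le⟩
  set ξ₂ := sInf S2 with hξ₂def
  have hξ₂le : ξ₂ ≤ ξ := csInf_le hS2bdd ⟨hξs, hξω, hcon⟩
  have hξ₂ω : (ξ₂ : EReal) < ω := lt_om hξ₂le hξω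
  have hξ₂ge : ξs + ε2 ≤ ξ₂ := le_csInf hS2ne (fun η hη => by
    by_contra hc
    push_neg at hc
    exact absurd hη.2.2 (not_le.2 (hloc η hη.1 hc.le)))
  have hξsξ₂ : ξs < ξ₂ := by linarith
  have hneg2 : ∀ η, ξs < η → η < ξ₂ → u η < 0 := by
    intro η hη1 hη2
    by_contra hc
    push_neg at hc
    exact absurd (csInf_le hS2bdd ⟨hη1, lt_om hη2.le hξ₂ω, hc⟩) (not_le.2 hη2)
  have hucont₂ : ContinuousAt u ξ₂ := (H.du hξ₂ω).continuousAt
  have hle2 : u ξ₂ ≤ 0 := by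
    apply le_of_tendsto (hucont₂.tendsto.mono_left nhdsWithin_le_nhds :
      Tendsto u (nhdsWithin ξ₂ (Set.Iio ξ₂)) (nhds (u ξ₂)))
    filter_upwards [Ioo_mem_nhdsLT hξsξ₂] with η hη
    exact (hneg2 η hη.1 hη.2).le
  have hge2 : 0 ≤ u ξ₂ := by
    by_contra hc
    push_neg at hc
    have e1 : u ⁻¹' (Set.Iio 0) ∈ nhds ξ₂ := hucont₂ (Iio_mem_nhds hc)
    obtain ⟨δ, hδ, hball'⟩ := Metric.mem_nhds_iff.1 e1
    obtain ⟨η', hη'S, hη'lt⟩ := Real.lt_sInf_add_pos hS2ne hδ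
    have hη'ge : ξ₂ ≤ η' := csInf_le hS2bdd hη'S
    have hmem : η' ∈ Metric.ball ξ₂ δ := by
      rw [Metric.mem_ball, Real.dist_eq, abs_lt]
      constructor <;> linarith
    exact absurd hη'S.2.2 (not_le.2 (hball' hmem))
  have hu₂0 : u ξ₂ = 0 := le_antisymm hle2 hge2
  -- v ξ₂ ∈ (a, 1)
  have hv₂le : v ξ₂ ≤ v ξs :=
    le_of_deriv_nonpos_Icc hξsξ₂.le (fun x hx => H.dv (lt_om hx.2 hξ₂ω))
      (fun x hx => (hneg2 x hx.1 hx.2).le)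
  have hE₂ : En a β v u ξ₂ = β * Fp a (v ξ₂) := by
    have h' : En a β v u ξ₂ = (u ξ₂)^2/2 + β * Fp a (v ξ₂) := rfl
    rw [h', hu₂0]
    norm_num
  have hE₂pos : 0 < En a β v u ξ₂ := H.E_pos hξ₂ω
  have hF₂pos : 0 < Fp a (v ξ₂) := by nlinarith [H.hβ0]
  have hv₂a : a < v ξ₂ := by
    by_contra hc
    push_neg at hc
    linarith [Fp_nonpos H.ha0 H.ha1 hc]
  -- derivative at ξ₂ is negative
  have hder₂ := H.du hξ₂ω
  have hD : β*(c*u ξ₂ - fp a (v ξ₂)) < 0 := by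
    rw [hu₂0]
    have := fp_pos H.ha0 hv₂a (lt_of_le_of_lt hv₂le hv1)
    have := H.hβ0
    nlinarith
  -- but the slope from the left is nonnegative
  have hslope : Tendsto (slope u ξ₂) (nhdsWithin ξ₂ (Set.Iio ξ₂))
      (nhds (β*(c*u ξ₂ - fp a (v ξ₂)))) :=
    (hasDerivAt_iff_tendsto_slope.1 hder₂).mono_left
      (nhdsWithin_mono ξ₂ (fun y hy => ne_of_lt hy))
  have hD0 : 0 ≤ β*(c*u ξ₂ - fp a (v ξ₂)) := by
    apply ge_of_tendsto hslope
    filter_upwards [Ioo_mem_nhdsLT hξsξ₂] with η hη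
    rw [slope_def_field, hu₂0, sub_zero]
    exact (div_pos_of_neg_of_neg (hneg2 η hη.1 hη.2) (by linarith [hη.2])).le
  linarith

/-- `v` is decreasing after `ξs`. -/
lemma v_anti {ξs : ℝ} (hξsω : (ξs : EReal) < ω) (hu0s : u ξs = 0)
    (hbefore : ∀ ξ, ξ < ξs → 0 < u ξ) (hva : a < v ξs) (hv1 : v ξs < 1) :
    ∀ s t : ℝ, ξs ≤ s → s ≤ t → (t : EReal) < ω → v t ≤ v s := by
  intro s t hs hst htω
  exact le_of_deriv_nonpos_Icc hst (fun x hx => H.dv (lt_om hx.2 htω))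
    (fun x hx => (H.u_neg hξsω hu0s hbefore hva hv1 x
      (lt_of_le_of_lt hs hx.1) (lt_om hx.2.le htω)).le)

end Good
namespace Good

open Set Topology Filter

variable {a c β : ℝ} {v u : ℝ → ℝ} {ω : EReal} (H : Good a c β v u ω)

include H

lemma conclusion :
    Tendsto v (approachFromLeft ω) atBot ∧ Tendsto u (approachFromLeft ω) atBot := by
  obtain ⟨ξs, hξsω, hu0s, hbefore, hva, hv1, hEeq, hE4⟩ := H.exists_ustar
  have huneg := H.u_neg hξsω hu0s hbefore hva hv1
  have hvanti := H.v_anti hξsω hu0s hbefore hva hv1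
  have hβc : 0 < β * c := mul_pos H.hβ0 H.hc0
  -- pick ξ₄ ∈ (ξs, ω)
  have hξ₄ex : ∃ ξ₄ : ℝ, ξs < ξ₄ ∧ (ξ₄ : EReal) < ω := by
    by_cases hT : ω = ⊤
    · exact ⟨ξs + 1, by linarith, by rw [hT]; exact EReal.coe_lt_top _⟩
    · have hBne : ω ≠ ⊥ := (lt_of_le_of_lt bot_le H.hω).ne'
      have hω0 : ((ω.toReal : ℝ) : EReal) = ω := EReal.coe_toReal hT hBne
      have hξsr : ξs < ω.toReal := by
        rw [← hω0] at hξsω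
        exact_mod_cast hξsω
      refine ⟨(ξs + ω.toReal)/2, by linarith, ?_⟩
      rw [← hω0]
      exact_mod_cast (by linarith : (ξs + ω.toReal)/2 < ω.toReal)
  obtain ⟨ξ₄, hξ₄s, hξ₄ω⟩ := hξ₄ex
  -- energy gap and the resulting uniform bound u ≤ -δ₀ after ξ₄
  have hE₄gt : En a β v u ξs < En a β v u ξ₄ := by
    apply lt_of_deriv_pos_Icc hξ₄s (fun x hx => H.dE (lt_om hx.2 hξ₄ω))
    intro x hx
    have hux : u x < 0 := huneg x hx.1 (lt_om hx.2.le hξ₄ω)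
    have h2 : (0:ℝ) < (u x)^2 := by nlinarith
    exact mul_pos hβc h2
  set δ₀ : ℝ := Real.sqrt (2*(En a β v u ξ₄ - En a β v u ξs)) with hδ₀def
  have hδ₀pos : 0 < δ₀ := Real.sqrt_pos.2 (by linarith)
  have hδ₀ : ∀ ξ, ξ₄ ≤ ξ → (ξ : EReal) < ω → u ξ ≤ -δ₀ := by
    intro ξ hξ hξω'
    have huξ : u ξ < 0 := huneg ξ (by linarith) hξω'
    have hEξ : En a β v u ξ₄ ≤ En a β v u ξ := H.E_mono hξ hξω'
    have hvξ : v ξ ≤ v ξs := hvanti ξs ξ le_rfl (by linarith) hξω'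
    have hFle : β * Fp a (v ξ) ≤ En a β v u ξs := by
      rcases le_or_gt (v ξ) a with h | h
      · have h1 := Fp_nonpos H.ha0 H.ha1 h
        have hEs : 0 < En a β v u ξs := H.E_pos hξsω
        nlinarith [H.hβ0]
      · have h1 := Fp_mono H.ha0 h.le hvξ hv1.le
        rw [hEeq]
        nlinarith [H.hβ0]
    have hu2 : 2*(En a β v u ξ₄ - En a β v u ξs) ≤ (u ξ)^2 := by
      have hEnξ : En a β v u ξ = (u ξ)^2/2 + β*Fp a (v ξ) := rfl
      linarith
    have h1 : δ₀ ≤ Real.sqrt ((u ξ)^2) := Real.sqrt_le_sqrt hu2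
    rw [Real.sqrt_sq_eq_abs, abs_of_neg huξ] at h1
    linarith
  -- escape of v below any level, after any time
  have hescape : ∀ L ζ : ℝ, (ζ : EReal) < ω → ξ₄ ≤ ζ →
      ∃ ξ : ℝ, (ξ : EReal) < ω ∧ ζ ≤ ξ ∧ v ξ < L := by
    intro L ζ hζω hζ₄
    by_cases hT : ω = ⊤
    · have hall : ∀ ξ : ℝ, (ξ : EReal) < ω := fun ξ => by
        rw [hT]; exact EReal.coe_lt_top ξ
      set t : ℝ := max ζ (ξ₄ + (v ξ₄ - L + 1)/δ₀) with htdef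
      refine ⟨t, hall t, le_max_left _ _, ?_⟩
      have ht₄ : ξ₄ ≤ t := le_trans hζ₄ (le_max_left _ _)
      have hdec : v t ≤ v ξ₄ - δ₀*(t - ξ₄) := by
        have := le_of_deriv_nonpos_Icc (g := fun z => v z + δ₀*z)
          (g' := fun z => u z + δ₀) ht₄
          (fun x hx => ((H.dv (hall x)).add
            ((hasDerivAt_id x).const_mul δ₀)).congr_deriv (by ring))
          (fun x hx => by linarith [hδ₀ x hx.1.le (hall x)])
        linarith
      have hbig : ξ₄ + (v ξ₄ - L + 1)/δ₀ ≤ t := le_max_right _ _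
      have h2 : (v ξ₄ - L + 1)/δ₀ ≤ t - ξ₄ := by linarith
      have h3 : v ξ₄ - L + 1 ≤ δ₀*(t - ξ₄) := by
        calc v ξ₄ - L + 1 = δ₀ * ((v ξ₄ - L + 1)/δ₀) := by
              field_simp
          _ ≤ δ₀*(t - ξ₄) := mul_le_mul_of_nonneg_left h2 hδ₀pos.le
      linarith
    · -- finite right endpoint: boundedness would contradict maximality
      by_contra hcon
      push_neg at hcon
      have hBne : ω ≠ ⊥ := (lt_of_le_of_lt bot_le H.hω).ne'
      set ω₀ : ℝ := ω.toReal with hω₀def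
      have hω0 : ((ω₀ : ℝ) : EReal) = ω := EReal.coe_toReal hT hBne
      have hltω : ∀ ξ : ℝ, ξ < ω₀ → (ξ : EReal) < ω := by
        intro ξ hξ
        rw [← hω0]
        exact_mod_cast hξ
      have hltω' : ∀ ξ : ℝ, (ξ : EReal) < ω → ξ < ω₀ := by
        intro ξ hξ
        rw [← hω0] at hξ
        exact_mod_cast hξ
      have hζr : ζ < ω₀ := hltω' ζ hζω
      -- lower bound for v on [ζ, ω₀)
      have hvlow : ∀ ξ : ℝ, (ξ : EReal) < ω → ζ ≤ ξ → L ≤ v ξ := hcon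
      -- upper bound for |v| on [ζ, ω₀)
      set RL : ℝ := max (|L|) 1 with hRLdef
      have hRL1 : (1:ℝ) ≤ RL := le_max_right _ _
      have hvRL : ∀ ξ : ℝ, (ξ : EReal) < ω → ζ ≤ ξ → |v ξ| ≤ RL := by
        intro ξ h1 h2
        have hlo := hvlow ξ h1 h2
        have hhi : v ξ ≤ v ξs := hvanti ξs ξ le_rfl (by linarith) h1
        rw [abs_le]
        constructor
        · calc -RL ≤ -|L| := by simp [hRLdef]
            _ ≤ L := neg_abs_le L
            _ ≤ v ξ := hlo
        · calc v ξ ≤ v ξs := hhi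
            _ ≤ 1 := hv1.le
            _ ≤ RL := hRL1
      -- bound for fp along the orbit there
      set CL : ℝ := RL * (RL + a) * (1 + RL) with hCLdef
      have hCL0 : 0 < CL := by
        rw [hCLdef]
        have h1 : (0:ℝ) < RL := lt_of_lt_of_le one_pos hRL1
        have := H.ha0
        positivity
      have hfpb : ∀ ξ : ℝ, (ξ : EReal) < ω → ζ ≤ ξ → fp a (v ξ) ≤ CL := by
        intro ξ h1 h2
        exact le_of_abs_le (abs_fp_le H.ha0 (hvRL ξ h1 h2))
      -- exponential lower bound for u on [ζ, ω₀)
      set P : ℝ := CL / c with hPdef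
      have hP0 : 0 < P := div_pos hCL0 H.hc0
      set Emax : ℝ := Real.exp (β*c*(ω₀ - ζ)) with hEmaxdef
      have hEmax1 : 1 ≤ Emax := by
        rw [hEmaxdef]
        apply Real.one_le_exp
        exact mul_nonneg hβc.le (by linarith)
      set U : ℝ := P + |u ζ - P| * Emax with hUdef
      have hU0 : 0 < U := by
        rw [hUdef]
        have := abs_nonneg (u ζ - P)
        nlinarith
      have hulow : ∀ ξ : ℝ, (ξ : EReal) < ω → ζ ≤ ξ → -U ≤ u ξ := by
        intro ξ h1 h2
        have hder : ∀ x : ℝ, (x : EReal) < ω →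
            HasDerivAt (fun z => (u z - P) * Real.exp (-(β*c)*z))
              ((β*(c*u x - fp a (v x))) * Real.exp (-(β*c)*x) +
                (u x - P) * (Real.exp (-(β*c)*x) * -(β*c))) x := by
          intro x hx'
          have hid : HasDerivAt (fun z : ℝ => -(β*c)*z) (-(β*c)) x :=
            ((hasDerivAt_id x).const_mul (-(β*c))).congr_deriv (mul_one _)
          exact ((H.du hx').sub_const P).mul hid.exp
        have hGmono : (u ζ - P) * Real.exp (-(β*c)*ζ) ≤ (u ξ - P) * Real.exp (-(β*c)*ξ) := by
          apply le_of_deriv_nonneg_Icc h2 (fun x hx => hder x (lt_om hx.2 h1))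
          intro x hx
          have hx' : (x : EReal) < ω := lt_om hx.2.le h1
          have hfx : fp a (v x) ≤ CL := hfpb x hx' hx.1.le
          have hexp : (0:ℝ) < Real.exp (-(β*c)*x) := Real.exp_pos _
          have heq : (β*(c*u x - fp a (v x))) * Real.exp (-(β*c)*x) +
              (u x - P) * (Real.exp (-(β*c)*x) * -(β*c)) =
              Real.exp (-(β*c)*x) * (β * (CL - fp a (v x))) := by
            rw [hPdef]
            have hcne : c ≠ 0 := H.hc0.ne'
            field_simp
            ring
          rw [heq]
          exact mul_nonneg hexp.le (mul_nonneg H.hβ0.le (by linarith))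
        have hE2 : (0:ℝ) < Real.exp (-(β*c)*ξ) := Real.exp_pos _
        have hqE : Real.exp (-(β*c)*ζ) = Real.exp (β*c*(ξ - ζ)) * Real.exp (-(β*c)*ξ) := by
          rw [← Real.exp_add]
          congr 1
          ring
        rw [hqE, ← mul_assoc] at hGmono
        have hkey : (u ζ - P) * Real.exp (β*c*(ξ - ζ)) ≤ u ξ - P :=
          le_of_mul_le_mul_right hGmono hE2
        have hqle : Real.exp (β*c*(ξ - ζ)) ≤ Emax := by
          rw [hEmaxdef]
          apply Real.exp_le_exp.2
          have hξr : ξ < ω₀ := hltω' ξ h1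
          have : ξ - ζ ≤ ω₀ - ζ := by linarith
          exact mul_le_mul_of_nonneg_left this hβc.le
        have hqpos : (0:ℝ) < Real.exp (β*c*(ξ - ζ)) := Real.exp_pos _
        have hbound : -(|u ζ - P| * Emax) ≤ (u ζ - P) * Real.exp (β*c*(ξ - ζ)) := by
          rcases le_or_gt (u ζ - P) 0 with h | h
          · calc -(|u ζ - P| * Emax) = (u ζ - P) * Emax := by
                  rw [abs_of_nonpos h]; ring
              _ ≤ (u ζ - P) * Real.exp (β*c*(ξ - ζ)) :=
                  mul_le_mul_of_nonpos_left hqle h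
          · calc -(|u ζ - P| * Emax) ≤ 0 := by
                  have h3 : (0:ℝ) ≤ |u ζ - P| * Emax :=
                    mul_nonneg (abs_nonneg _) (by linarith)
                  linarith
              _ ≤ (u ζ - P) * Real.exp (β*c*(ξ - ζ)) :=
                  mul_nonneg h.le hqpos.le
        rw [hUdef]
        linarith
      -- bound on [ξs, ζ] by compactness
      have hcompact : ∃ B1 : ℝ, ∀ x ∈ Set.Icc ξs ζ, |v x| ≤ B1 ∧ |u x| ≤ B1 := by
        have hcont : ContinuousOn (fun x => ((v x, u x) : ℝ × ℝ)) (Set.Icc ξs ζ) := by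
          intro x hx
          have hx' : (x : EReal) < ω := lt_om hx.2 hζω
          exact ((H.dv hx').continuousAt.prodMk (H.du hx').continuousAt).continuousWithinAt
        obtain ⟨B1, hB1⟩ := (isCompact_Icc).exists_bound_of_continuousOn hcont
        refine ⟨B1, fun x hx => ?_⟩
        have h1 := hB1 x hx
        constructor
        · calc |v x| = ‖(((v x, u x) : ℝ × ℝ)).1‖ := rfl
            _ ≤ ‖((v x, u x) : ℝ × ℝ)‖ := norm_fst_le _
            _ ≤ B1 := h1
        · calc |u x| = ‖(((v x, u x) : ℝ × ℝ)).2‖ := rfl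
            _ ≤ ‖((v x, u x) : ℝ × ℝ)‖ := norm_snd_le _
            _ ≤ B1 := h1
      obtain ⟨B1, hB1⟩ := hcompact
      -- full bound and contradiction
      set R : ℝ := max (max 4 B1) (max RL U) + 1 with hRdef
      have hR4 : 4 ≤ R := by
        have : (4:ℝ) ≤ max (max 4 B1) (max RL U) :=
          le_trans (le_max_left 4 B1) (le_max_left _ _)
        linarith
      have hRB1 : B1 ≤ R := by
        have : B1 ≤ max (max 4 B1) (max RL U) :=
          le_trans (le_max_right 4 B1) (le_max_left _ _)
        linarith
      have hRRL : RL ≤ R := by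
        have : RL ≤ max (max 4 B1) (max RL U) :=
          le_trans (le_max_left RL U) (le_max_right _ _)
        linarith
      have hRU : U ≤ R := by
        have : U ≤ max (max 4 B1) (max RL U) :=
          le_trans (le_max_right RL U) (le_max_right _ _)
        linarith
      apply H.ext_contra hT (R := R) (by linarith)
      intro ξ hξ
      rcases le_or_gt ξ ξs with hcase | hcase
      · -- before ξs
        have hist : ∀ η, η ≤ ξ → 0 ≤ u η := by
          intro η hη
          rcases lt_or_eq_of_le (hη.trans hcase) with h | h
          · exact (hbefore η h).le
          · rw [h, hu0s]
        obtain ⟨h1, h2, _⟩ := H.key_bound hξ hist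
        have h0v := H.v_lower hξ hist
        have h0u : 0 ≤ u ξ := hist ξ le_rfl
        constructor
        · rw [abs_le]; constructor <;> linarith
        · rw [abs_le]; constructor <;> linarith
      · rcases le_or_gt ξ ζ with hcase2 | hcase2
        · obtain ⟨h1, h2⟩ := hB1 ξ ⟨hcase.le, hcase2⟩
          exact ⟨h1.trans hRB1, h2.trans hRB1⟩
        · have h1 : |v ξ| ≤ RL := hvRL ξ hξ hcase2.le
          have h2 : -U ≤ u ξ := hulow ξ hξ hcase2.le
          have h3 : u ξ < 0 := huneg ξ (by linarith) hξ
          refine ⟨h1.trans hRRL, ?_⟩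
          rw [abs_le]
          constructor <;> [linarith; linarith]
  -- v tends to -∞
  have hvten : Tendsto v (approachFromLeft ω) atBot := by
    apply tendsto_approachFromLeft_atBot
    intro B
    obtain ⟨ξB, hξBω, hξB₄, hvB⟩ := hescape B ξ₄ hξ₄ω le_rfl
    refine ⟨ξB, hξBω, fun ξ hξ1 hξ2 => ?_⟩
    have : v ξ ≤ v ξB := hvanti ξB ξ (by linarith) hξ1.le hξ2
    linarith
  -- the point ξ₅ where v ≤ -1 permanently
  obtain ⟨ξ₅, hξ₅ω, hξ₅₄, hv₅⟩ := hescape (-1) ξ₄ hξ₄ω le_rfl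
  have hv₅' : ∀ ξ, ξ₅ ≤ ξ → (ξ : EReal) < ω → v ξ ≤ -1 := by
    intro ξ h1 h2
    have : v ξ ≤ v ξ₅ := hvanti ξ₅ ξ (by linarith) h1 h2
    linarith
  have huanti : ∀ s t : ℝ, ξ₅ ≤ s → s ≤ t → (t : EReal) < ω → u t ≤ u s := by
    intro s t h1 h2 h3
    apply le_of_deriv_nonpos_Icc h2 (fun x hx => H.du (lt_om hx.2 h3))
    intro x hx
    have hvx : v x ≤ -1 := hv₅' x (le_trans h1 hx.1.le) (lt_om hx.2.le h3)
    have hfx : 2 ≤ fp a (v x) := fp_ge_two H.ha0 H.ha1 hvx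
    have hux : u x < 0 := huneg x (lt_of_lt_of_le (lt_of_lt_of_le hξ₄s hξ₅₄) (le_trans h1 hx.1.le)) (lt_om hx.2.le h3)
    have h4 : c * u x - fp a (v x) ≤ 0 := by nlinarith [H.hc0]
    exact mul_nonpos_of_nonneg_of_nonpos H.hβ0.le h4
  -- u unbounded below
  have huunb : ∀ B : ℝ, ∃ ξ : ℝ, (ξ : EReal) < ω ∧ ξ₅ ≤ ξ ∧ u ξ < B := by
    intro B
    by_cases hT : ω = ⊤
    · have hall : ∀ ξ : ℝ, (ξ : EReal) < ω := fun ξ => by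
        rw [hT]; exact EReal.coe_lt_top ξ
      set t : ℝ := max ξ₅ (ξ₅ + (u ξ₅ - B)/2 + 1) with htdef
      refine ⟨t, hall t, le_max_left _ _, ?_⟩
      have hdec : u t ≤ u ξ₅ - 2*(t - ξ₅) := by
        have := le_of_deriv_nonpos_Icc (g := fun z => u z + 2*z)
          (g' := fun z => β*(c*u z - fp a (v z)) + 2) (s := ξ₅) (t := t)
          (show ξ₅ ≤ t from le_max_left _ _)
          (fun x hx => ((H.du (hall x)).add
            ((hasDerivAt_id x).const_mul 2)).congr_deriv (by ring))
          (fun x hx => by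
            have hvx : v x ≤ -1 := hv₅' x hx.1.le (hall x)
            have hfx : 2 ≤ fp a (v x) := fp_ge_two H.ha0 H.ha1 hvx
            have hux : u x < 0 := huneg x (lt_trans (lt_of_lt_of_le hξ₄s hξ₅₄) hx.1) (hall x)
            have h4 : c*u x - fp a (v x) ≤ -2 := by nlinarith [H.hc0]
            have h5 : β*(c*u x - fp a (v x)) ≤ β*(-2) :=
              mul_le_mul_of_nonneg_left h4 H.hβ0.le
            have h6 : β*(-2:ℝ) ≤ 1*(-2:ℝ) :=
              mul_le_mul_of_nonpos_right H.hβ1 (by norm_num)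
            linarith)
        linarith
      have hbig : ξ₅ + (u ξ₅ - B)/2 + 1 ≤ t := le_max_right _ _
      linarith
    · by_contra hcon
      push_neg at hcon
      have hBne : ω ≠ ⊥ := (lt_of_le_of_lt bot_le H.hω).ne'
      set ω₀ : ℝ := ω.toReal with hω₀def
      have hω0 : ((ω₀ : ℝ) : EReal) = ω := EReal.coe_toReal hT hBne
      have hltω' : ∀ ξ : ℝ, (ξ : EReal) < ω → ξ < ω₀ := by
        intro ξ hξ
        rw [← hω0] at hξ
        exact_mod_cast hξ
      have hξ₅r : ξ₅ < ω₀ := hltω' ξ₅ hξ₅ω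
      have hlow : ∀ ξ, ξ₅ ≤ ξ → (ξ : EReal) < ω → v ξ₅ + B*(ξ - ξ₅) ≤ v ξ := by
        intro ξ h1 h2
        have := le_of_deriv_nonneg_Icc (g := fun z => v z - B*z)
          (g' := fun z => u z - B) h1
          (fun x hx => ((H.dv (lt_om hx.2 h2)).sub
            ((hasDerivAt_id x).const_mul B)).congr_deriv (by ring))
          (fun x hx => by
            have := hcon x (lt_om hx.2.le h2) hx.1.le
            linarith)
        linarith
      set Lv : ℝ := v ξ₅ - (|B| + 1)*(ω₀ - ξ₅) - 1 with hLvdef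
      obtain ⟨ξL, hξLω, hξL5, hvL⟩ := hescape Lv ξ₅ hξ₅ω hξ₅₄
      have h1 := hlow ξL hξL5 hξLω
      have hξLr : ξL < ω₀ := hltω' ξL hξLω
      have h2 : -(|B| + 1)*(ω₀ - ξ₅) ≤ B*(ξL - ξ₅) := by
        have k1 : 0 ≤ (B + |B| + 1) * (ξL - ξ₅) :=
          mul_nonneg (by linarith [neg_abs_le B, abs_nonneg B]) (by linarith)
        have k2 : 0 ≤ (|B| + 1) * (ω₀ - ξL) :=
          mul_nonneg (by linarith [abs_nonneg B]) (by linarith)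
        nlinarith
      rw [hLvdef] at hvL
      linarith
  -- u tends to -∞
  have huten : Tendsto u (approachFromLeft ω) atBot := by
    apply tendsto_approachFromLeft_atBot
    intro B
    obtain ⟨ξB, hξBω, hξB₅, huB⟩ := huunb B
    refine ⟨ξB, hξBω, fun ξ hξ1 hξ2 => ?_⟩
    have : u ξ ≤ u ξB := huanti ξB ξ hξB₅ hξ1.le hξ2
    linarith
  exact ⟨hvten, huten⟩

end Good

/- STATEMENT 10: For 0 < a < 1/2 there is c₀ > 0 such that for 0 < c < c₀,
   τc² < 1, β = 1/(1−τc²): every maximal solution on (−∞, ω), ω ∈ (0,+∞],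
   tending to (0,0) as ξ → −∞ with u > 0 for all sufficiently negative ξ,
   satisfies v(ξ) → −∞ and u(ξ) → −∞ as ξ → ω. -/
/- STATEMENT 10: For 0 < a < 1/2 there is c₀ > 0 such that for 0 < c < c₀,
   τc² < 1, β = 1/(1−τc²): every maximal solution on (−∞, ω), ω ∈ (0,+∞],
   tending to (0,0) as ξ → −∞ with u > 0 for all sufficiently negative ξ,
   satisfies v(ξ) → −∞ and u(ξ) → −∞ as ξ → ω. -/
theorem separatrix_escapes_to_minus_infinity
    (a τ : ℝ) (ha0 : 0 < a) (ha1 : a < 1 / 2) (hτ : 0 < τ) :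
    ∃ c₀ > (0 : ℝ), ∀ c : ℝ, 0 < c → c < c₀ → τ * c ^ 2 < 1 →
      ∀ β : ℝ, β = 1 / (1 - τ * c ^ 2) →
      ∀ (v u : ℝ → ℝ) (ω : EReal), 0 < ω →
        IsPlanarSol a β c v u ω →
        IsPlanarMaximal a β c v u ω →
        Tendsto v atBot (nhds 0) → Tendsto u atBot (nhds 0) →
        (∃ M : ℝ, ∀ ξ : ℝ, ξ < M → 0 < u ξ) →
        Tendsto v (approachFromLeft ω) atBot ∧
        Tendsto u (approachFromLeft ω) atBot := by
  have hFa : 0 < -Fp a a := by linarith [Fp_a_neg ha0 ha1]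
  have h2a : 0 < 1 - 2*a := by linarith
  set X : ℝ := a * (-Fp a a) * ((1-2*a)/12) with hXdef
  have hX : 0 < X := by rw [hXdef]; positivity
  set c₀ : ℝ := min (min (Real.sqrt (1/(2*τ))) (1/8)) (min ((1-2*a)/100) (X/16)) with hc₀def
  have hsq : 0 < Real.sqrt (1/(2*τ)) := Real.sqrt_pos.2 (by positivity)
  have hc₀pos : 0 < c₀ := by
    rw [hc₀def]
    apply lt_min
    · exact lt_min hsq (by norm_num)
    · apply lt_min (by positivity) (by positivity)
  refine ⟨c₀, hc₀pos, ?_⟩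
  intro c hc0 hcc₀ hτc β hβ v u ω hω hsol hmax hv0 hu0 hupos
  have hc₀1 : c < Real.sqrt (1/(2*τ)) :=
    lt_of_lt_of_le hcc₀ (le_trans (min_le_left _ _) (min_le_left _ _))
  have hc₀2 : c < 1/8 :=
    lt_of_lt_of_le hcc₀ (le_trans (min_le_left _ _) (min_le_right _ _))
  have hc₀3 : c < (1-2*a)/100 :=
    lt_of_lt_of_le hcc₀ (le_trans (min_le_right _ _) (min_le_left _ _))
  have hc₀4 : c < X/16 :=
    lt_of_lt_of_le hcc₀ (le_trans (min_le_right _ _) (min_le_right _ _))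
  -- τ c² < 1/2
  have hc2half : τ * c^2 < 1/2 := by
    have hs := Real.sq_sqrt (le_of_lt (by positivity : (0:ℝ) < 1/(2*τ)))
    have h1 : c^2 < 1/(2*τ) := by nlinarith [Real.sqrt_nonneg (1/(2*τ))]
    have h2 : τ * c^2 < τ * (1/(2*τ)) := by
      apply mul_lt_mul_of_pos_left h1 hτ
    have h3 : τ * (1/(2*τ)) = 1/2 := by
      rw [mul_one_div, div_eq_div_iff (by positivity : (2*τ : ℝ) ≠ 0) (by norm_num : (2:ℝ) ≠ 0)]
      ring
    linarith
  have hd : (0:ℝ) < 1 - τ*c^2 := by linarith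
  have hd1 : 1 - τ*c^2 ≤ 1 := by nlinarith [sq_nonneg c]
  have hβ1 : 1 ≤ β := by
    rw [hβ]
    rw [le_div_iff₀ hd]
    linarith
  have hβ2 : β ≤ 2 := by
    rw [hβ]
    rw [div_le_iff₀ hd]
    linarith
  have H : Good a c β v u ω :=
    { ha0 := ha0
      ha1 := ha1
      hc0 := hc0
      hc1 := hc₀2.le
      hc2 := hc₀3.le
      hc3 := by rw [← hXdef]; linarith
      hβ1 := hβ1
      hβ2 := hβ2
      hω := hω
      sol := hsol
      hmax := hmax
      hv0 := hv0
      hu0 := hu0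
      hupos := hupos }
  exact H.conclusion
end FilterHelpers
end

section
/- Let 0 < a < 1, τ, γ, ε > 0, 0 < c < 1/√τ, β = 1/(1 − τc²), δ = ε/c, and f(v) = v(v − a)(1 − v). Define E⁺ = {(v, u, w) ∈ ℝ³ : u > 0, v > 1, δ(v − γw) > 0, β(cu − f(v) + w) > 0} and E⁻ = {(v, u, w) ∈ ℝ³ : v < 0, u < 0, δ(v − γw) < 0, β(cu − f(v) + w) < 0}. Then E⁺ and E⁻ are positively invariant for the system v' = u, u' = β(cu − f(v) + w), w' = δ(v − γw): if a solution q is defined on [0, T) and q(0) ∈ E⁺ (respectively q(0) ∈ E⁻), then q(ξ) ∈ E⁺ (respectively q(ξ) ∈ E⁻) for all ξ ∈ [0, T). -/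
open Set Filter

/-- General positive-invariance lemma: the region
  `{u > 0, v > θ, v - γw > 0, cu - f(v) + w > 0}` is positively invariant for
  `v' = u, u' = β(cu - f(v) + w), w' = δ(v - γw)`, provided `f' < 0` on `[θ, ∞)`. -/
lemma invariant_aux (θ c β δ γ : ℝ) (hβ : 0 < β) (hδ : 0 < δ) (hγ : 0 < γ)
    (f f' : ℝ → ℝ) (hf : ∀ x, HasDerivAt f (f' x) x)
    (hf'neg : ∀ x, θ ≤ x → f' x < 0)
    (T : ℝ) (v u w : ℝ → ℝ)
    (hsol : ∀ ξ ∈ Set.Ico (0:ℝ) T,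
      HasDerivWithinAt v (u ξ) (Set.Ico (0:ℝ) T) ξ ∧
      HasDerivWithinAt u (β * (c * u ξ - f (v ξ) + w ξ)) (Set.Ico (0:ℝ) T) ξ ∧
      HasDerivWithinAt w (δ * (v ξ - γ * w ξ)) (Set.Ico (0:ℝ) T) ξ)
    (hu0 : 0 < u 0) (hv0 : θ < v 0) (hA0 : 0 < v 0 - γ * w 0)
    (hB0 : 0 < c * u 0 - f (v 0) + w 0) :
    ∀ ξ ∈ Set.Ico (0:ℝ) T,
      0 < u ξ ∧ θ < v ξ ∧ 0 < v ξ - γ * w ξ ∧ 0 < c * u ξ - f (v ξ) + w ξ := by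
  by_contra hcon
  push_neg at hcon
  obtain ⟨ξs, hξs, hPs⟩ := hcon
  -- the "gap" function
  set G : ℝ → ℝ := fun x =>
    min (u x) (min (v x - θ) (min (v x - γ * w x) (c * u x - f (v x) + w x))) with hG
  have hGpos : ∀ x, 0 < G x ↔
      (0 < u x ∧ θ < v x ∧ 0 < v x - γ * w x ∧ 0 < c * u x - f (v x) + w x) := by
    intro x
    simp only [hG, lt_min_iff, sub_pos]
  -- the failure set
  set S : Set ℝ := {x | x ∈ Set.Ico (0:ℝ) T ∧ G x ≤ 0} with hS
  have hξsS : ξs ∈ S := by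
    refine ⟨hξs, ?_⟩
    by_contra h
    push_neg at h
    obtain ⟨p1, p2, p3, p4⟩ := (hGpos ξs).mp h
    exact absurd p4 (not_lt.mpr (hPs p1 p2 p3))
  have hne : S.Nonempty := ⟨ξs, hξsS⟩
  have hbdd : BddBelow S := ⟨0, fun x hx => hx.1.1⟩
  set ξ₀ : ℝ := sInf S with hξ₀def
  have hξ₀0 : 0 ≤ ξ₀ := le_csInf hne fun x hx => hx.1.1
  have hξ₀T : ξ₀ < T := lt_of_le_of_lt (csInf_le hbdd hξsS) hξs.2
  have hξ₀mem : ξ₀ ∈ Set.Ico (0:ℝ) T := ⟨hξ₀0, hξ₀T⟩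
  -- strict positivity before ξ₀
  have hpre : ∀ x ∈ Set.Ico (0:ℝ) ξ₀,
      0 < u x ∧ θ < v x ∧ 0 < v x - γ * w x ∧ 0 < c * u x - f (v x) + w x := by
    intro x hx
    have hxT : x ∈ Set.Ico (0:ℝ) T := ⟨hx.1, hx.2.trans hξ₀T⟩
    by_contra hnp
    have hxS : x ∈ S := ⟨hxT, by
      by_contra h
      push_neg at h
      exact hnp ((hGpos x).mp h)⟩
    exact absurd (csInf_le hbdd hxS) (not_le.mpr hx.2)
  -- continuity
  have hcv : ContinuousOn v (Set.Ico (0:ℝ) T) := fun x hx =>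
    ((hsol x hx).1).continuousWithinAt
  have hcu : ContinuousOn u (Set.Ico (0:ℝ) T) := fun x hx =>
    ((hsol x hx).2.1).continuousWithinAt
  have hcw : ContinuousOn w (Set.Ico (0:ℝ) T) := fun x hx =>
    ((hsol x hx).2.2).continuousWithinAt
  have hfc : Continuous f := continuous_iff_continuousAt.mpr fun x => (hf x).continuousAt
  have hcG : ContinuousOn G (Set.Ico (0:ℝ) T) := fun x hx =>
    Filter.Tendsto.min (hcu x hx)
      (Filter.Tendsto.min ((hcv x hx).sub continuousWithinAt_const)
        (Filter.Tendsto.min ((hcv x hx).sub (continuousWithinAt_const.mul (hcw x hx)))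
          ((((continuousWithinAt_const.mul (hcu x hx)).sub
            ((hfc.continuousAt.continuousWithinAt).comp (hcv x hx) (Set.mapsTo_univ _ _))).add (hcw x hx)))))
  -- G ξ₀ ≤ 0
  have hGξ₀ : G ξ₀ ≤ 0 := by
    have hcl : ξ₀ ∈ closure S := csInf_mem_closure hne hbdd
    have hc : ContinuousWithinAt G S ξ₀ := (hcG ξ₀ hξ₀mem).mono fun x hx => hx.1
    have hnb : (nhdsWithin ξ₀ S).NeBot := mem_closure_iff_nhdsWithin_neBot.mp hcl
    exact le_of_tendsto hc (eventually_nhdsWithin_of_forall fun x hx => hx.2)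
  -- ξ₀ > 0
  have hξ₀pos : 0 < ξ₀ := by
    rcases lt_or_eq_of_le hξ₀0 with h | h
    · exact h
    · exfalso
      have : 0 < G 0 := (hGpos 0).mpr ⟨hu0, hv0, hA0, hB0⟩
      rw [← h] at hGξ₀
      linarith
  have hsub : Set.Ico (0:ℝ) ξ₀ ⊆ Set.Ico (0:ℝ) T := fun x hx => ⟨hx.1, hx.2.trans hξ₀T⟩
  have hsubc : Set.Icc (0:ℝ) ξ₀ ⊆ Set.Ico (0:ℝ) T := fun x hx =>
    ⟨hx.1, lt_of_le_of_lt hx.2 hξ₀T⟩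
  have hnb2 : (nhdsWithin ξ₀ (Set.Ico (0:ℝ) ξ₀)).NeBot := by
    rw [← mem_closure_iff_nhdsWithin_neBot, closure_Ico (ne_of_lt hξ₀pos)]
    exact ⟨hξ₀0, le_refl _⟩
  -- nonnegativity of each component at ξ₀
  have key : ∀ F : ℝ → ℝ, ContinuousWithinAt F (Set.Ico (0:ℝ) T) ξ₀ →
      (∀ x ∈ Set.Ico (0:ℝ) ξ₀, 0 < F x) → 0 ≤ F ξ₀ := by
    intro F hF hpos
    exact ge_of_tendsto (hF.mono hsub)
      (eventually_nhdsWithin_of_forall fun x hx => (hpos x hx).le)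
  -- strict monotonicity up to ξ₀ for v and u
  have hmono : ∀ (F : ℝ → ℝ) (F' : ℝ → ℝ),
      (∀ x ∈ Set.Ico (0:ℝ) T, HasDerivWithinAt F (F' x) (Set.Ico (0:ℝ) T) x) →
      (∀ x, 0 < x → x < ξ₀ → 0 < F' x) → F 0 < F ξ₀ := by
    intro F F' hd hpos
    have hcont : ContinuousOn F (Set.Icc 0 ξ₀) := fun x hx =>
      ((hd x (hsubc hx)).continuousWithinAt).mono hsubc
    have hsm : StrictMonoOn F (Set.Icc 0 ξ₀) := by
      apply strictMonoOn_of_deriv_pos (convex_Icc 0 ξ₀) hcont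
      intro x hx
      rw [interior_Icc] at hx
      have hxT : x ∈ Set.Ico (0:ℝ) T := ⟨hx.1.le, hx.2.trans hξ₀T⟩
      have hda : HasDerivAt F (F' x) x :=
        (hd x hxT).hasDerivAt (Ico_mem_nhds (by linarith [hx.1]) (by linarith [hx.2, hξ₀T]))
      rw [hda.deriv]
      exact hpos x hx.1 hx.2
    exact hsm (Set.left_mem_Icc.mpr hξ₀pos.le) (Set.right_mem_Icc.mpr hξ₀pos.le) hξ₀pos
  have huξ₀ : 0 < u ξ₀ := by
    have := hmono u (fun x => β * (c * u x - f (v x) + w x))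
      (fun x hx => (hsol x hx).2.1)
      (fun x hx1 hx2 => mul_pos hβ (hpre x ⟨hx1.le, hx2⟩).2.2.2)
    linarith
  have hvξ₀ : θ < v ξ₀ := by
    have := hmono v u (fun x hx => (hsol x hx).1)
      (fun x hx1 hx2 => (hpre x ⟨hx1.le, hx2⟩).1)
    linarith
  have hAnn : 0 ≤ v ξ₀ - γ * w ξ₀ :=
    key _ ((hcv.sub (continuousOn_const.mul hcw)) ξ₀ hξ₀mem)
      (fun x hx => (hpre x hx).2.2.1)
  have hBnn : 0 ≤ c * u ξ₀ - f (v ξ₀) + w ξ₀ :=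
    key _ ((((continuousOn_const.mul hcu).sub (hfc.comp_continuousOn hcv)).add hcw) ξ₀ hξ₀mem)
      (fun x hx => (hpre x hx).2.2.2)
  -- slope lemma
  have hslope : ∀ (F : ℝ → ℝ) (d : ℝ), HasDerivWithinAt F d (Set.Ico (0:ℝ) T) ξ₀ →
      F ξ₀ = 0 → (∀ x ∈ Set.Ico (0:ℝ) ξ₀, 0 < F x) → d ≤ 0 := by
    intro F d hd hF0 hpos
    have hd' : HasDerivWithinAt F d (Set.Ico 0 ξ₀) ξ₀ := hd.mono hsub
    rw [hasDerivWithinAt_iff_tendsto_slope] at hd'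
    have hdiff : Set.Ico (0:ℝ) ξ₀ \ {ξ₀} = Set.Ico (0:ℝ) ξ₀ := by
      apply Set.diff_singleton_eq_self
      simp
    rw [hdiff] at hd'
    refine le_of_tendsto hd' (eventually_nhdsWithin_of_forall ?_)
    intro x hx
    rw [slope_def_field, hF0, sub_zero]
    have h1 : 0 < F x := hpos x hx
    have h2 : x - ξ₀ < 0 := by linarith [hx.2]
    exact le_of_lt (div_neg_of_pos_of_neg h1 h2)
  -- one of A, B must vanish at ξ₀
  have hAB : v ξ₀ - γ * w ξ₀ = 0 ∨ c * u ξ₀ - f (v ξ₀) + w ξ₀ = 0 := by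
    have h1 : min (v ξ₀ - γ * w ξ₀) (c * u ξ₀ - f (v ξ₀) + w ξ₀) ≤ 0 := by
      by_contra h
      push_neg at h
      rw [lt_min_iff] at h
      have : 0 < G ξ₀ := (hGpos ξ₀).mpr ⟨huξ₀, hvξ₀, h.1, h.2⟩
      linarith
    rcases min_le_iff.mp h1 with h | h
    · exact Or.inl (le_antisymm h hAnn)
    · exact Or.inr (le_antisymm h hBnn)
  rcases hAB with hAz | hBz
  · -- A hits zero: A' = u ξ₀ > 0, contradiction with slope ≤ 0
    have hdA : HasDerivWithinAt (fun x => v x - γ * w x)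
        (u ξ₀ - γ * (δ * (v ξ₀ - γ * w ξ₀))) (Set.Ico (0:ℝ) T) ξ₀ :=
      (hsol ξ₀ hξ₀mem).1.sub ((hsol ξ₀ hξ₀mem).2.2.const_mul γ)
    have hle := hslope _ _ hdA hAz (fun x hx => (hpre x hx).2.2.1)
    rw [hAz, mul_zero, mul_zero, sub_zero] at hle
    linarith
  · -- B hits zero: B' = -f'(v ξ₀) u ξ₀ + δ A ξ₀ > 0, contradiction
    have hfd : HasDerivWithinAt (fun x => f (v x)) (f' (v ξ₀) * u ξ₀)
        (Set.Ico (0:ℝ) T) ξ₀ :=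
      (hf (v ξ₀)).comp_hasDerivWithinAt ξ₀ (hsol ξ₀ hξ₀mem).1
    have hdB : HasDerivWithinAt (fun x => c * u x - f (v x) + w x)
        (c * (β * (c * u ξ₀ - f (v ξ₀) + w ξ₀)) - f' (v ξ₀) * u ξ₀
          + δ * (v ξ₀ - γ * w ξ₀)) (Set.Ico (0:ℝ) T) ξ₀ :=
      (((hsol ξ₀ hξ₀mem).2.1.const_mul c).sub hfd).add (hsol ξ₀ hξ₀mem).2.2
    have hle := hslope _ _ hdB hBz (fun x hx => (hpre x hx).2.2.2)
    rw [hBz, mul_zero, mul_zero] at hle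
    have h1 : f' (v ξ₀) < 0 := hf'neg _ hvξ₀.le
    have h2 : 0 ≤ δ * (v ξ₀ - γ * w ξ₀) := mul_nonneg hδ.le hAnn
    nlinarith [mul_pos (neg_pos.mpr h1) huξ₀]


/- STATEMENT 12: The sets E⁺ = {u > 0, v > 1, w' > 0, u' > 0} and
   E⁻ = {v < 0, u < 0, w' < 0, u' < 0} are positively invariant for the
   traveling-wave system v' = u, u' = β(cu − f(v) + w), w' = δ(v − γw). -/
theorem E_plus_minus_positively_invariant
    (a τ γ ε c β δ : ℝ) (ha0 : 0 < a) (ha1 : a < 1)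
    (hτ : 0 < τ) (hγ : 0 < γ) (hε : 0 < ε)
    (hc0 : 0 < c) (hc1 : c < 1 / Real.sqrt τ)
    (hβ : β = 1 / (1 - τ * c ^ 2)) (hδ : δ = ε / c)
    (T : ℝ) (hT : 0 < T) (v u w : ℝ → ℝ)
    (hsol : ∀ ξ ∈ Set.Ico (0 : ℝ) T,
      HasDerivWithinAt v (u ξ) (Set.Ico (0 : ℝ) T) ξ ∧
      HasDerivWithinAt u (β * (c * u ξ - v ξ * (v ξ - a) * (1 - v ξ) + w ξ))
        (Set.Ico (0 : ℝ) T) ξ ∧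
      HasDerivWithinAt w (δ * (v ξ - γ * w ξ)) (Set.Ico (0 : ℝ) T) ξ) :
    ((0 < u 0 ∧ 1 < v 0 ∧ 0 < δ * (v 0 - γ * w 0) ∧
        0 < β * (c * u 0 - v 0 * (v 0 - a) * (1 - v 0) + w 0)) →
      ∀ ξ ∈ Set.Ico (0 : ℝ) T,
        0 < u ξ ∧ 1 < v ξ ∧ 0 < δ * (v ξ - γ * w ξ) ∧
          0 < β * (c * u ξ - v ξ * (v ξ - a) * (1 - v ξ) + w ξ)) ∧
    ((v 0 < 0 ∧ u 0 < 0 ∧ δ * (v 0 - γ * w 0) < 0 ∧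
        β * (c * u 0 - v 0 * (v 0 - a) * (1 - v 0) + w 0) < 0) →
      ∀ ξ ∈ Set.Ico (0 : ℝ) T,
        v ξ < 0 ∧ u ξ < 0 ∧ δ * (v ξ - γ * w ξ) < 0 ∧
          β * (c * u ξ - v ξ * (v ξ - a) * (1 - v ξ) + w ξ) < 0) := by
  -- positivity of β and δ
  have hsτ : 0 < Real.sqrt τ := Real.sqrt_pos.mpr hτ
  have hc2 : c ^ 2 < (1 / Real.sqrt τ) ^ 2 := by
    apply pow_lt_pow_left₀ hc1 hc0.le
    norm_num
  have hsq : (1 / Real.sqrt τ) ^ 2 = 1 / τ := by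
    rw [div_pow, one_pow, Real.sq_sqrt hτ.le]
  have hτc : τ * c ^ 2 < 1 := by
    rw [hsq] at hc2
    calc τ * c ^ 2 < τ * (1 / τ) := by exact mul_lt_mul_of_pos_left hc2 hτ
    _ = 1 := by field_simp
  have hβpos : 0 < β := by
    rw [hβ]
    apply one_div_pos.mpr
    linarith
  have hδpos : 0 < δ := by
    rw [hδ]
    exact div_pos hε hc0
  -- the cubic and its derivative
  have hfd : ∀ x : ℝ, HasDerivAt (fun x : ℝ => x * (x - a) * (1 - x))
      (-3 * x ^ 2 + 2 * (1 + a) * x - a) x := by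
    intro x
    have h := ((hasDerivAt_id' (𝕜 := ℝ) x).mul ((hasDerivAt_id' x).sub_const a)).mul
      ((hasDerivAt_const x (1:ℝ)).sub (hasDerivAt_id' x))
    convert h using 1
    exacts [rfl, rfl, rfl, by simp only [Pi.mul_apply, Pi.sub_apply, Pi.neg_apply]; ring]
  have hfd' : ∀ x : ℝ, HasDerivAt (fun x : ℝ => -(-x * (-x - a) * (1 - -x)))
      (-3 * x ^ 2 - 2 * (1 + a) * x - a) x := by
    intro x
    have h := (((hasDerivAt_neg x).mul ((hasDerivAt_neg x).sub_const a)).mul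
      ((hasDerivAt_const x (1:ℝ)).sub (hasDerivAt_neg x))).neg
    convert h using 1
    exacts [rfl, rfl, rfl, by simp only [Pi.mul_apply, Pi.sub_apply, Pi.neg_apply]; ring]
  have hfneg : ∀ x : ℝ, (1:ℝ) ≤ x → -3 * x ^ 2 + 2 * (1 + a) * x - a < 0 := by
    intro x hx
    have m1 : (0:ℝ) ≤ (3 * x - 1) * (x - 1) := mul_nonneg (by linarith) (by linarith)
    have m2 : (0:ℝ) < (1 - a) * (2 * x - 1) := mul_pos (by linarith) (by linarith)
    nlinarith
  have hfneg' : ∀ x : ℝ, (0:ℝ) ≤ x → -3 * x ^ 2 - 2 * (1 + a) * x - a < 0 := by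
    intro x hx
    have m1 : (0:ℝ) ≤ (1 + a) * x := mul_nonneg (by linarith) hx
    nlinarith [sq_nonneg x]
  constructor
  · rintro ⟨h1, h2, h3, h4⟩ ξ hξ
    have h3' : 0 < v 0 - γ * w 0 := by
      by_contra h
      push_neg at h
      nlinarith [mul_nonpos_of_nonneg_of_nonpos hδpos.le h]
    have h4' : 0 < c * u 0 - v 0 * (v 0 - a) * (1 - v 0) + w 0 := by
      by_contra h
      push_neg at h
      nlinarith [mul_nonpos_of_nonneg_of_nonpos hβpos.le h]
    have hres := invariant_aux 1 c β δ γ hβpos hδpos hγ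
      (fun x : ℝ => x * (x - a) * (1 - x)) (fun x : ℝ => -3 * x ^ 2 + 2 * (1 + a) * x - a)
      hfd hfneg
      T v u w hsol h1 h2 h3' h4' ξ hξ
    obtain ⟨k1, k2, k3, k4⟩ := hres
    exact ⟨k1, k2, mul_pos hδpos k3, mul_pos hβpos k4⟩
  · rintro ⟨h1, h2, h3, h4⟩ ξ hξ
    have h3' : 0 < (-v 0) - γ * (-w 0) := by
      by_contra h
      push_neg at h
      nlinarith [mul_nonneg hδpos.le (by linarith : (0:ℝ) ≤ v 0 - γ * w 0)]
    have h4' : 0 < c * (-u 0) - (-(-(-v 0) * (-(-v 0) - a) * (1 - -(-v 0)))) + (-w 0) := by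
      by_contra h
      push_neg at h
      nlinarith [mul_nonneg hβpos.le
        (by nlinarith : (0:ℝ) ≤ c * u 0 - v 0 * (v 0 - a) * (1 - v 0) + w 0)]
    have hsol' : ∀ ξ ∈ Set.Ico (0:ℝ) T,
        HasDerivWithinAt (fun t => -v t) ((fun t => -u t) ξ) (Set.Ico (0:ℝ) T) ξ ∧
        HasDerivWithinAt (fun t => -u t)
          (β * (c * (fun t => -u t) ξ
            - (fun x : ℝ => -(-x * (-x - a) * (1 - -x))) ((fun t => -v t) ξ)
            + (fun t => -w t) ξ)) (Set.Ico (0:ℝ) T) ξ ∧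
        HasDerivWithinAt (fun t => -w t)
          (δ * ((fun t => -v t) ξ - γ * (fun t => -w t) ξ)) (Set.Ico (0:ℝ) T) ξ := by
      intro ξ hξ
      obtain ⟨s1, s2, s3⟩ := hsol ξ hξ
      refine ⟨s1.neg, ?_, ?_⟩
      · have := s2.neg
        convert this using 1
        exacts [rfl, rfl, rfl, by ring]
      · have := s3.neg
        convert this using 1
        exacts [rfl, rfl, rfl, by ring]
    have hres := invariant_aux 0 c β δ γ hβpos hδpos hγ
      (fun x : ℝ => -(-x * (-x - a) * (1 - -x)))
      (fun x : ℝ => -3 * x ^ 2 - 2 * (1 + a) * x - a)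
      hfd' hfneg'
      T (fun t => -v t) (fun t => -u t) (fun t => -w t) hsol'
      (by simpa using h2) (by simpa using h1) h3' h4' ξ hξ
    obtain ⟨k1, k2, k3, k4⟩ := hres
    have k1' : (0:ℝ) < -u ξ := k1
    have k2' : (0:ℝ) < -v ξ := k2
    have k3' : (0:ℝ) < -v ξ - γ * -w ξ := k3
    have k4' : (0:ℝ) < c * -u ξ - -(-(-v ξ) * (-(-v ξ) - a) * (1 - -(-v ξ))) + -w ξ := k4
    simp only [neg_neg] at k4'
    refine ⟨by linarith, by linarith, ?_, ?_⟩
    · have hlt : v ξ - γ * w ξ < 0 := by linarith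
      exact mul_neg_of_pos_of_neg hδpos hlt
    · have hlt : c * u ξ - v ξ * (v ξ - a) * (1 - v ξ) + w ξ < 0 := by linarith
      exact mul_neg_of_pos_of_neg hβpos hlt
end
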